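/- arXiv:2012.12495 — 9 statements merged into one kernel-verified Lean document; each statement's English description precedes it below -/
import Mathlib

section
/- Let H be a simple graph and G a spanning subgraph of H (same vertex set, E(G) ⊆ E(H)). Suppose A ∈ S(G) is a real symmetric matrix with multiset of eigenvalues Λ that has the strong spectral property. Then for every ε > 0 there exists a matrix A' ∈ S(H) with the strong spectral property such that the multiset of eigenvalues of A' equals Λ and ‖A − A'‖ < ε. -/
attribute [local instance] Matrix.normedAddCommGroup

/-- `S(G)`: real symmetric matrices whose off-diagonal zero–nonzero pattern is given by `G`. -/
def inS {V : Type*} (G : SimpleGraph V) (A : Matrix V V ℝ) : Prop :=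
  A.IsSymm ∧ ∀ i j : V, i ≠ j → (A i j ≠ 0 ↔ G.Adj i j)

/-- The spectrum of a matrix as a multiset (roots of the characteristic polynomial,
counted with multiplicity).  For real symmetric matrices this is the multiset of
eigenvalues counted with multiplicity. -/
noncomputable def specM {V : Type*} [Fintype V] [DecidableEq V] (A : Matrix V V ℝ) :
    Multiset ℝ :=
  A.charpoly.roots

/-- The strong spectral property: the only symmetric `X` with `A∘X = O`, `I∘X = O`
and `AX - XA = O` is `X = O`. -/
def HasSSP {V : Type*} [Fintype V] (A : Matrix V V ℝ) : Prop :=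
  ∀ X : Matrix V V ℝ, X.IsSymm → (∀ i j, A i j * X i j = 0) →
    (∀ i, X i i = 0) → A * X = X * A → X = 0

open Matrix NormedSpace

namespace SSPAux

variable {V : Type*} [Fintype V] [DecidableEq V]

/-- matrices as plain functions, to avoid instance clashes -/
def mul' (b x : V × V → ℝ) : V × V → ℝ := fun p => ∑ k, b (p.1, k) * x (k, p.2)

/-- The linear map (in function-space form) whose injectivity is equivalent to the SSP of `b`. -/
def sspMap (b : V × V → ℝ) : (V × V → ℝ) →ₗ[ℝ]
    (V × V → ℝ) × (V × V → ℝ) × (V × V → ℝ) where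
  toFun x := (fun p => x p - x (p.2, p.1),
    fun p => if p.1 = p.2 then x p else b p * x p,
    mul' b x - mul' x b)
  map_add' x y := by
    refine Prod.ext ?_ (Prod.ext ?_ ?_)
    · funext p; simp; ring
    · funext p
      by_cases h : p.1 = p.2 <;> simp [h, mul_add]
    · funext p
      simp [mul', add_mul, mul_add, Finset.sum_add_distrib]
      ring
  map_smul' c x := by
    refine Prod.ext ?_ (Prod.ext ?_ ?_)
    · funext p; simp [smul_eq_mul]; ring
    · funext p
      by_cases h : p.1 = p.2 <;> simp [h, smul_eq_mul] <;> ring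
    · funext p
      simp only [mul', Prod.smul_snd, Prod.smul_fst, Pi.smul_apply, Pi.sub_apply, smul_eq_mul,
        RingHom.id_apply]
      rw [mul_sub, Finset.mul_sum, Finset.mul_sum]
      congr 1 <;> exact Finset.sum_congr rfl fun k _ => by ring

/-- function form of a matrix -/
def toF (B : Matrix V V ℝ) : V × V → ℝ := fun p => B p.1 p.2

lemma sspMap_eq_zero_iff (B X : Matrix V V ℝ) :
    sspMap (toF B) (toF X) = 0 ↔ (X.IsSymm ∧ (∀ i j, B i j * X i j = 0) ∧
      (∀ i, X i i = 0) ∧ B * X = X * B) := by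
  have hmul : ∀ C D : Matrix V V ℝ, mul' (toF C) (toF D) = toF (C * D) := by
    intro C D
    funext p
    simp [mul', toF, Matrix.mul_apply]
  rw [Prod.ext_iff, Prod.ext_iff]
  simp only [sspMap, LinearMap.coe_mk, AddHom.coe_mk, Prod.fst_zero, Prod.snd_zero, hmul]
  constructor
  · rintro ⟨h1, h2, h3⟩
    refine ⟨?_, ?_, ?_, ?_⟩
    · ext i j
      have := congrFun h1 (j, i)
      simp [toF] at this
      simpa [Matrix.transpose_apply] using sub_eq_zero.mp this
    · intro i j
      by_cases hij : i = j
      · subst hij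
        have := congrFun h2 (i, i)
        simp [toF] at this
        simp [this]
      · have := congrFun h2 (i, j)
        simpa [toF, hij] using this
    · intro i
      have := congrFun h2 (i, i)
      simpa [toF] using this
    · have : toF (B * X) - toF (X * B) = 0 := h3
      ext i j
      have h := congrFun this (i, j)
      simpa [toF, sub_eq_zero] using h
  · rintro ⟨hsym, hprod, hdiag, hcomm⟩
    refine ⟨?_, ?_, ?_⟩
    · funext p
      have h := congrFun (congrFun hsym p.1) p.2
      simp only [Matrix.transpose_apply] at h
      simp [toF, h]
    · funext p
      by_cases h : p.1 = p.2
      · simp only [toF, if_pos h]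
        rw [← h]
        exact hdiag p.1
      · simpa [h, toF] using hprod p.1 p.2
    · funext p
      simp [toF, hcomm]

lemma hasSSP_iff_injective (B : Matrix V V ℝ) :
    HasSSP B ↔ Function.Injective (sspMap (toF B)) := by
  rw [← LinearMap.ker_eq_bot, LinearMap.ker_eq_bot']
  constructor
  · intro h x hx
    set X : Matrix V V ℝ := Matrix.of fun i j => x (i, j) with hX
    have hxX : x = toF X := by funext p; simp [toF, hX]
    rw [hxX] at hx
    obtain ⟨h1, h2, h3, h4⟩ := (sspMap_eq_zero_iff B X).mp hx
    have : X = 0 := h X h1 h2 h3 h4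
    funext p
    have := congrFun (congrFun (congrArg (fun M i j => M i j) this) p.1) p.2
    simpa [hxX, toF] using this
  · intro h X hsym hprod hdiag hcomm
    have := h (toF X) ((sspMap_eq_zero_iff B X).mpr ⟨hsym, hprod, hdiag, hcomm⟩)
    ext i j
    exact congrFun this (i, j)

/-- SSP survives small entrywise perturbation. -/
lemma exists_ssp_ball {A : Matrix V V ℝ} (hA : HasSSP A) :
    ∃ δ > 0, ∀ B : Matrix V V ℝ, (∀ i j, |B i j - A i j| < δ) → HasSSP B := by
  classical
  let bas : Module.Basis (V × V) ℝ (V × V → ℝ) := Pi.basisFun ℝ (V × V)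
  have hginj : ∀ b : V × V → ℝ, Function.Injective (sspMap b) ↔
      LinearIndependent ℝ (fun p : V × V => sspMap b (bas p)) := by
    intro b
    constructor
    · intro h
      exact bas.linearIndependent.map' (sspMap b) (LinearMap.ker_eq_bot.mpr h)
    · intro h
      rw [← LinearMap.ker_eq_bot, LinearMap.ker_eq_bot']
      intro x hx
      have hrepr := bas.sum_repr x
      have hsum : ∑ p : V × V, bas.repr x p • sspMap b (bas p) = 0 := by
        simp_rw [← _root_.map_smul, ← map_sum, hrepr, hx]
      have hzero := (Fintype.linearIndependent_iff.mp h) (fun p => bas.repr x p) hsum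
      rw [← hrepr]
      simp [hzero]
  have hcont : Continuous (fun b : V × V → ℝ => fun p : V × V => sspMap b (bas p)) := by
    refine continuous_pi fun p => ?_
    refine Continuous.prodMk ?_ (Continuous.prodMk ?_ ?_)
    · exact continuous_const
    · refine continuous_pi fun q => ?_
      by_cases h : q.1 = q.2
      · simpa [sspMap, h] using continuous_const
      · simp only [sspMap, LinearMap.coe_mk, AddHom.coe_mk, h, if_neg, if_false]
        exact (continuous_apply q).mul continuous_const
    · refine Continuous.sub ?_ ?_
      · refine continuous_pi fun q => ?_
        refine continuous_finset_sum _ fun k _ => ?_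
        exact (continuous_apply (q.1, k)).mul continuous_const
      · refine continuous_pi fun q => ?_
        refine continuous_finset_sum _ fun k _ => ?_
        exact continuous_const.mul (continuous_apply (k, q.2))
  have hopen : IsOpen {b : V × V → ℝ | Function.Injective (sspMap b)} := by
    have heq : {b : V × V → ℝ | Function.Injective (sspMap b)} =
        (fun b : V × V → ℝ => fun p : V × V => sspMap b (bas p)) ⁻¹'
          {g | LinearIndependent ℝ g} := by
      ext b
      simp only [Set.mem_setOf_eq, Set.mem_preimage, hginj]
    rw [heq]
    exact isOpen_setOf_linearIndependent.preimage hcont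
  have hmem : {b : V × V → ℝ | Function.Injective (sspMap b)} ∈ nhds (toF A) :=
    hopen.mem_nhds (by
      simp only [Set.mem_setOf_eq]
      exact (hasSSP_iff_injective A).mp hA)
  rw [Metric.mem_nhds_iff] at hmem
  obtain ⟨δ, hδ, hball⟩ := hmem
  refine ⟨δ / 2, by positivity, fun B hB => ?_⟩
  rw [hasSSP_iff_injective]
  apply hball
  rw [Metric.mem_ball, dist_eq_norm]
  have h1 : ‖toF B - toF A‖ ≤ δ / 2 :=
    (pi_norm_le_iff_of_nonneg (by positivity)).mpr fun p => by
      simpa [toF, Pi.sub_apply, Real.norm_eq_abs] using (hB p.1 p.2).le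
  linarith

end SSPAux

open Polynomial in
lemma charpoly_conj_aux {V : Type*} [Fintype V] [DecidableEq V]
    (U : (Matrix V V ℝ)ˣ) (A : Matrix V V ℝ) :
    ((U : Matrix V V ℝ) * A * (↑U⁻¹ : Matrix V V ℝ)).charpoly = A.charpoly := by
  have hcomm : ∀ B : Matrix V V ℝ[X],
      Matrix.scalar V (X : ℝ[X]) * B = B * Matrix.scalar V (X : ℝ[X]) := by
    intro B
    exact (Matrix.scalar_commute (X : ℝ[X]) (fun r' => Commute.all _ _) B)
  have hC : ∀ B : Matrix V V ℝ, Matrix.charmatrix B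
      = Matrix.scalar V (X : ℝ[X]) - B.map C := fun B => rfl
  have hmap : ((U : Matrix V V ℝ).map (C : ℝ →+* ℝ[X])) * ((↑U⁻¹ : Matrix V V ℝ).map C) = 1 := by
    rw [← Matrix.map_mul, Units.mul_inv, Matrix.map_one _ (map_zero _) (map_one _)]
  have key : Matrix.charmatrix ((U : Matrix V V ℝ) * A * (↑U⁻¹ : Matrix V V ℝ))
      = ((U : Matrix V V ℝ).map C) * Matrix.charmatrix A * ((↑U⁻¹ : Matrix V V ℝ).map C) := by
    rw [hC, hC, Matrix.mul_sub, Matrix.sub_mul]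
    congr 1
    · rw [← hcomm, mul_assoc, hmap, mul_one]
    · rw [← Matrix.map_mul, ← Matrix.map_mul]
  unfold Matrix.charpoly
  have hmap' : ((↑U⁻¹ : Matrix V V ℝ).map (C : ℝ →+* ℝ[X])) * ((U : Matrix V V ℝ).map C) = 1 := by
    rw [← Matrix.map_mul, Units.inv_mul, Matrix.map_one _ (map_zero _) (map_one _)]
  rw [key, Matrix.det_mul, Matrix.det_mul, mul_comm, ← mul_assoc, ← Matrix.det_mul, hmap']
  simp

namespace SSPKey

attribute [local instance 2000] Matrix.linftyOpNormedAddCommGroup Matrix.linftyOpNormedRing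
  Matrix.linftyOpNormedAlgebra

variable {V : Type*} [Fintype V] [DecidableEq V] [LinearOrder V]
  (G : SimpleGraph V) [DecidableRel G.Adj]

/-- index type: off-diagonal (ordered) non-edges of `G` -/
abbrev Qt := {p : V × V // p.1 < p.2 ∧ ¬ G.Adj p.1 p.2}

abbrev Ft := EuclideanSpace ℝ (Qt G)

/-- projection of a matrix to its entries at non-edges -/
def proj : Matrix V V ℝ →ₗ[ℝ] Ft G where
  toFun B := WithLp.toLp 2 (fun q : Qt G => B q.1.1 q.1.2)
  map_add' B C := rfl
  map_smul' c B := rfl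

variable {G}

/-- commutator-with-`A` linear map -/
def commLin (A : Matrix V V ℝ) : Matrix V V ℝ →ₗ[ℝ] Matrix V V ℝ where
  toFun M := (M - Mᵀ) * A - A * (M - Mᵀ)
  map_add' M N := by
    simp only [transpose_add]
    noncomm_ring
  map_smul' c M := by
    simp only [transpose_smul, ← smul_sub, Matrix.smul_mul, Matrix.mul_smul, RingHom.id_apply]

/-- the relevant derivative, as a linear map -/
def Lmap (A : Matrix V V ℝ) : Matrix V V ℝ →ₗ[ℝ] Ft G :=
  (proj G).comp (commLin A)

lemma Lmap_apply (A M : Matrix V V ℝ) (q : Qt G) :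
    Lmap A M q = ((M - Mᵀ) * A - A * (M - Mᵀ)) q.1.1 q.1.2 := by
  simp only [Lmap, proj, commLin, LinearMap.coe_comp, LinearMap.coe_mk, AddHom.coe_mk,
    Function.comp_apply, PiLp.toLp_apply]
  rfl

theorem range_Lmap_top (A : Matrix V V ℝ) (hA : inS G A) (hssp : HasSSP A) :
    LinearMap.range (Lmap (G := G) A) = ⊤ := by
  rw [← Submodule.orthogonal_eq_bot_iff]
  rw [Submodule.eq_bot_iff]
  intro φ hφ
  rw [Submodule.mem_orthogonal] at hφ
  -- inner product identity
  have h_inner : ∀ M : Matrix V V ℝ,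
      ∑ q : Qt G, ((M - Mᵀ) * A - A * (M - Mᵀ)) q.1.1 q.1.2 * φ q = 0 := by
    intro M
    have := hφ (Lmap A M) (LinearMap.mem_range_self _ M)
    rw [PiLp.inner_apply] at this
    simpa [Lmap_apply, RCLike.inner_apply, conj_trivial, mul_comm] using this
  -- the symmetric matrix X built from φ
  set X : Matrix V V ℝ := Matrix.of fun i j =>
    if h : i < j ∧ ¬ G.Adj i j then φ ⟨(i, j), h⟩
    else if h' : j < i ∧ ¬ G.Adj j i then φ ⟨(j, i), h'⟩ else 0 with hXdef
  have hXswap : ∀ i j, X j i = X i j := by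
    intro i j
    by_cases h1 : i < j ∧ ¬ G.Adj i j
    · have h2 : ¬ (j < i ∧ ¬ G.Adj j i) := fun h => absurd h1.1 (asymm h.1)
      simp only [hXdef, Matrix.of_apply, dif_neg h2, dif_pos h1]
    · by_cases h2 : j < i ∧ ¬ G.Adj j i
      · simp only [hXdef, Matrix.of_apply, dif_pos h2, dif_neg h1]
      · simp only [hXdef, Matrix.of_apply, dif_neg h1, dif_neg h2]
  have hXsym : X.IsSymm := by
    ext i j
    rw [Matrix.transpose_apply]
    exact hXswap i j
  have hXdiag : ∀ i, X i i = 0 := by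
    intro i
    simp [hXdef, lt_irrefl]
  have hXhad : ∀ i j, A i j * X i j = 0 := by
    intro i j
    by_cases h1 : i < j ∧ ¬ G.Adj i j
    · have hz : A i j = 0 := by
        by_contra hne
        exact h1.2 ((hA.2 i j (ne_of_lt h1.1)).mp hne)
      simp [hz]
    · by_cases h2 : j < i ∧ ¬ G.Adj j i
      · have hz : A j i = 0 := by
          by_contra hne
          exact h2.2 ((hA.2 j i (ne_of_lt h2.1)).mp hne)
        have : A i j = 0 := by
          have := congrFun (congrFun hA.1 i) j
          rw [Matrix.transpose_apply] at this
          rw [← this, hz]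
        simp [this]
      · simp [hXdef, dif_neg h1, dif_neg h2]
  -- the commutator
  set Cm : Matrix V V ℝ := A * X - X * A with hCmdef
  have hAsym : Aᵀ = A := hA.1
  have hXsym' : Xᵀ = X := hXsym
  have hCmskew : Cmᵀ = -Cm := by
    rw [hCmdef, Matrix.transpose_sub, Matrix.transpose_mul, Matrix.transpose_mul,
      hAsym, hXsym']
    abel
  have hCmswap : ∀ i j, Cm j i = - Cm i j := by
    intro i j
    have := congrFun (congrFun hCmskew i) j
    rw [Matrix.transpose_apply, Matrix.neg_apply] at this
    exact this
  set D : Matrix V V ℝ := Cm * A - A * Cm with hDdef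
  have hDsym : ∀ i j, D j i = D i j := by
    intro i j
    have hDt : Dᵀ = D := by
      rw [hDdef, Matrix.transpose_sub, Matrix.transpose_mul, Matrix.transpose_mul,
        hAsym, hCmskew]
      simp [Matrix.neg_mul, Matrix.mul_neg]
      abel
    have := congrFun (congrFun hDt i) j
    rw [Matrix.transpose_apply] at this
    exact this
  -- specialize the inner identity
  have E1 : ∑ q : Qt G, D q.1.1 q.1.2 * φ q = 0 := by
    have hM : ((2⁻¹ : ℝ) • Cm) - ((2⁻¹ : ℝ) • Cm)ᵀ = Cm := by
      rw [Matrix.transpose_smul, hCmskew, smul_neg, sub_neg_eq_add, ← two_smul ℝ]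
      rw [smul_smul]
      norm_num
    have := h_inner ((2⁻¹ : ℝ) • Cm)
    rw [hM] at this
    exact this
  -- sum bookkeeping: total sum over all pairs
  have hsum_univ : ∑ p : V × V, X p.1 p.2 * D p.1 p.2 = 0 := by
    set g : V × V → ℝ := fun p => X p.1 p.2 * D p.1 p.2 with hg
    set Qset : Finset (V × V) := Finset.univ.filter (fun p => p.1 < p.2 ∧ ¬ G.Adj p.1 p.2)
      with hQs
    have hmemQ : ∀ p : V × V, p ∈ Qset ↔ (p.1 < p.2 ∧ ¬ G.Adj p.1 p.2) := by
      intro p; simp [hQs]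
    have hmemI : ∀ p : V × V, p ∈ Qset.image Prod.swap ↔ (p.2 < p.1 ∧ ¬ G.Adj p.2 p.1) := by
      intro p
      simp only [Finset.mem_image, hmemQ]
      constructor
      · rintro ⟨a, ⟨h1, h2⟩, rfl⟩
        simpa using ⟨h1, h2⟩
      · intro h
        exact ⟨p.swap, by simpa using h, by simp⟩
    have hQ0 : ∑ p ∈ Qset, g p = 0 := by
      have hsubt := Finset.sum_subtype (F := inferInstance) Qset hmemQ g
      rw [hsubt]
      have : ∀ q : Qt G, g q.val = φ q * D q.val.1 q.val.2 := by
        intro q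
        obtain ⟨⟨i, j⟩, hc⟩ := q
        simp only [hg, hXdef, Matrix.of_apply, dif_pos hc]
      rw [Finset.sum_congr rfl (fun q _ => this q)]
      rw [← E1]
      exact Finset.sum_congr rfl fun q _ => mul_comm _ _
    have himg : ∑ p ∈ Qset.image Prod.swap, g p = ∑ p ∈ Qset, g p := by
      rw [Finset.sum_image (by intro a _ b _ h; exact Prod.swap_injective h)]
      refine Finset.sum_congr rfl fun p _ => ?_
      simp only [hg, Prod.fst_swap, Prod.snd_swap]
      rw [hXswap, hDsym]
    have hdisj : Disjoint Qset (Qset.image Prod.swap) := by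
      rw [Finset.disjoint_left]
      intro p hp hp'
      rw [hmemQ] at hp
      rw [hmemI] at hp'
      exact absurd hp.1 (asymm hp'.1)
    have hvanish : ∀ p ∈ (Finset.univ : Finset (V × V)),
        p ∉ Qset ∪ Qset.image Prod.swap → g p = 0 := by
      intro p _ hpn
      rw [Finset.mem_union, hmemQ, hmemI] at hpn
      push_neg at hpn
      have h1 : ¬ (p.1 < p.2 ∧ ¬ G.Adj p.1 p.2) := by
        intro h; exact h.2 (hpn.1 h.1)
      have h2 : ¬ (p.2 < p.1 ∧ ¬ G.Adj p.2 p.1) := by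
        intro h; exact h.2 (hpn.2 h.1)
      simp only [hg, hXdef, Matrix.of_apply, dif_neg h1, dif_neg h2, zero_mul]
    calc ∑ p : V × V, g p
        = ∑ p ∈ Qset ∪ Qset.image Prod.swap, g p :=
          (Finset.sum_subset (Finset.subset_univ _) hvanish).symm
      _ = ∑ p ∈ Qset, g p + ∑ p ∈ Qset.image Prod.swap, g p := Finset.sum_union hdisj
      _ = 0 := by rw [himg, hQ0]; ring
  -- trace identity
  have htrace : ∑ p : V × V, X p.1 p.2 * D p.1 p.2
      = - ∑ p : V × V, (Cm p.1 p.2)^2 := by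
    have t1 : ∑ p : V × V, X p.1 p.2 * D p.1 p.2 = Matrix.trace (X * D) := by
      rw [Fintype.sum_prod_type]
      simp only [Matrix.trace, Matrix.diag, Matrix.mul_apply]
      refine Finset.sum_congr rfl fun i _ => ?_
      refine Finset.sum_congr rfl fun j _ => ?_
      rw [hDsym]
    have t2 : Matrix.trace (X * D) = Matrix.trace (Cm * Cm) := by
      rw [hDdef, Matrix.mul_sub, Matrix.trace_sub]
      have e1 : Matrix.trace (X * (Cm * A)) = Matrix.trace ((A * X) * Cm) := by
        rw [← Matrix.mul_assoc, Matrix.trace_mul_comm, ← Matrix.mul_assoc]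
      have e2 : Matrix.trace (X * (A * Cm)) = Matrix.trace ((X * A) * Cm) := by
        rw [← Matrix.mul_assoc]
      rw [e1, e2, ← Matrix.trace_sub, ← Matrix.sub_mul, ← hCmdef]
    have t3 : Matrix.trace (Cm * Cm) = - ∑ p : V × V, (Cm p.1 p.2)^2 := by
      simp only [Matrix.trace, Matrix.diag, Matrix.mul_apply]
      rw [Fintype.sum_prod_type, ← Finset.sum_neg_distrib]
      refine Finset.sum_congr rfl fun i _ => ?_
      rw [← Finset.sum_neg_distrib]
      refine Finset.sum_congr rfl fun j _ => ?_
      rw [hCmswap]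
      ring
    rw [t1, t2, t3]
  have hCm0 : Cm = 0 := by
    have hsq : ∑ p : V × V, (Cm p.1 p.2)^2 = 0 := by
      rw [hsum_univ] at htrace
      linarith
    ext i j
    have h1 : ∀ p ∈ (Finset.univ : Finset (V × V)), (0:ℝ) ≤ (Cm p.1 p.2)^2 :=
      fun p _ => sq_nonneg _
    have := (Finset.sum_eq_zero_iff_of_nonneg h1).mp hsq (i, j) (Finset.mem_univ _)
    simpa using pow_eq_zero_iff (n := 2) (by norm_num) |>.mp this
  have hX0 : X = 0 := hssp X hXsym hXhad hXdiag (sub_eq_zero.mp hCm0)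
  -- conclude φ = 0
  ext q
  obtain ⟨⟨i, j⟩, hc⟩ := q
  have : X i j = φ ⟨(i, j), hc⟩ := by
    simp only [hXdef, Matrix.of_apply, dif_pos hc]
  rw [← this, hX0]
  rfl

variable (G) in
/-- projection as a continuous linear map -/
noncomputable def projC : Matrix V V ℝ →L[ℝ] Ft G :=
  LinearMap.toContinuousLinearMap (proj G)

/-- derivative as a continuous linear map -/
noncomputable def LmapC (A : Matrix V V ℝ) : Matrix V V ℝ →L[ℝ] Ft G :=
  LinearMap.toContinuousLinearMap (Lmap A)

/-- the conjugation map -/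
noncomputable def Phi (A : Matrix V V ℝ) : Matrix V V ℝ → Matrix V V ℝ :=
  fun M => exp (M - Mᵀ) * A * exp (Mᵀ - M)

/-- transpose-difference as a linear map -/
def subLin : Matrix V V ℝ →ₗ[ℝ] Matrix V V ℝ where
  toFun M := M - Mᵀ
  map_add' M N := by simp [transpose_add]; abel
  map_smul' c M := by simp [transpose_smul, smul_sub]

def subLin' : Matrix V V ℝ →ₗ[ℝ] Matrix V V ℝ where
  toFun M := Mᵀ - M
  map_add' M N := by simp [transpose_add]; abel
  map_smul' c M := by simp [transpose_smul, smul_sub]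

theorem hasStrictFDerivAt_Phi (A : Matrix V V ℝ) :
    HasStrictFDerivAt (Phi A)
      ((exp ((0:Matrix V V ℝ) - (0:Matrix V V ℝ)ᵀ) * A) •
          ((1 : Matrix V V ℝ →L[ℝ] Matrix V V ℝ).comp
            (LinearMap.toContinuousLinearMap subLin')) +
        (((1 : Matrix V V ℝ →L[ℝ] Matrix V V ℝ).comp
            (LinearMap.toContinuousLinearMap subLin)).smulRight A).smulRight
          (exp ((0:Matrix V V ℝ)ᵀ - (0:Matrix V V ℝ)))) 0 := by
  have h1 : HasStrictFDerivAt (fun M : Matrix V V ℝ => M - Mᵀ)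
      (LinearMap.toContinuousLinearMap subLin) 0 := by
    have := (LinearMap.toContinuousLinearMap (subLin (V := V))).hasStrictFDerivAt (x := 0)
    exact this
  have h1' : HasStrictFDerivAt (fun M : Matrix V V ℝ => Mᵀ - M)
      (LinearMap.toContinuousLinearMap subLin') 0 := by
    have := (LinearMap.toContinuousLinearMap (subLin' (V := V))).hasStrictFDerivAt (x := 0)
    exact this
  have hexp1 : HasStrictFDerivAt (fun M : Matrix V V ℝ => exp (M - Mᵀ))
      ((1 : Matrix V V ℝ →L[ℝ] Matrix V V ℝ).comp
        (LinearMap.toContinuousLinearMap subLin)) 0 := by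
    refine HasStrictFDerivAt.comp (g := exp) 0 ?_ h1
    have h0 := hasStrictFDerivAt_exp_zero (𝕂 := ℝ) (𝔸 := Matrix V V ℝ)
    simp only [transpose_zero, sub_zero]
    exact h0
  have hexp2 : HasStrictFDerivAt (fun M : Matrix V V ℝ => exp (Mᵀ - M))
      ((1 : Matrix V V ℝ →L[ℝ] Matrix V V ℝ).comp
        (LinearMap.toContinuousLinearMap subLin')) 0 := by
    refine HasStrictFDerivAt.comp (g := exp) 0 ?_ h1'
    have h0 := hasStrictFDerivAt_exp_zero (𝕂 := ℝ) (𝔸 := Matrix V V ℝ)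
    simp only [transpose_zero, sub_self]
    exact h0
  have hmul1 := hexp1.mul_const' A
  exact hmul1.mul' hexp2

theorem hasStrictFDerivAt_key (A : Matrix V V ℝ) :
    HasStrictFDerivAt (fun M => projC G (Phi A M)) (LmapC (G := G) A) 0 := by
  have h := ((projC G).hasStrictFDerivAt (x := Phi A 0)).comp 0 (hasStrictFDerivAt_Phi A)
  refine h.congr_fderiv ?_
  refine ContinuousLinearMap.ext fun M => ?_
  ext q
  simp only [ContinuousLinearMap.coe_comp', Function.comp_apply, ContinuousLinearMap.add_apply,
    ContinuousLinearMap.smul_apply, ContinuousLinearMap.smulRight_apply,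
    ContinuousLinearMap.one_def, ContinuousLinearMap.coe_id', id_eq, projC, LmapC,
    LinearMap.coe_toContinuousLinearMap', Lmap_apply, transpose_zero, sub_zero, sub_self,
    exp_zero, one_mul, mul_one, smul_eq_mul]
  simp only [proj, subLin, subLin', LinearMap.coe_mk, AddHom.coe_mk]
  change (A * (Mᵀ - M) + (M - Mᵀ) * A * 1 : Matrix V V ℝ) q.1.1 q.1.2 = ((M - Mᵀ) * A - A * (M - Mᵀ)) q.1.1 q.1.2
  rw [Matrix.mul_one]
  have : (M - Mᵀ) * A - A * (M - Mᵀ) = A * (Mᵀ - M) + (M - Mᵀ) * A := by noncomm_ring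
  rw [this]

/-- entry evaluation as a continuous linear map -/
noncomputable def entryC (i j : V) : Matrix V V ℝ →L[ℝ] ℝ :=
  LinearMap.toContinuousLinearMap
    { toFun := fun B => B i j
      map_add' := fun _ _ => rfl
      map_smul' := fun _ _ => rfl }

theorem key (G H : SimpleGraph V) [DecidableRel G.Adj] (hGH : G ≤ H)
    (A : Matrix V V ℝ) (hA : inS G A) (hssp : HasSSP A)
    (hsspball : ∃ δ₀ > 0, ∀ B : Matrix V V ℝ, (∀ i j, |B i j - A i j| < δ₀) → HasSSP B)
    {δ : ℝ} (hδ : 0 < δ) :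
    ∃ A' : Matrix V V ℝ, inS H A' ∧ HasSSP A' ∧ A'.charpoly = A.charpoly ∧
      ∀ i j, |A i j - A' i j| < δ := by
  classical
  obtain ⟨δ₀, hδ₀pos, hδ₀⟩ := hsspball
  -- the threshold κ
  set eset : Finset ℝ := (Finset.univ.filter (fun p : V × V => G.Adj p.1 p.2)).image
      (fun p => |A p.1 p.2|) with heset
  set κ : ℝ := if h : eset.Nonempty then min (min δ δ₀) (eset.min' h) else min δ δ₀ with hκ
  have hedge_mem : ∀ i j, G.Adj i j → |A i j| ∈ eset := by
    intro i j hadj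
    rw [heset]
    exact Finset.mem_image.mpr ⟨(i, j), Finset.mem_filter.mpr ⟨Finset.mem_univ _, hadj⟩, rfl⟩
  have hκpos : 0 < κ := by
    rw [hκ]
    split_ifs with h
    · refine lt_min (lt_min hδ hδ₀pos) ?_
      have : ∀ y ∈ eset, 0 < y := by
        intro y hy
        rw [heset] at hy
        obtain ⟨p, hp, rfl⟩ := Finset.mem_image.mp hy
        have hadj : G.Adj p.1 p.2 := (Finset.mem_filter.mp hp).2
        have : A p.1 p.2 ≠ 0 := (hA.2 p.1 p.2 hadj.ne).mpr hadj
        exact abs_pos.mpr this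
      exact this _ (eset.min'_mem h)
    · exact lt_min hδ hδ₀pos
  have hκδ : κ ≤ δ := by
    rw [hκ]; split_ifs <;> simp [min_le_iff]
  have hκδ₀ : κ ≤ δ₀ := by
    rw [hκ]; split_ifs <;> simp [min_le_iff]
  have hκedge : ∀ i j, G.Adj i j → κ ≤ |A i j| := by
    intro i j hadj
    have hne : eset.Nonempty := ⟨_, hedge_mem i j hadj⟩
    rw [hκ, dif_pos hne]
    exact le_trans (min_le_right _ _) (Finset.min'_le _ _ (hedge_mem i j hadj))
  -- the open set of entrywise-close matrices
  set N : Set (Matrix V V ℝ) := {B | ∀ i j, |B i j - A i j| < κ} with hN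
  have hNopen : IsOpen N := by
    have hNeq : N = ⋂ p : V × V, {B : Matrix V V ℝ | |B p.1 p.2 - A p.1 p.2| < κ} := by
      ext B
      simp only [hN, Set.mem_setOf_eq, Set.mem_iInter, Prod.forall]
    rw [hNeq]
    refine isOpen_iInter_of_finite fun p => ?_
    have hc : Continuous fun B : Matrix V V ℝ => |B p.1 p.2 - A p.1 p.2| := by
      have h1 : Continuous fun B : Matrix V V ℝ => B p.1 p.2 := by
        have := (entryC p.1 p.2).continuous
        exact this
      exact (h1.sub continuous_const).abs
    exact isOpen_lt hc continuous_const
  have hAN : A ∈ N := by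
    intro i j
    simpa using hκpos
  -- continuity of Phi, and Phi A 0 = A
  have hPhi0 : Phi A 0 = A := by
    simp [Phi, exp_zero]
  have hPhicont : ContinuousAt (Phi A) 0 :=
    (hasStrictFDerivAt_Phi A).continuousAt
  have hU : (Phi A) ⁻¹' N ∈ nhds (0 : Matrix V V ℝ) := by
    refine hPhicont.preimage_mem_nhds ?_
    rw [hPhi0]
    exact hNopen.mem_nhds hAN
  -- surjectivity of the derivative
  have hrange : LinearMap.range (LmapC (G := G) A : Matrix V V ℝ →ₗ[ℝ] Ft G) = ⊤ := by
    rw [LinearMap.range_eq_top, ContinuousLinearMap.coe_coe]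
    have hco : ⇑(LmapC (G := G) A) = ⇑(Lmap (G := G) A) :=
      LinearMap.coe_toContinuousLinearMap' _
    rw [hco]
    exact LinearMap.range_eq_top.mp (range_Lmap_top (G := G) A hA hssp)
  have hmap := (hasStrictFDerivAt_key (G := G) A).map_nhds_eq_of_surj hrange
  have hf0 : (projC G) (Phi A 0) = 0 := by
    rw [hPhi0]
    ext q
    have hz : A q.1.1 q.1.2 = 0 := by
      by_contra hne
      exact q.2.2 ((hA.2 _ _ (ne_of_lt q.2.1)).mp hne)
    exact hz
  rw [hf0] at hmap
  have himg : (fun M => projC G (Phi A M)) '' ((Phi A) ⁻¹' N) ∈ nhds (0 : Ft G) := by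
    rw [← hmap]
    exact Filter.image_mem_map hU
  obtain ⟨r, hrpos, hball⟩ := Metric.mem_nhds_iff.mp himg
  -- the target vector
  set w : Ft G := WithLp.toLp 2 (fun q : Qt G => if H.Adj q.1.1 q.1.2 then (1:ℝ) else 0) with hw
  set c : ℝ := r / (2 * (‖w‖ + 1)) with hc
  have hwnn : (0:ℝ) ≤ ‖w‖ := norm_nonneg w
  have hcpos : 0 < c := by
    rw [hc]; positivity
  set v : Ft G := c • w with hv
  have hvball : v ∈ Metric.ball (0 : Ft G) r := by
    rw [mem_ball_zero_iff, hv, norm_smul, Real.norm_eq_abs, abs_of_pos hcpos, hc]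
    have h1 : r / (2 * (‖w‖ + 1)) * ‖w‖ ≤ r / (2 * (‖w‖ + 1)) * (‖w‖ + 1) := by
      have := le_of_lt hcpos
      rw [← hc]
      nlinarith
    have h2 : r / (2 * (‖w‖ + 1)) * (‖w‖ + 1) = r / 2 := by
      field_simp
    linarith
  obtain ⟨M, hMU, hfM⟩ := hball hvball
  set A' : Matrix V V ℝ := Phi A M with hA'
  have hMN : A' ∈ N := hMU
  have hclose : ∀ i j, |A' i j - A i j| < κ := hMN
  -- entries at the non-edge positions
  have hfM' : ∀ q : Qt G, A' q.1.1 q.1.2 = c * (if H.Adj q.1.1 q.1.2 then (1:ℝ) else 0) := by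
    intro q
    have hq := congrArg (fun x : Ft G => x q) hfM
    exact hq
  -- symmetry
  have hAt : Aᵀ = A := hA.1
  have hA'symm : A'.IsSymm := by
    rw [Matrix.IsSymm, hA', Phi]
    rw [Matrix.transpose_mul, Matrix.transpose_mul, ← Matrix.exp_transpose,
      ← Matrix.exp_transpose, Matrix.transpose_sub, Matrix.transpose_sub,
      Matrix.transpose_transpose, hAt, Matrix.mul_assoc]
  have hA'swap : ∀ i j, A' j i = A' i j := by
    intro i j
    rw [← congrFun (congrFun hA'symm j) i, Matrix.transpose_apply]
  -- pattern for i < j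
  have hpat_lt : ∀ i j, i < j → (A' i j ≠ 0 ↔ H.Adj i j) := by
    intro i j hlt
    by_cases hg : G.Adj i j
    · have hH : H.Adj i j := hGH hg
      have hAij : A i j ≠ 0 := (hA.2 i j hlt.ne).mpr hg
      have hbig : κ ≤ |A i j| := hκedge i j hg
      have : A' i j ≠ 0 := by
        intro h0
        have := hclose i j
        rw [h0] at this
        simp only [zero_sub, abs_neg] at this
        linarith
      simp [this, hH]
    · have hq : A' i j = c * (if H.Adj i j then (1:ℝ) else 0) :=
        hfM' ⟨(i, j), hlt, hg⟩
      by_cases hH : H.Adj i j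
      · rw [hq, if_pos hH, mul_one]
        simp [hH, ne_of_gt hcpos]
      · rw [hq, if_neg hH, mul_zero]
        simp [hH]
  have hpat : ∀ i j, i ≠ j → (A' i j ≠ 0 ↔ H.Adj i j) := by
    intro i j hne
    rcases lt_trichotomy i j with hlt | heq | hgt
    · exact hpat_lt i j hlt
    · exact absurd heq hne
    · rw [← hA'swap i j, H.adj_comm]
      exact hpat_lt j i hgt
  -- the unit and the characteristic polynomial
  have hcommS : Commute (M - Mᵀ) (Mᵀ - M) := by
    have h : Mᵀ - M = -(M - Mᵀ) := by rw [neg_sub]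
    rw [h]
    exact (Commute.refl _).neg_right
  have hmulinv : exp (M - Mᵀ) * exp (Mᵀ - M) = 1 := by
    rw [← Matrix.exp_add_of_commute _ _ hcommS]
    simp
  have hmulinv' : exp (Mᵀ - M) * exp (M - Mᵀ) = 1 := by
    rw [← Matrix.exp_add_of_commute _ _ hcommS.symm]
    simp
  have hchar : A'.charpoly = A.charpoly := by
    set Un : (Matrix V V ℝ)ˣ := ⟨exp (M - Mᵀ), exp (Mᵀ - M), hmulinv, hmulinv'⟩ with hUn
    have hAU : A' = (Un : Matrix V V ℝ) * A * (↑Un⁻¹ : Matrix V V ℝ) := rfl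
    rw [hAU]
    exact charpoly_conj_aux Un A
  have hssp' : HasSSP A' := hδ₀ A' (fun i j => lt_of_lt_of_le (hclose i j) hκδ₀)
  refine ⟨A', ⟨hA'symm, hpat⟩, hssp', hchar, fun i j => ?_⟩
  rw [abs_sub_comm]
  exact lt_of_lt_of_le (hclose i j) hκδ

end SSPKey

/-- Theorem 1.1 / thm:sspsuper: if `G` is a spanning subgraph of `H` and
`A ∈ S(G)` has the SSP with spectrum `Λ`, then for every `ε > 0` there is `A' ∈ S(H)` with
the SSP, the same spectrum, and `‖A - A'‖ < ε`. -/
theorem stmt0 {V : Type*} [Fintype V] [DecidableEq V]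
    (G H : SimpleGraph V) (hGH : G ≤ H)
    (A : Matrix V V ℝ) (hA : inS G A) (hssp : HasSSP A)
    (ε : ℝ) (hε : 0 < ε) :
    ∃ A' : Matrix V V ℝ,
      inS H A' ∧ HasSSP A' ∧ specM A' = specM A ∧ ‖A - A'‖ < ε := by
  classical
  letI : LinearOrder V := LinearOrder.lift' (Fintype.equivFin V) (Fintype.equivFin V).injective
  obtain ⟨A', hin, hssp', hchar, hent⟩ :=
    SSPKey.key G H hGH A hA hssp (SSPAux.exists_ssp_ball hssp) hε
  refine ⟨A', hin, hssp', ?_, ?_⟩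
  · unfold specM
    rw [hchar]
  · rw [Matrix.norm_lt_iff hε]
    intro i j
    rw [Matrix.sub_apply, Real.norm_eq_abs]
    exact hent i j
end

section
/- Let B be a k × k real symmetric matrix with eigenvalues μ₁, …, μ_k and let u be a unit eigenvector of B corresponding to μ₁ (uᵀu = 1). Let A be an n × n real symmetric matrix of block form A = [[A₁, b], [bᵀ, μ₁]] (i.e., the (n,n)-entry of A equals μ₁), with eigenvalues λ₁, …, λ_n. Then the (n−1+k) × (n−1+k) symmetric matrix C = [[A₁, b uᵀ], [u bᵀ, B]] has eigenvalues λ₁, …, λ_n, μ₂, …, μ_k (as a multiset). -/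
open Polynomial Matrix in
private lemma eval_charpoly' {m : Type*} [Fintype m] [DecidableEq m]
    (M : Matrix m m ℝ) (x : ℝ) :
    (M.charpoly).eval x = (x • (1 : Matrix m m ℝ) - M).det := by
  rw [Matrix.charpoly, ← Polynomial.coe_evalRingHom, RingHom.map_det]
  congr 1
  ext i j
  by_cases h : i = j <;>
    simp [Matrix.charmatrix_apply, Matrix.one_apply, h, Matrix.diagonal_apply]

open Polynomial Matrix in
/-- Lemma HS04: if `B` is `k × k` symmetric with unit eigenvector `u`
for the eigenvalue `μ₁`, and `A = [[A₁, b], [bᵀ, μ₁]]`, then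
`C = [[A₁, buᵀ], [ubᵀ, B]]` has eigenvalues `λ₁, …, λ_n, μ₂, …, μ_k`; i.e.
`spec(C) + {μ₁} = spec(A) + spec(B)` as multisets. -/
theorem stmt1 (n k : ℕ) (B : Matrix (Fin k) (Fin k) ℝ) (hB : B.IsSymm)
    (μ₁ : ℝ) (u : Fin k → ℝ) (hu : B.mulVec u = μ₁ • u) (hunit : ∑ i, u i ^ 2 = 1)
    (A₁ : Matrix (Fin n) (Fin n) ℝ) (hA₁ : A₁.IsSymm) (b : Fin n → ℝ) :
    specM (Matrix.fromBlocks A₁ (Matrix.vecMulVec b u) (Matrix.vecMulVec u b) B) + {μ₁} =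
      specM (Matrix.fromBlocks A₁ (Matrix.of fun i (_ : Fin 1) => b i)
        (Matrix.of fun (_ : Fin 1) j => b j) (Matrix.of fun (_ : Fin 1) (_ : Fin 1) => μ₁))
        + specM B := by
  classical
  set Cm : Matrix (Fin n ⊕ Fin k) (Fin n ⊕ Fin k) ℝ :=
    Matrix.fromBlocks A₁ (Matrix.vecMulVec b u) (Matrix.vecMulVec u b) B with hCm
  set Am : Matrix (Fin n ⊕ Fin 1) (Fin n ⊕ Fin 1) ℝ :=
    Matrix.fromBlocks A₁ (Matrix.of fun i (_ : Fin 1) => b i)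
      (Matrix.of fun (_ : Fin 1) j => b j) (Matrix.of fun (_ : Fin 1) (_ : Fin 1) => μ₁) with hAm
  -- the key polynomial identity
  have hpoly : Cm.charpoly * (X - Polynomial.C μ₁) = Am.charpoly * B.charpoly := by
    apply Polynomial.eq_of_infinite_eval_eq
    have hBne : B.charpoly ≠ 0 := (Matrix.charpoly_monic B).ne_zero
    have hfin : (({μ₁} : Set ℝ) ∪ {x | (B.charpoly).IsRoot x}).Finite :=
      (Set.finite_singleton μ₁).union (Polynomial.finite_setOf_isRoot hBne)
    apply Set.Infinite.mono _ hfin.infinite_compl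
    intro x hx
    rw [Set.mem_compl_iff, Set.mem_union, not_or] at hx
    obtain ⟨hxμ, hxB⟩ := hx
    have hc : x - μ₁ ≠ 0 := sub_ne_zero.2 (by simpa using hxμ)
    set c : ℝ := x - μ₁ with hcdef
    set M : Matrix (Fin k) (Fin k) ℝ := x • (1 : Matrix (Fin k) (Fin k) ℝ) - B with hMdef
    have hdetM : M.det ≠ 0 := by
      rw [← eval_charpoly']
      exact hxB
    haveI : Invertible M := M.invertibleOfIsUnitDet (isUnit_iff_ne_zero.2 hdetM)
    -- eigenvector computations
    have hMu : M *ᵥ u = c • u := by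
      rw [hMdef, Matrix.sub_mulVec, Matrix.smul_mulVec, Matrix.one_mulVec, hu, hcdef,
        sub_smul]
    have hinvu : ⅟M *ᵥ u = c⁻¹ • u := by
      have h1 : M *ᵥ (c⁻¹ • u) = u := by
        rw [Matrix.mulVec_smul, hMu, smul_smul, inv_mul_cancel₀ hc, one_smul]
      calc ⅟M *ᵥ u = ⅟M *ᵥ (M *ᵥ (c⁻¹ • u)) := by rw [h1]
        _ = (⅟M * M) *ᵥ (c⁻¹ • u) := by rw [Matrix.mulVec_mulVec]
        _ = c⁻¹ • u := by rw [invOf_mul_self, Matrix.one_mulVec]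
    -- the Schur complement block for C
    have h2 : ⅟M * Matrix.vecMulVec u b = Matrix.vecMulVec (⅟M *ᵥ u) b := by
      ext i j
      simp only [Matrix.mul_apply, Matrix.vecMulVec_apply, Matrix.mulVec, dotProduct,
        Finset.sum_mul]
      exact Finset.sum_congr rfl fun p _ => by ring
    have h2' : Matrix.vecMulVec (c⁻¹ • u) b = c⁻¹ • Matrix.vecMulVec u b := by
      ext i j
      simp [Matrix.vecMulVec_apply, mul_assoc]
    have h3 : Matrix.vecMulVec b u * Matrix.vecMulVec u b = Matrix.vecMulVec b b := by
      ext i j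
      simp only [Matrix.mul_apply, Matrix.vecMulVec_apply]
      calc ∑ p, b i * u p * (u p * b j) = (∑ p, u p ^ 2) * (b i * b j) := by
            rw [Finset.sum_mul]
            exact Finset.sum_congr rfl fun p _ => by ring
        _ = b i * b j := by rw [hunit, one_mul]
    have hkey : Matrix.vecMulVec b u * ⅟M * Matrix.vecMulVec u b
        = c⁻¹ • Matrix.vecMulVec b b := by
      rw [Matrix.mul_assoc, h2, hinvu, h2', Matrix.mul_smul, h3]
    -- determinant of x•1 - C
    have hCsub : x • (1 : Matrix (Fin n ⊕ Fin k) (Fin n ⊕ Fin k) ℝ) - Cm =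
        Matrix.fromBlocks (x • 1 - A₁) (-(Matrix.vecMulVec b u)) (-(Matrix.vecMulVec u b)) M := by
      rw [hCm, hMdef, ← Matrix.fromBlocks_one, Matrix.fromBlocks_smul]
      ext (i | i) (j | j) <;> simp [Matrix.fromBlocks]
    have hdetC : (x • (1 : Matrix (Fin n ⊕ Fin k) (Fin n ⊕ Fin k) ℝ) - Cm).det =
        M.det * (x • 1 - A₁ - c⁻¹ • Matrix.vecMulVec b b).det := by
      rw [hCsub, Matrix.det_fromBlocks₂₂]
      congr 2
      simp only [Matrix.neg_mul, Matrix.mul_neg, neg_neg]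
      rw [hkey]
    -- determinant of x•1 - A
    set D' : Matrix (Fin 1) (Fin 1) ℝ :=
      x • (1 : Matrix (Fin 1) (Fin 1) ℝ) - Matrix.of fun (_ : Fin 1) (_ : Fin 1) => μ₁
      with hD'def
    have hD' : D' = c • 1 := by
      ext i j
      fin_cases i; fin_cases j
      simp [hD'def, Matrix.one_apply, hcdef]
    haveI : Invertible D' := ⟨c⁻¹ • 1,
      by rw [hD', smul_mul_assoc, one_mul, smul_smul, inv_mul_cancel₀ hc, one_smul],
      by rw [hD', smul_mul_assoc, one_mul, smul_smul, mul_inv_cancel₀ hc, one_smul]⟩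
    have hinvD : ⅟D' = c⁻¹ • 1 := invOf_eq_right_inv
      (by rw [hD', smul_mul_assoc, one_mul, smul_smul, mul_inv_cancel₀ hc, one_smul])
    have hdetD : D'.det = c := by
      rw [hD', Matrix.det_fin_one]
      simp [Matrix.one_apply]
    have hAsub : x • (1 : Matrix (Fin n ⊕ Fin 1) (Fin n ⊕ Fin 1) ℝ) - Am =
        Matrix.fromBlocks (x • 1 - A₁) (-(Matrix.of fun i (_ : Fin 1) => b i))
          (-(Matrix.of fun (_ : Fin 1) j => b j)) D' := by
      rw [hAm, hD'def, ← Matrix.fromBlocks_one, Matrix.fromBlocks_smul]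
      ext (i | i) (j | j) <;> simp [Matrix.fromBlocks]
    have hBD : (-(Matrix.of fun i (_ : Fin 1) => b i)) * ⅟D'
        * (-(Matrix.of fun (_ : Fin 1) j => b j)) = c⁻¹ • Matrix.vecMulVec b b := by
      rw [hinvD]
      ext i j
      simp [Matrix.mul_apply, Fin.sum_univ_one, Matrix.vecMulVec_apply, Matrix.one_apply]
      ring
    have hdetA : (x • (1 : Matrix (Fin n ⊕ Fin 1) (Fin n ⊕ Fin 1) ℝ) - Am).det =
        c * (x • 1 - A₁ - c⁻¹ • Matrix.vecMulVec b b).det := by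
      rw [hAsub, Matrix.det_fromBlocks₂₂, hdetD, hBD]
    -- conclude the evaluation identity
    show Polynomial.eval x (Cm.charpoly * (X - Polynomial.C μ₁))
        = Polynomial.eval x (Am.charpoly * B.charpoly)
    rw [Polynomial.eval_mul, Polynomial.eval_mul, Polynomial.eval_sub, Polynomial.eval_X,
      Polynomial.eval_C, eval_charpoly', eval_charpoly', eval_charpoly', hdetC, hdetA,
      ← hcdef, ← hMdef]
    ring
  -- from the polynomial identity to the multiset identity
  have h1 : Cm.charpoly * (X - Polynomial.C μ₁) ≠ 0 :=
    mul_ne_zero (Matrix.charpoly_monic Cm).ne_zero (Polynomial.X_sub_C_ne_zero μ₁)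
  have h2 : Am.charpoly * B.charpoly ≠ 0 :=
    mul_ne_zero (Matrix.charpoly_monic Am).ne_zero (Matrix.charpoly_monic B).ne_zero
  show Cm.charpoly.roots + {μ₁} = Am.charpoly.roots + B.charpoly.roots
  calc Cm.charpoly.roots + {μ₁} = Cm.charpoly.roots + (X - Polynomial.C μ₁).roots := by
        rw [Polynomial.roots_X_sub_C]
    _ = (Cm.charpoly * (X - Polynomial.C μ₁)).roots := (Polynomial.roots_mul h1).symm
    _ = (Am.charpoly * B.charpoly).roots := by rw [hpoly]
    _ = Am.charpoly.roots + B.charpoly.roots := Polynomial.roots_mul h2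
end

section
/- Every connected simple graph G on n ≥ 2 vertices has a spanning subgraph H (same vertex set) such that every connected component of H is a star with at least two vertices. -/
namespace Stmt4Aux

variable {V : Type*}

/-- `Steps G s n u v`: there is a walk of length `n` from `u` to `v` in `G`
whose edges lie inside the vertex set `s`. -/
def Steps (G : SimpleGraph V) (s : Finset V) : ℕ → V → V → Prop
  | 0, u, v => u = v
  | n+1, u, v => ∃ w, Steps G s n u w ∧ w ∈ s ∧ v ∈ s ∧ G.Adj w v

lemma steps_append {G : SimpleGraph V} {s : Finset V} {m : ℕ} {u v : V} :
    ∀ {n : ℕ} {w : V}, Steps G s m u v → Steps G s n v w → Steps G s (m + n) u w := by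
  intro n
  induction n with
  | zero => intro w h1 h2; cases h2; exact h1
  | succ n ih =>
    rintro w h1 ⟨x, hx, hxs, hws, hadj⟩
    exact ⟨x, ih h1 hx, hxs, hws, hadj⟩

lemma steps_symm {G : SimpleGraph V} {s : Finset V} :
    ∀ {n : ℕ} {u v : V}, Steps G s n u v → Steps G s n v u := by
  intro n
  induction n with
  | zero => intro u v h; exact h.symm
  | succ n ih =>
    rintro u v ⟨x, hx, hxs, hvs, hadj⟩
    have h1 : Steps G s 1 v x := ⟨v, rfl, hvs, hxs, hadj.symm⟩
    have := steps_append h1 (ih hx)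
    simpa [Nat.add_comm] using this

lemma steps_mem_left {G : SimpleGraph V} {s : Finset V} {n : ℕ} {u v : V}
    (h : Steps G s n u v) (hne : u ≠ v) : u ∈ s := by
  induction n generalizing v with
  | zero => exact absurd h hne
  | succ n ih =>
    obtain ⟨x, hx, hxs, -, -⟩ := h
    by_cases hux : u = x
    · exact hux ▸ hxs
    · exact ih hx hux

lemma exists_noncut [DecidableEq V] (G : SimpleGraph V) {s : Finset V}
    (hconn : ∀ u ∈ s, ∀ v ∈ s, ∃ n, Steps G s n u v) (h2 : 2 ≤ s.card) :
    ∃ v ∈ s, (∃ u ∈ s.erase v, G.Adj v u) ∧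
      ∀ a ∈ s.erase v, ∀ b ∈ s.erase v, ∃ n, Steps G (s.erase v) n a b := by
  classical
  have hne : s.Nonempty := Finset.card_pos.mp (by omega)
  obtain ⟨r, hr⟩ := hne
  set d : V → ℕ := fun w => if h : ∃ n, Steps G s n r w then Nat.find h else 0 with hd
  obtain ⟨v, hv, hvmax⟩ := Finset.exists_max_image s d ⟨r, hr⟩
  -- basic facts about d
  have hdspec : ∀ w ∈ s, Steps G s (d w) r w := by
    intro w hw
    have h : ∃ n, Steps G s n r w := hconn r hr w hw
    simp only [hd, dif_pos h]
    exact Nat.find_spec h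
  have hdle : ∀ w ∈ s, ∀ n, Steps G s n r w → d w ≤ n := by
    intro w hw n hn
    have h : ∃ n, Steps G s n r w := ⟨n, hn⟩
    simp only [hd, dif_pos h]
    exact Nat.find_le hn
  have hdr : d r = 0 := by
    have h : ∃ n, Steps G s n r r := ⟨0, rfl⟩
    have := hdle r hr 0 rfl
    omega
  -- v ≠ r
  have hvr : v ≠ r := by
    rintro rfl
    obtain ⟨a, ha, hav⟩ : ∃ a ∈ s, a ≠ v := by
      obtain ⟨a, ha, b, hbm, hab⟩ := Finset.one_lt_card.mp h2
      rcases eq_or_ne a v with rfl | h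
      · exact ⟨b, hbm, fun hbv => hab hbv.symm⟩
      · exact ⟨a, ha, h⟩
    have h0 : d a = 0 := by have := hvmax a ha; omega
    have : Steps G s 0 v a := by rw [← h0]; exact hdspec a ha
    exact hav this.symm
  -- key claim: short walks to w ≠ v avoid v
  have claim : ∀ n, ∀ w ∈ s, w ≠ v → d w ≤ n → ∃ m, Steps G (s.erase v) m r w := by
    intro n
    induction n with
    | zero =>
      intro w hw hwv h0
      have : Steps G s 0 r w := by
        have := hdspec w hw; rw [Nat.le_zero.mp h0] at this; exact this
      exact ⟨0, this⟩
    | succ n ih =>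
      intro w hw hwv hle
      rcases Nat.lt_or_ge (d w) (n+1) with h | h
      · exact ih w hw hwv (by omega)
      have hdw : d w = n + 1 := by omega
      have hstep := hdspec w hw
      rw [hdw] at hstep
      obtain ⟨x, hx, hxs, hws, hadj⟩ := hstep
      have hdx : d x ≤ n := hdle x hxs n hx
      have hxv : x ≠ v := by
        rintro rfl
        have := hvmax w hw
        omega
      obtain ⟨m, hm⟩ := ih x hxs hxv hdx
      exact ⟨m + 1, x, hm, Finset.mem_erase.mpr ⟨hxv, hxs⟩,
        Finset.mem_erase.mpr ⟨hwv, hws⟩, hadj⟩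
  refine ⟨v, hv, ?_, ?_⟩
  · -- neighbor of v in the rest
    have hdv : 1 ≤ d v := by
      rcases Nat.eq_zero_or_pos (d v) with h0 | h
      · exfalso
        have : Steps G s 0 r v := by rw [← h0]; exact hdspec v hv
        exact hvr this.symm
      · exact h
    obtain ⟨k, hk⟩ : ∃ k, d v = k + 1 := ⟨d v - 1, by omega⟩
    have hstep := hdspec v hv
    rw [hk] at hstep
    obtain ⟨x, hx, hxs, -, hadj⟩ := hstep
    have hxv : x ≠ v := by
      rintro rfl
      have := hdle x hxs k hx
      omega
    exact ⟨x, Finset.mem_erase.mpr ⟨hxv, hxs⟩, hadj.symm⟩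
  · -- erase still connected
    intro a ha b hb
    have haS : a ∈ s := (Finset.mem_erase.mp ha).2
    have hbS : b ∈ s := (Finset.mem_erase.mp hb).2
    obtain ⟨m1, h1⟩ := claim (d a) a haS (Finset.mem_erase.mp ha).1 le_rfl
    obtain ⟨m2, h2⟩ := claim (d b) b hbS (Finset.mem_erase.mp hb).1 le_rfl
    exact ⟨m1 + m2, steps_append (steps_symm h1) h2⟩

end Stmt4Aux

namespace Stmt4Aux

/-- Main induction: a connected vertex set with at least 2 vertices has a
"hub assignment" `f` : idempotent, moves only along edges, and every fixed
point (hub) has a leaf. -/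
lemma exists_f [DecidableEq V] (G : SimpleGraph V) :
    ∀ n (s : Finset V), s.card = n → 2 ≤ n →
    (∀ u ∈ s, ∀ v ∈ s, ∃ m, Steps G s m u v) →
    ∃ f : V → V, (∀ v ∈ s, f v ∈ s) ∧ (∀ v ∈ s, f (f v) = f v) ∧
      (∀ v ∈ s, f v ≠ v → G.Adj v (f v)) ∧
      (∀ v ∈ s, f v = v → ∃ w ∈ s, w ≠ v ∧ f w = v) := by
  intro n
  induction n using Nat.strong_induction_on with
  | _ n ih =>
  intro s hcard h2 hconn
  rcases eq_or_lt_of_le h2 with h2' | h3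
  · -- base case: exactly two vertices
    obtain ⟨a, b, hab, rfl⟩ := Finset.card_eq_two.mp (hcard ▸ h2'.symm)
    have ha : a ∈ ({a, b} : Finset V) := by simp
    have hb : b ∈ ({a, b} : Finset V) := by simp
    have hadj : G.Adj a b := by
      obtain ⟨m, hm⟩ := hconn a ha b hb
      clear ha hb
      induction m generalizing b with
      | zero => exact absurd hm.symm (Ne.symm hab)
      | succ m ihm =>
        obtain ⟨x, hx, hxs, -, hxb⟩ := hm
        rcases Finset.mem_insert.mp hxs with rfl | hxb'
        · exact hxb
        · rw [Finset.mem_singleton.mp hxb'] at hxb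
          exact absurd hxb G.irrefl
    refine ⟨fun _ => a, by simp, by simp, ?_, ?_⟩
    · intro v hv hva
      rcases Finset.mem_insert.mp hv with rfl | hv'
      · exact absurd rfl hva
      · rw [Finset.mem_singleton.mp hv']
        exact hadj.symm
    · intro v hv hva
      simp only at hva
      subst hva
      exact ⟨b, hb, fun h => hab h.symm, rfl⟩
  · -- inductive step: at least three vertices
    obtain ⟨v, hv, ⟨u, hu, hadj⟩, hconn'⟩ := exists_noncut G hconn (by omega)
    set s' := s.erase v with hs'
    have hcard' : s'.card = n - 1 := by
      rw [hs', Finset.card_erase_of_mem hv, hcard]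
    have husv : u ≠ v := (Finset.mem_erase.mp hu).1
    have huS : u ∈ s := (Finset.mem_erase.mp hu).2
    obtain ⟨f, hmap, hidem, hadjf, hleaf⟩ :=
      ih (n-1) (by omega) s' hcard' (by omega) hconn'
    have hvns' : v ∉ s' := by simp [hs']
    have hsub : s' ⊆ s := Finset.erase_subset _ _
    have hins : ∀ w ∈ s, w ≠ v → w ∈ s' := fun w hw hwv => Finset.mem_erase.mpr ⟨hwv, hw⟩
    by_cases hcase : f u = u
    · -- u is a hub: attach v as a leaf of u
      refine ⟨fun x => if x = v then u else f x, ?_, ?_, ?_, ?_⟩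
      · intro w hw
        by_cases hwv : w = v
        · simp [hwv, huS]
        · simp only [if_neg hwv]
          exact hsub (hmap w (hins w hw hwv))
      · intro w hw
        by_cases hwv : w = v
        · simp [hwv, if_neg husv, hcase]
        · simp only [if_neg hwv]
          have h1 := hmap w (hins w hw hwv)
          have h2 : f w ≠ v := fun h => hvns' (h ▸ h1)
          simp only [if_neg h2]
          exact hidem w (hins w hw hwv)
      · intro w hw hne
        by_cases hwv : w = v
        · subst hwv
          simpa [if_neg husv] using hadj
        · simp only [if_neg hwv] at hne ⊢
          exact hadjf w (hins w hw hwv) hne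
      · intro w hw hfix
        by_cases hwv : w = v
        · exfalso; subst hwv; simp only [if_pos rfl] at hfix; exact husv hfix
        · simp only [if_neg hwv] at hfix
          obtain ⟨w', hw', hne', hfw'⟩ := hleaf w (hins w hw hwv) hfix
          have hw'v : w' ≠ v := fun h => hvns' (h ▸ hw')
          exact ⟨w', hsub hw', hne', by simp [if_neg hw'v, hfw']⟩
    · -- u is a leaf of hub h := f u
      set h := f u with hh
      have hhS : h ∈ s' := hmap u hu
      have hhfix : f h = h := hidem u hu
      have hhu : h ≠ u := fun he => hcase he
      have hfu_ne_u : ∀ w ∈ s', f w ≠ u := by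
        intro w hw he
        have := hidem w hw
        rw [he] at this
        exact hcase this
      have hfu_ne_v : ∀ w ∈ s', f w ≠ v := fun w hw he => hvns' (he ▸ hmap w hw)
      have hGhu : G.Adj h u := (hadjf u hu (fun he => hcase he)).symm
      by_cases hcase2 : ∃ w ∈ s', w ≠ h ∧ w ≠ u ∧ f w = h
      · -- h has another leaf: split off the pair {u, v}
        obtain ⟨w0, hw0, hw0h, hw0u, hfw0⟩ := hcase2
        have hw0v : w0 ≠ v := fun he => hvns' (he ▸ hw0)
        refine ⟨fun x => if x = v ∨ x = u then u else f x, ?_, ?_, ?_, ?_⟩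
        · intro w hw
          by_cases hor : w = v ∨ w = u
          · simp only [if_pos hor]; exact huS
          · simp only [if_neg hor]
            push_neg at hor
            exact hsub (hmap w (hins w hw hor.1))
        · intro w hw
          by_cases hor : w = v ∨ w = u
          · simp only [if_pos hor]; simp
          · simp only [if_neg hor]
            push_neg at hor
            have hw' := hins w hw hor.1
            have h1 : ¬ (f w = v ∨ f w = u) := by
              push_neg
              exact ⟨hfu_ne_v w hw', hfu_ne_u w hw'⟩
            simp only [if_neg h1]
            exact hidem w hw'
        · intro w hw hne
          by_cases hor : w = v ∨ w = u
          · simp only [if_pos hor] at hne ⊢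
            rcases hor with rfl | rfl
            · exact hadj
            · exact absurd rfl hne
          · simp only [if_neg hor] at hne ⊢
            push_neg at hor
            exact hadjf w (hins w hw hor.1) hne
        · intro w hw hfix
          by_cases hor : w = v ∨ w = u
          · simp only [if_pos hor] at hfix
            rcases hor with rfl | rfl
            · exact absurd hfix husv
            · refine ⟨v, hv, fun he => husv he.symm, ?_⟩
              simp
          · simp only [if_neg hor] at hfix
            push_neg at hor
            have hw' := hins w hw hor.1
            by_cases hwh : w = h
            · subst hwh
              refine ⟨w0, hsub hw0, hw0h, ?_⟩
              have : ¬ (w0 = v ∨ w0 = u) := by push_neg; exact ⟨hw0v, hw0u⟩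
              simp only [if_neg this]; exact hfw0
            · obtain ⟨w', hw'', hne', hfw'⟩ := hleaf w hw' hfix
              have h1 : w' ≠ v := fun he => hvns' (he ▸ hw'')
              have h2 : w' ≠ u := by
                rintro rfl
                rw [hfw'] at hh
                exact hwh hh.symm
              refine ⟨w', hsub hw'', hne', ?_⟩
              have : ¬ (w' = v ∨ w' = u) := by push_neg; exact ⟨h1, h2⟩
              simp only [if_neg this]; exact hfw'
      · -- u is the only leaf of h: make the path h - u - v a star centered at u
        push_neg at hcase2
        have key : ∀ w ∈ s', w ≠ u → w ≠ h → f w ≠ h := by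
          intro w hw hwu hwh he
          exact (hcase2 w hw hwh hwu) he
        refine ⟨fun x => if x = v ∨ x = u ∨ x = h then u else f x, ?_, ?_, ?_, ?_⟩
        · intro w hw
          by_cases hor : w = v ∨ w = u ∨ w = h
          · simp only [if_pos hor]; exact huS
          · simp only [if_neg hor]
            push_neg at hor
            exact hsub (hmap w (hins w hw hor.1))
        · intro w hw
          by_cases hor : w = v ∨ w = u ∨ w = h
          · simp only [if_pos hor]; simp
          · simp only [if_neg hor]
            push_neg at hor
            have hw' := hins w hw hor.1
            have h1 : ¬ (f w = v ∨ f w = u ∨ f w = h) := by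
              push_neg
              exact ⟨hfu_ne_v w hw', hfu_ne_u w hw', key w hw' hor.2.1 hor.2.2⟩
            simp only [if_neg h1]
            exact hidem w hw'
        · intro w hw hne
          by_cases hor : w = v ∨ w = u ∨ w = h
          · simp only [if_pos hor] at hne ⊢
            rcases hor with rfl | rfl | rfl
            · exact hadj
            · exact absurd rfl hne
            · exact hGhu
          · simp only [if_neg hor] at hne ⊢
            push_neg at hor
            exact hadjf w (hins w hw hor.1) hne
        · intro w hw hfix
          by_cases hor : w = v ∨ w = u ∨ w = h
          · simp only [if_pos hor] at hfix
            rcases hor with rfl | rfl | rfl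
            · exact absurd hfix husv
            · refine ⟨v, hv, fun he => husv he.symm, by simp⟩
            · exact absurd hfix hhu.symm
          · simp only [if_neg hor] at hfix
            push_neg at hor
            have hw' := hins w hw hor.1
            obtain ⟨w', hw'', hne', hfw'⟩ := hleaf w hw' hfix
            have h1 : w' ≠ v := fun he => hvns' (he ▸ hw'')
            have h2 : w' ≠ u := by
              rintro rfl
              rw [hfw'] at hh
              exact hor.2.2 hh.symm
            have h3 : w' ≠ h := by
              rintro rfl
              rw [hhfix] at hfw'
              exact hor.2.2 hfw'.symm
            refine ⟨w', hsub hw'', hne', ?_⟩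
            have : ¬ (w' = v ∨ w' = u ∨ w' = h) := by push_neg; exact ⟨h1, h2, h3⟩
            simp only [if_neg this]; exact hfw'

lemma steps_of_walk [Fintype V] {G : SimpleGraph V} :
    ∀ {u v : V}, G.Walk u v → ∃ n, Steps G Finset.univ n u v := by
  intro u v p
  induction p with
  | nil => exact ⟨0, rfl⟩
  | cons hadj p ihp =>
    obtain ⟨n, hn⟩ := ihp
    exact ⟨1 + n, steps_append ⟨_, rfl, Finset.mem_univ _, Finset.mem_univ _, hadj⟩ hn⟩

end Stmt4Aux

open Stmt4Aux in
/-- every connected graph on at least two vertices has a spanning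
subgraph each of whose connected components is a star with at least two vertices
(a hub adjacent to all other vertices of the component, every edge incident to the hub,
and at least one vertex besides the hub). -/
theorem stmt4 {V : Type*} [Fintype V] (G : SimpleGraph V)
    (hG : G.Connected) (hn : 2 ≤ Fintype.card V) :
    ∃ H : SimpleGraph V, H ≤ G ∧
      ∀ c : H.ConnectedComponent, ∃ hub ∈ c.supp,
        (∃ w ∈ c.supp, w ≠ hub) ∧
        (∀ w ∈ c.supp, w ≠ hub → H.Adj hub w) ∧
        (∀ u v : V, u ∈ c.supp → H.Adj u v → u = hub ∨ v = hub) := by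
  classical
  -- connectivity in the `Steps` sense on `univ`
  have hconn : ∀ u ∈ (Finset.univ : Finset V), ∀ v ∈ (Finset.univ : Finset V),
      ∃ m, Steps G Finset.univ m u v := by
    intro u _ v _
    obtain ⟨p⟩ := hG.preconnected u v
    exact steps_of_walk p
  obtain ⟨f, -, hidem, hadjf, hleaf⟩ :=
    exists_f G (Fintype.card V) Finset.univ (by simp) hn hconn
  simp only [Finset.mem_univ, forall_const, true_and] at hidem hadjf hleaf
  set H : SimpleGraph V := SimpleGraph.fromRel (fun a b => f a = b) with hH
  have hAdj : ∀ a b, H.Adj a b ↔ a ≠ b ∧ (f a = b ∨ f b = a) := by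
    intro a b; rw [hH, SimpleGraph.fromRel_adj]
  -- H ≤ G
  have hle : H ≤ G := by
    intro a b hab
    rw [hAdj] at hab
    obtain ⟨hne, h1 | h2⟩ := hab
    · exact h1 ▸ hadjf a (by rw [h1]; exact hne.symm)
    · exact (h2 ▸ hadjf b (by rw [h2]; exact hne)).symm
  -- f is constant on H-components
  have hfconst : ∀ {a b : V}, H.Reachable a b → f a = f b := by
    intro a b hr
    obtain ⟨p⟩ := hr
    induction p with
    | nil => rfl
    | cons hadj p ihp =>
      rename_i x y z
      rw [← ihp]
      rw [hAdj] at hadj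
      obtain ⟨hne, h1 | h2⟩ := hadj
      · rw [← h1, hidem x]
      · rw [← h2, hidem y]
  have hreach_hub : ∀ a : V, H.Reachable a (f a) := by
    intro a
    by_cases h : f a = a
    · rw [h]
    · exact SimpleGraph.Adj.reachable ((hAdj a (f a)).mpr ⟨fun he => h he.symm, Or.inl rfl⟩)
  refine ⟨H, hle, ?_⟩
  intro c
  refine c.ind fun x => ?_
  refine ⟨f x, ?_, ?_, ?_, ?_⟩
  · rw [SimpleGraph.ConnectedComponent.mem_supp_iff, SimpleGraph.ConnectedComponent.eq]
    exact (hreach_hub x).symm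
  · by_cases hx : f x = x
    · obtain ⟨w, hwx, hfw⟩ := hleaf x hx
      refine ⟨w, ?_, by rw [hx]; exact hwx⟩
      rw [SimpleGraph.ConnectedComponent.mem_supp_iff, SimpleGraph.ConnectedComponent.eq]
      exact (hreach_hub w).trans (by rw [hfw, ← hx])
    · exact ⟨x, by rw [SimpleGraph.ConnectedComponent.mem_supp_iff], fun he => hx he.symm⟩
  · intro w hw hwne
    rw [SimpleGraph.ConnectedComponent.mem_supp_iff, SimpleGraph.ConnectedComponent.eq] at hw
    have : f w = f x := hfconst hw
    exact (hAdj (f x) w).mpr ⟨fun he => hwne he.symm, Or.inr this⟩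
  · intro a b ha hab
    rw [SimpleGraph.ConnectedComponent.mem_supp_iff, SimpleGraph.ConnectedComponent.eq] at ha
    have hfa : f a = f x := hfconst ha
    rw [hAdj] at hab
    obtain ⟨hne, h1 | h2⟩ := hab
    · right; rw [← h1, hfa]
    · left
      have : f a = a := by rw [← h2, hidem b]
      rw [← this, hfa]
end

section
/- Let G be a simple graph with n vertices and let H be a blowup of G with m vertices. If σ' is a multiset of m − n real numbers and A ∈ S(G) is a matrix none of whose diagonal entries belongs to σ', then there exists a matrix A' ∈ S(H) whose multiset of eigenvalues equals spec(A) ∪ σ' (multiset union). -/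
/-- `H` is a (closed) blowup of `G`: each vertex of `G` is replaced by a nonempty clique of
duplicates (the fibers of `f`), with two duplicates of distinct vertices adjacent exactly
when the original vertices are adjacent. -/
def IsBlowup {V W : Type*} (G : SimpleGraph V) (H : SimpleGraph W) : Prop :=
  ∃ f : W → V, Function.Surjective f ∧
    ∀ u w : W, u ≠ w → (H.Adj u w ↔ (f u = f w ∨ G.Adj (f u) (f w)))


open Matrix Polynomial

lemma charpoly_conj_orth {W : Type*} [Fintype W] [DecidableEq W]
    (Q B : Matrix W W ℝ) (hQ : Q * Qᵀ = 1) :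
    (Q * B * Qᵀ).charpoly = B.charpoly := by
  classical
  have hmap : (Q.map (C : ℝ → ℝ[X])) * (Qᵀ.map C) = 1 := by
    have h1 : ((Q * Qᵀ).map (C : ℝ → ℝ[X])) = 1 := by
      rw [hQ]
      ext i j
      by_cases h : i = j <;> simp [h, Matrix.one_apply]
    rw [← h1, Matrix.map_mul]
  have key : charmatrix (Q * B * Qᵀ) = (Q.map C) * charmatrix B * (Qᵀ.map C) := by
    unfold charmatrix
    rw [RingHom.mapMatrix_apply, RingHom.mapMatrix_apply]
    rw [Matrix.mul_sub, Matrix.sub_mul]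
    congr 1
    · rw [((Matrix.scalar_commute (X : ℝ[X]) (fun r => Commute.all _ _)
        (Q.map C)).symm.eq : Q.map C * _ = _), Matrix.mul_assoc, hmap, Matrix.mul_one]
    · rw [← Matrix.map_mul, ← Matrix.map_mul]
  rw [Matrix.charpoly, Matrix.charpoly, key, Matrix.det_mul, Matrix.det_mul]
  have h2 : (Q.map (C:ℝ→ℝ[X])).det * (Qᵀ.map (C:ℝ→ℝ[X])).det = 1 := by
    rw [← Matrix.det_mul, hmap, Matrix.det_one]
  calc (Q.map (C:ℝ→ℝ[X])).det * (charmatrix B).det * (Qᵀ.map C).det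
      = (charmatrix B).det * ((Q.map (C:ℝ→ℝ[X])).det * (Qᵀ.map C).det) := by ring
    _ = (charmatrix B).det := by rw [h2, mul_one]

lemma specM_reindex {W U : Type*} [Fintype W] [DecidableEq W] [Fintype U] [DecidableEq U]
    (e : U ≃ W) (M : Matrix U U ℝ) : specM (Matrix.reindex e e M) = specM M := by
  unfold specM
  rw [Matrix.charpoly_reindex]

lemma specM_fromBlocks {U T : Type*} [Fintype U] [DecidableEq U] [Fintype T] [DecidableEq T]
    (M : Matrix U U ℝ) (N : Matrix U T ℝ) (D : Matrix T T ℝ) :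
    specM (Matrix.fromBlocks M N 0 D) = specM M + specM D := by
  unfold specM
  rw [Matrix.charpoly_fromBlocks_zero₂₁, Polynomial.roots_mul]
  exact mul_ne_zero (Matrix.charpoly_monic M).ne_zero (Matrix.charpoly_monic D).ne_zero

lemma specM_unique {U : Type*} [Unique U] [Fintype U] [DecidableEq U] (M : Matrix U U ℝ) :
    specM M = {M default default} := by
  unfold specM
  have h : M.charpoly = X - C (M default default) := by
    rw [Matrix.charpoly, Matrix.det_unique, Matrix.charmatrix_apply_eq]
  rw [h, Polynomial.roots_X_sub_C]

def splitPair {W : Type*} [DecidableEq W] (w₁ w₂ : W) (hne : w₁ ≠ w₂) :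
    (Fin 2 ⊕ {w : W // ¬(w = w₁ ∨ w = w₂)}) ≃ W where
  toFun := Sum.elim (fun i => if i = 0 then w₁ else w₂) Subtype.val
  invFun w := if h1 : w = w₁ then Sum.inl 0 else if h2 : w = w₂ then Sum.inl 1 else
    Sum.inr ⟨w, by tauto⟩
  left_inv x := by
    rcases x with i | u
    · fin_cases i <;> simp [hne, Ne.symm hne]
    · have h1 : ¬ u.val = w₁ := fun h => u.2 (Or.inl h)
      have h2 : ¬ u.val = w₂ := fun h => u.2 (Or.inr h)
      simp [h1, h2]
  right_inv w := by
    by_cases h1 : w = w₁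
    · simp [h1]
    · by_cases h2 : w = w₂ <;> simp [h1, h2, Ne.symm hne]

lemma splitPair_symm_fst {W : Type*} [DecidableEq W] (w₁ w₂ : W) (hne : w₁ ≠ w₂) :
    (splitPair w₁ w₂ hne).symm w₁ = Sum.inl 0 := by
  rw [Equiv.symm_apply_eq]; simp [splitPair]

lemma splitPair_symm_snd {W : Type*} [DecidableEq W] (w₁ w₂ : W) (hne : w₁ ≠ w₂) :
    (splitPair w₁ w₂ hne).symm w₂ = Sum.inl 1 := by
  rw [Equiv.symm_apply_eq]; simp [splitPair]

lemma splitPair_symm_other {W : Type*} [DecidableEq W] (w₁ w₂ : W) (hne : w₁ ≠ w₂)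
    (w : W) (h : ¬(w = w₁ ∨ w = w₂)) :
    (splitPair w₁ w₂ hne).symm w = Sum.inr ⟨w, h⟩ := by
  rw [Equiv.symm_apply_eq]; simp [splitPair]

def splitOne {W : Type*} [DecidableEq W] (w₂ : W) :
    ({w : W // w ≠ w₂} ⊕ Unit) ≃ W where
  toFun := Sum.elim Subtype.val fun _ => w₂
  invFun w := if h : w = w₂ then Sum.inr () else Sum.inl ⟨w, h⟩
  left_inv x := by
    rcases x with u | u
    · simp [u.2]
    · simp
  right_inv w := by by_cases h : w = w₂ <;> simp [h]

lemma splitOne_symm_self {W : Type*} [DecidableEq W] (w₂ : W) :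
    (splitOne w₂).symm w₂ = Sum.inr () := by
  rw [Equiv.symm_apply_eq]; simp [splitOne]

lemma splitOne_symm_other {W : Type*} [DecidableEq W] (w₂ : W) (w : W) (h : w ≠ w₂) :
    (splitOne w₂).symm w = Sum.inl ⟨w, h⟩ := by
  rw [Equiv.symm_apply_eq]; simp [splitOne]

lemma reindex_mul {U W : Type*} [Fintype U] [Fintype W] [DecidableEq U] [DecidableEq W]
    (e : U ≃ W) (M N : Matrix U U ℝ) :
    Matrix.reindex e e M * Matrix.reindex e e N = Matrix.reindex e e (M * N) := by
  rw [Matrix.reindex_apply, Matrix.reindex_apply, Matrix.reindex_apply,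
    Matrix.submatrix_mul_equiv]

lemma reindex_transpose {U W : Type*} [DecidableEq U] [DecidableEq W]
    (e : U ≃ W) (M : Matrix U U ℝ) :
    (Matrix.reindex e e M)ᵀ = Matrix.reindex e e Mᵀ := by
  rw [Matrix.reindex_apply, Matrix.reindex_apply, Matrix.transpose_submatrix]

lemma exists_t (a lam : ℝ) (hal : a ≠ lam) (s : Finset ℝ) :
    ∃ t : ℝ, 0 < t ∧ t < 1 ∧ (t*a + (1-t)*lam) ∉ s ∧ ((1-t)*a + t*lam) ∉ s := by
  have hinj1 : Function.Injective (fun t : ℝ => t*a + (1-t)*lam) := by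
    intro x y hxy
    simp only at hxy
    have h2 : (x - y) * (a - lam) = 0 := by nlinarith [hxy]
    rcases mul_eq_zero.mp h2 with h | h
    · linarith
    · exact absurd (by linarith) hal
  have hinj2 : Function.Injective (fun t : ℝ => (1-t)*a + t*lam) := by
    intro x y hxy
    simp only at hxy
    have h2 : (x - y) * (a - lam) = 0 := by nlinarith [hxy]
    rcases mul_eq_zero.mp h2 with h | h
    · linarith
    · exact absurd (by linarith) hal
  have hfin : (((fun t : ℝ => t*a + (1-t)*lam) ⁻¹' ↑s) ∪
      ((fun t : ℝ => (1-t)*a + t*lam) ⁻¹' ↑s)).Finite :=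
    ((s.finite_toSet.preimage hinj1.injOn).union (s.finite_toSet.preimage hinj2.injOn))
  obtain ⟨t, ht, htn⟩ := ((Set.Ioo_infinite (show (0:ℝ) < 1 by norm_num)).diff hfin).nonempty
  exact ⟨t, ht.1, ht.2, fun h => htn (Set.mem_union_left _ h),
    fun h => htn (Set.mem_union_right _ h)⟩

universe u v

set_option maxHeartbeats 1000000 in
lemma key {V : Type u} [Fintype V] [DecidableEq V] (G : SimpleGraph V) (A : Matrix V V ℝ)
    (hA : inS G A) :
    ∀ (n : ℕ) {W : Type v} [Fintype W] [DecidableEq W] (H : SimpleGraph W) (f : W → V),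
      Function.Surjective f →
      (∀ u w : W, u ≠ w → (H.Adj u w ↔ (f u = f w ∨ G.Adj (f u) (f w)))) →
      ∀ (σ' : Multiset ℝ) (s : Finset ℝ), σ'.card = n →
      σ'.card + Fintype.card V = Fintype.card W →
      (∀ v, A v v ∉ σ') → (∀ v, A v v ∉ s) →
      ∃ A' : Matrix W W ℝ, inS H A' ∧ specM A' = specM A + σ' ∧ ∀ w, A' w w ∉ s := by
  intro n
  induction n with
  | zero =>
    intro W _ _ H f hf hadj σ' s hn hcard hd hs
    have hσ : σ' = 0 := Multiset.card_eq_zero.mp hn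
    subst hσ
    have hb : Function.Bijective f :=
      (Fintype.bijective_iff_surjective_and_card f).mpr ⟨hf, by simpa using hcard.symm⟩
    refine ⟨A.submatrix f f, ⟨?_, ?_⟩, ?_, ?_⟩
    · rw [Matrix.IsSymm, Matrix.transpose_submatrix, hA.1.eq]
    · intro i j hij
      have hfij : f i ≠ f j := fun h => hij (hb.1 h)
      show A (f i) (f j) ≠ 0 ↔ H.Adj i j
      rw [hA.2 (f i) (f j) hfij, hadj i j hij]
      constructor
      · exact fun h => Or.inr h
      · rintro (h | h)
        · exact absurd h hfij
        · exact h
    · have h1 : A.submatrix f f =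
          Matrix.reindex (Equiv.ofBijective f hb).symm (Equiv.ofBijective f hb).symm A := by
        rw [Matrix.reindex_apply, Equiv.symm_symm]
        rfl
      rw [h1, specM_reindex, add_zero]
    · intro w; exact hs (f w)
  | succ n IH =>
    intro W _ _ H f hf hadj σ' s hn hcard hd hs
    obtain ⟨lam, hlam⟩ := (Multiset.card_pos_iff_exists_mem (s := σ')).mp (by omega)
    obtain ⟨w₁, w₂, hw12, hff⟩ := Fintype.exists_ne_map_eq_of_card_lt f (by omega)
    have hWpos : 0 < Fintype.card W := Fintype.card_pos_iff.mpr ⟨w₂⟩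
    have hcardW' : Fintype.card {w : W // w ≠ w₂} + 1 = Fintype.card W := by
      have h1 := Fintype.card_subtype_compl (fun w : W => w = w₂)
      rw [Fintype.card_subtype_eq w₂] at h1
      have h2 : 1 ≤ Fintype.card W := hWpos
      rw [h1]
      omega
    -- apply IH
    obtain ⟨A'', hA''S, hA''spec, hA''diag⟩ :=
      IH (H.comap (Subtype.val : {w : W // w ≠ w₂} → W)) (fun w => f w.val)
        (by -- surjective
          intro v
          obtain ⟨w, hw⟩ := hf v
          by_cases h : w = w₂
          · exact ⟨⟨w₁, hw12⟩, hff.trans (h ▸ hw)⟩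
          · exact ⟨⟨w, h⟩, hw⟩)
        (by -- adjacency
          intro u w huw
          have : u.val ≠ w.val := fun h => huw (Subtype.ext h)
          simpa [SimpleGraph.comap_adj] using hadj u.val w.val this)
        (σ'.erase lam) (insert lam s)
        (by rw [Multiset.card_erase_of_mem hlam, hn]; rfl)
        (by
          have h1 : Multiset.card (σ'.erase lam) = n := by
            rw [Multiset.card_erase_of_mem hlam, hn]; rfl
          omega)
        (fun v h => hd v (Multiset.mem_of_mem_erase h))
        (by
          intro v hv
          rcases Finset.mem_insert.mp hv with h | h
          · exact hd v (h ▸ hlam)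
          · exact hs v h)
    -- key quantities
    obtain ⟨a, ha⟩ : ∃ a : ℝ, a = A'' ⟨w₁, hw12⟩ ⟨w₁, hw12⟩ := ⟨_, rfl⟩
    have halam : a ≠ lam ∧ a ∉ s := by
      have h := hA''diag ⟨w₁, hw12⟩
      rw [← ha] at h
      rw [Finset.mem_insert] at h
      push_neg at h
      exact h
    obtain ⟨t, ht0, ht1, hts1, hts2⟩ := exists_t a lam halam.1 s
    obtain ⟨c, hc⟩ : ∃ c : ℝ, c = Real.sqrt t := ⟨_, rfl⟩
    obtain ⟨sn, hsn⟩ : ∃ sn : ℝ, sn = Real.sqrt (1 - t) := ⟨_, rfl⟩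
    have hc2 : c^2 = t := by rw [hc]; exact Real.sq_sqrt ht0.le
    have hsn2 : sn^2 = 1 - t := by rw [hsn]; exact Real.sq_sqrt (by linarith)
    have hc0 : c ≠ 0 := by
      rw [hc]; exact ne_of_gt (Real.sqrt_pos.mpr ht0)
    have hsn0 : sn ≠ 0 := by
      rw [hsn]; exact ne_of_gt (Real.sqrt_pos.mpr (by linarith))
    -- matrices
    obtain ⟨row, hrow⟩ : ∃ r : {w : W // ¬(w = w₁ ∨ w = w₂)} → ℝ,
        r = fun u => A'' ⟨w₁, hw12⟩ ⟨u.val, fun h => u.2 (Or.inr h)⟩ := ⟨_, rfl⟩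
    obtain ⟨B0, hB0⟩ : ∃ M : Matrix {w : W // ¬(w = w₁ ∨ w = w₂)}
        {w : W // ¬(w = w₁ ∨ w = w₂)} ℝ,
        M = fun u v => A'' ⟨u.val, fun h => u.2 (Or.inr h)⟩ ⟨v.val, fun h => v.2 (Or.inr h)⟩ :=
      ⟨_, rfl⟩
    obtain ⟨Bp, hBp⟩ : ∃ M : Matrix (Fin 2) (Fin 2) ℝ, M = !![a, 0; 0, lam] := ⟨_, rfl⟩
    obtain ⟨Bv, hBv⟩ : ∃ M : Matrix (Fin 2) {w : W // ¬(w = w₁ ∨ w = w₂)} ℝ,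
        M = fun i u => if i = 0 then row u else 0 := ⟨_, rfl⟩
    obtain ⟨R, hR⟩ : ∃ M : Matrix (Fin 2) (Fin 2) ℝ, M = !![c, -sn; sn, c] := ⟨_, rfl⟩
    obtain ⟨P, hP⟩ : ∃ M : Matrix (Fin 2) (Fin 2) ℝ,
        M = !![c*c*a + sn*sn*lam, c*sn*a - sn*c*lam;
               sn*c*a - c*sn*lam, sn*sn*a + c*c*lam] := ⟨_, rfl⟩
    obtain ⟨RV, hRV⟩ : ∃ M : Matrix (Fin 2) {w : W // ¬(w = w₁ ∨ w = w₂)} ℝ,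
        M = fun i u => ![c, sn] i * row u := ⟨_, rfl⟩
    have hRBp : R * Bp * Rᵀ = P := by
      ext i j
      fin_cases i <;> fin_cases j <;>
        simp [hR, hBp, hP, Matrix.mul_apply, Fin.sum_univ_two,
          Matrix.vecHead, Matrix.vecTail] <;> ring
    have hRBv : R * Bv = RV := by
      ext i u
      rw [Matrix.mul_apply]
      fin_cases i <;> simp [hR, hBv, hRV, Matrix.mul_apply, Fin.sum_univ_two,
        Matrix.vecHead, Matrix.vecTail]
    have hRR : R * Rᵀ = 1 := by
      ext i j
      fin_cases i <;> fin_cases j <;>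
        simp [hR, Matrix.mul_apply, Fin.sum_univ_two, Matrix.one_apply,
          Matrix.vecHead, Matrix.vecTail] <;>
        nlinarith [hc2, hsn2]
    -- the orthogonal conjugator
    have hQorth : Matrix.reindex (splitPair w₁ w₂ hw12) (splitPair w₁ w₂ hw12)
          (Matrix.fromBlocks R 0 0 (1 : Matrix {w : W // ¬(w = w₁ ∨ w = w₂)}
            {w : W // ¬(w = w₁ ∨ w = w₂)} ℝ)) *
        (Matrix.reindex (splitPair w₁ w₂ hw12) (splitPair w₁ w₂ hw12)
          (Matrix.fromBlocks R 0 0 1))ᵀ = 1 := by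
      rw [reindex_transpose, Matrix.fromBlocks_transpose, reindex_mul]
      simp only [Matrix.transpose_zero, Matrix.transpose_one]
      rw [Matrix.fromBlocks_multiply]
      simp only [Matrix.mul_zero, Matrix.zero_mul, Matrix.mul_one, Matrix.one_mul,
        add_zero, zero_add, hRR]
      rw [Matrix.fromBlocks_one, Matrix.reindex_apply, Matrix.submatrix_one_equiv]
    -- conjugation identity
    have hQB : Matrix.reindex (splitPair w₁ w₂ hw12) (splitPair w₁ w₂ hw12)
          (Matrix.fromBlocks R 0 0 1) *
        Matrix.reindex (splitPair w₁ w₂ hw12) (splitPair w₁ w₂ hw12)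
          (Matrix.fromBlocks Bp Bv Bvᵀ B0) *
        (Matrix.reindex (splitPair w₁ w₂ hw12) (splitPair w₁ w₂ hw12)
          (Matrix.fromBlocks R 0 0 1))ᵀ =
        Matrix.reindex (splitPair w₁ w₂ hw12) (splitPair w₁ w₂ hw12)
          (Matrix.fromBlocks P RV RVᵀ B0) := by
      rw [reindex_transpose, Matrix.fromBlocks_transpose, reindex_mul, reindex_mul]
      congr 1
      rw [Matrix.fromBlocks_multiply, Matrix.fromBlocks_multiply]
      simp only [Matrix.transpose_zero, Matrix.mul_zero, Matrix.zero_mul, Matrix.mul_one,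
        Matrix.one_mul, add_zero, zero_add, Matrix.transpose_one]
      rw [hRBv, hRBp]
      congr 1
      rw [← hRBv, Matrix.transpose_mul]
    -- alternative block form for spectrum
    have hBalt : Matrix.reindex (splitPair w₁ w₂ hw12) (splitPair w₁ w₂ hw12)
          (Matrix.fromBlocks Bp Bv Bvᵀ B0) =
        Matrix.reindex (splitOne w₂) (splitOne w₂)
          (Matrix.fromBlocks A'' 0 0 (Matrix.of fun _ _ => lam : Matrix Unit Unit ℝ)) := by
      ext u w
      rw [Matrix.reindex_apply, Matrix.reindex_apply, Matrix.submatrix_apply,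
        Matrix.submatrix_apply]
      by_cases hu1 : u = w₁
      · rw [hu1]
        rw [splitPair_symm_fst, splitOne_symm_other _ _ hw12]
        by_cases hw1 : w = w₁
        · rw [hw1]
          rw [splitPair_symm_fst, splitOne_symm_other _ _ hw12]
          simp only [Matrix.fromBlocks_apply₁₁, Matrix.fromBlocks_apply₁₂, Matrix.fromBlocks_apply₂₁, Matrix.fromBlocks_apply₂₂]
          simp [hBp, ← ha]
        · by_cases hw2 : w = w₂
          · rw [hw2]
            rw [splitPair_symm_snd, splitOne_symm_self]
            simp only [Matrix.fromBlocks_apply₁₁, Matrix.fromBlocks_apply₁₂, Matrix.fromBlocks_apply₂₁, Matrix.fromBlocks_apply₂₂]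
            simp [hBp]
          · rw [splitPair_symm_other w₁ w₂ hw12 w (fun h => h.elim hw1 hw2),
              splitOne_symm_other w₂ w hw2]
            simp only [Matrix.fromBlocks_apply₁₁, Matrix.fromBlocks_apply₁₂, Matrix.fromBlocks_apply₂₁, Matrix.fromBlocks_apply₂₂]
            simp [hBv, hrow]
      · by_cases hu2 : u = w₂
        · rw [hu2]
          rw [splitPair_symm_snd, splitOne_symm_self]
          by_cases hw1 : w = w₁
          · rw [hw1]
            rw [splitPair_symm_fst, splitOne_symm_other _ _ hw12]
            simp only [Matrix.fromBlocks_apply₁₁, Matrix.fromBlocks_apply₁₂, Matrix.fromBlocks_apply₂₁, Matrix.fromBlocks_apply₂₂]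
            simp [hBp]
          · by_cases hw2 : w = w₂
            · rw [hw2]
              rw [splitPair_symm_snd, splitOne_symm_self]
              simp only [Matrix.fromBlocks_apply₁₁, Matrix.fromBlocks_apply₁₂, Matrix.fromBlocks_apply₂₁, Matrix.fromBlocks_apply₂₂]
              simp [hBp]
            · rw [splitPair_symm_other w₁ w₂ hw12 w (fun h => h.elim hw1 hw2),
              splitOne_symm_other w₂ w hw2]
              simp only [Matrix.fromBlocks_apply₁₁, Matrix.fromBlocks_apply₁₂, Matrix.fromBlocks_apply₂₁, Matrix.fromBlocks_apply₂₂, Matrix.transpose_apply]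
              simp [hBv]
        · rw [splitPair_symm_other w₁ w₂ hw12 u (fun h => h.elim hu1 hu2),
            splitOne_symm_other w₂ u hu2]
          by_cases hw1 : w = w₁
          · rw [hw1]
            rw [splitPair_symm_fst, splitOne_symm_other _ _ hw12]
            simp only [Matrix.fromBlocks_apply₂₁, Matrix.fromBlocks_apply₁₁,
              Matrix.transpose_apply]
            simp only [hBv, hrow, if_pos rfl]
            exact hA''S.1.apply _ _
          · by_cases hw2 : w = w₂
            · rw [hw2]
              rw [splitPair_symm_snd, splitOne_symm_self]
              simp only [Matrix.fromBlocks_apply₁₁, Matrix.fromBlocks_apply₁₂, Matrix.fromBlocks_apply₂₁, Matrix.fromBlocks_apply₂₂, Matrix.transpose_apply]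
              simp [hBv]
            · rw [splitPair_symm_other w₁ w₂ hw12 w (fun h => h.elim hw1 hw2),
                splitOne_symm_other w₂ w hw2]
              simp only [Matrix.fromBlocks_apply₁₁, Matrix.fromBlocks_apply₁₂, Matrix.fromBlocks_apply₂₁, Matrix.fromBlocks_apply₂₂]
              simp [hB0]
    have hspecB : specM (Matrix.reindex (splitPair w₁ w₂ hw12) (splitPair w₁ w₂ hw12)
          (Matrix.fromBlocks Bp Bv Bvᵀ B0)) = specM A'' + {lam} := by
      rw [hBalt, specM_reindex, specM_fromBlocks]
      congr 1
      rw [specM_unique]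
      rfl
    -- the final matrix
    refine ⟨Matrix.reindex (splitPair w₁ w₂ hw12) (splitPair w₁ w₂ hw12)
      (Matrix.fromBlocks P RV RVᵀ B0), ⟨?_, ?_⟩, ?_, ?_⟩
    · -- symmetry
      have hPsymm : Pᵀ = P := by
        ext i j
        fin_cases i <;> fin_cases j <;>
          simp [hP, Matrix.vecHead, Matrix.vecTail] <;> ring
      have hB0symm : B0ᵀ = B0 := by
        ext u v
        rw [Matrix.transpose_apply, hB0]
        exact hA''S.1.apply _ _
      rw [Matrix.IsSymm, reindex_transpose, Matrix.fromBlocks_transpose,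
        Matrix.transpose_transpose, hPsymm, hB0symm]
    · -- pattern
      intro i j hij
      rw [Matrix.reindex_apply, Matrix.submatrix_apply]
      have hApat : ∀ (p q : {w : W // w ≠ w₂}), p.val ≠ q.val →
          (¬ A'' p q = 0 ↔ H.Adj p.val q.val) := by
        intro p q hpq
        exact hA''S.2 p q (fun h => hpq (congrArg Subtype.val h))
      have hAdjw2 : ∀ w : W, ¬ w = w₁ → ¬ w = w₂ → (H.Adj w₂ w ↔ H.Adj w₁ w) := by
        intro w hcw1 hcw2
        rw [hadj w₂ w (fun h => hcw2 h.symm), hadj w₁ w (fun h => hcw1 h.symm), ← hff]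
      have hadj12 : H.Adj w₁ w₂ := (hadj w₁ w₂ hw12).mpr (Or.inl hff)
      have hPoff1 : c*sn*a - sn*c*lam ≠ 0 := by
        have h : c*sn*a - sn*c*lam = c*sn*(a - lam) := by ring
        rw [h]
        exact mul_ne_zero (mul_ne_zero hc0 hsn0) (sub_ne_zero.mpr halam.1)
      have hPoff2 : sn*c*a - c*sn*lam ≠ 0 := by
        have h : sn*c*a - c*sn*lam = c*sn*(a - lam) := by ring
        rw [h]
        exact mul_ne_zero (mul_ne_zero hc0 hsn0) (sub_ne_zero.mpr halam.1)
      by_cases hi1 : i = w₁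
      · rw [hi1]
        rw [splitPair_symm_fst]
        by_cases hj2 : j = w₂
        · rw [hj2]
          rw [splitPair_symm_snd]
          simp only [Matrix.fromBlocks_apply₁₁, hP]
          simpa using iff_of_true hPoff1 hadj12
        · have hj1 : ¬ j = w₁ := fun h => hij (hi1 ▸ h.symm ▸ rfl)
          rw [splitPair_symm_other w₁ w₂ hw12 j (fun h => h.elim hj1 hj2)]
          rw [Matrix.fromBlocks_apply₁₂]
          simp only [Matrix.fromBlocks_apply₁₂, hRV, Matrix.cons_val_zero, ne_eq,
            mul_eq_zero, not_or, hrow]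
          rw [and_iff_right hc0]
          exact hApat ⟨w₁, hw12⟩ ⟨j, hj2⟩ (fun h => hj1 h.symm)
      · by_cases hi2 : i = w₂
        · rw [hi2]
          rw [splitPair_symm_snd]
          by_cases hj1 : j = w₁
          · rw [hj1]
            rw [splitPair_symm_fst]
            simp only [Matrix.fromBlocks_apply₁₁, hP]
            simpa using iff_of_true hPoff2 hadj12.symm
          · have hj2 : ¬ j = w₂ := fun h => hij (hi2 ▸ h.symm ▸ rfl)
            rw [splitPair_symm_other w₁ w₂ hw12 j (fun h => h.elim hj1 hj2)]
            rw [Matrix.fromBlocks_apply₁₂]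
            simp only [Matrix.fromBlocks_apply₁₂, hRV, Matrix.cons_val_one,
              Matrix.head_cons, Matrix.cons_val_zero, ne_eq, mul_eq_zero, not_or, hrow]
            rw [and_iff_right hsn0]
            exact (hApat ⟨w₁, hw12⟩ ⟨j, hj2⟩ (fun h => hj1 h.symm)).trans
              (hAdjw2 j hj1 hj2).symm
        · rw [splitPair_symm_other w₁ w₂ hw12 i (fun h => h.elim hi1 hi2)]
          by_cases hj1 : j = w₁
          · rw [hj1]
            rw [splitPair_symm_fst]
            rw [Matrix.fromBlocks_apply₂₁, Matrix.transpose_apply]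
            simp only [Matrix.fromBlocks_apply₂₁, Matrix.transpose_apply, hRV,
              Matrix.cons_val_zero, ne_eq, mul_eq_zero, not_or, hrow]
            rw [and_iff_right hc0]
            exact (hApat ⟨w₁, hw12⟩ ⟨i, hi2⟩ (fun h => hi1 h.symm)).trans
              (H.adj_comm w₁ i)
          · by_cases hj2 : j = w₂
            · rw [hj2]
              rw [splitPair_symm_snd]
              rw [Matrix.fromBlocks_apply₂₁, Matrix.transpose_apply]
              simp only [Matrix.fromBlocks_apply₂₁, Matrix.transpose_apply, hRV,
                Matrix.cons_val_one, Matrix.head_cons, Matrix.cons_val_zero, ne_eq, mul_eq_zero, not_or, hrow]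
              rw [and_iff_right hsn0]
              exact (hApat ⟨w₁, hw12⟩ ⟨i, hi2⟩ (fun h => hi1 h.symm)).trans
                (((hAdjw2 i hi1 hi2).symm).trans (H.adj_comm w₂ i))
            · rw [splitPair_symm_other w₁ w₂ hw12 j (fun h => h.elim hj1 hj2)]
              simp only [Matrix.fromBlocks_apply₂₂, hB0]
              exact hApat ⟨i, hi2⟩ ⟨j, hj2⟩ hij
    · -- spectrum
      rw [← hQB]
      have h3 : specM (Matrix.reindex (splitPair w₁ w₂ hw12) (splitPair w₁ w₂ hw12)
            (Matrix.fromBlocks R 0 0 1) *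
          Matrix.reindex (splitPair w₁ w₂ hw12) (splitPair w₁ w₂ hw12)
            (Matrix.fromBlocks Bp Bv Bvᵀ B0) *
          (Matrix.reindex (splitPair w₁ w₂ hw12) (splitPair w₁ w₂ hw12)
            (Matrix.fromBlocks R 0 0 1))ᵀ) =
          specM (Matrix.reindex (splitPair w₁ w₂ hw12) (splitPair w₁ w₂ hw12)
            (Matrix.fromBlocks Bp Bv Bvᵀ B0)) := by
        unfold specM
        rw [charpoly_conj_orth _ _ hQorth]
      rw [h3, hspecB, hA''spec, add_assoc]
      congr 1
      rw [add_comm, Multiset.singleton_add, Multiset.cons_erase hlam]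
    · -- diagonal
      intro w
      rw [Matrix.reindex_apply, Matrix.submatrix_apply]
      by_cases hw1 : w = w₁
      · rw [hw1]
        rw [splitPair_symm_fst]
        simp only [Matrix.fromBlocks_apply₁₁]
        rw [hP]
        have : c*c*a + sn*sn*lam = t*a + (1-t)*lam := by
          have h1 : c*c = t := by nlinarith [hc2]
          have h2 : sn*sn = 1 - t := by nlinarith [hsn2]
          rw [h1, h2]
        simpa [this] using hts1
      · by_cases hw2 : w = w₂
        · rw [hw2]
          rw [splitPair_symm_snd]
          simp only [Matrix.fromBlocks_apply₁₁]
          rw [hP]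
          have : sn*sn*a + c*c*lam = (1-t)*a + t*lam := by
            have h1 : c*c = t := by nlinarith [hc2]
            have h2 : sn*sn = 1 - t := by nlinarith [hsn2]
            rw [h1, h2]
          simpa [this] using hts2
        · rw [splitPair_symm_other w₁ w₂ hw12 w (fun h => h.elim hw1 hw2)]
          simp only [Matrix.fromBlocks_apply₂₂]
          rw [hB0]
          exact fun h => hA''diag _ (Finset.mem_insert_of_mem h)

/-- Lemma lem:blowup: if `H` is a blowup of `G`, `σ'` is a multiset of
`|H| - |G|` reals, and `A ∈ S(G)` has no diagonal entry in `σ'`, then some `A' ∈ S(H)`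
has spectrum `spec(A) ∪ σ'`. -/
theorem stmt5 {V W : Type*} [Fintype V] [DecidableEq V] [Fintype W] [DecidableEq W]
    (G : SimpleGraph V) (H : SimpleGraph W) (hblow : IsBlowup G H)
    (σ' : Multiset ℝ) (hcard : σ'.card + Fintype.card V = Fintype.card W)
    (A : Matrix V V ℝ) (hA : inS G A) (hdiag : ∀ i, A i i ∉ σ') :
    ∃ A' : Matrix W W ℝ, inS H A' ∧ specM A' = specM A + σ' := by
  obtain ⟨f, hf, hadj⟩ := hblow
  obtain ⟨A', h1, h2, _⟩ := key G A hA σ'.card H f hf hadj σ' ∅ rfl hcard hdiag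
    (fun v h => absurd h (Finset.notMem_empty _))
  exact ⟨A', h1, h2⟩
end

section
/- Let G, H, H' be simple graphs on the same vertex set with E(G) ⊆ E(H) ⊆ E(H'), and let A ∈ S(G) have the strong spectral property with respect to H. Then for every ε > 0 there exists a matrix A' ∈ S^cl(H') such that: A' has the same multiset of eigenvalues as A; ‖A − A'‖ < ε; A' has the strong spectral property with respect to H'; and every entry of A' corresponding to an edge in E(H') \ E(H) is nonzero. -/
namespace Stmt10Aux

open Matrix

set_option linter.unusedSectionVars false

attribute [local instance] Classical.propDecidable

variable {n : Type*} [Fintype n] [DecidableEq n]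

def tp (X Y : Matrix n n ℝ) : ℝ := ∑ i, ∑ j, X i j * Y i j


lemma tp_eq_trace (X Y : Matrix n n ℝ) : tp X Y = (Xᵀ * Y).trace := by
  unfold tp
  rw [Finset.sum_comm]
  simp [Matrix.trace, Matrix.mul_apply, Matrix.diag, Matrix.transpose_apply]

lemma tp_transpose (X Y : Matrix n n ℝ) : tp Xᵀ Y = tp X Yᵀ := by
  unfold tp
  rw [Finset.sum_comm]
  simp [Matrix.transpose_apply]

lemma eq_zero_of_tp_self (X : Matrix n n ℝ) (h : tp X X = 0) : X = 0 := by
  unfold tp at h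
  have h1 : ∀ i ∈ Finset.univ, (∑ j, X i j * X i j) = 0 := by
    rw [Finset.sum_eq_zero_iff_of_nonneg] at h
    · exact h
    · exact fun i _ => Finset.sum_nonneg fun j _ => mul_self_nonneg _
  ext i j
  have h2 := (Finset.sum_eq_zero_iff_of_nonneg (fun j _ => mul_self_nonneg (X i j))).1
    (h1 i (Finset.mem_univ i)) j (Finset.mem_univ j)
  simpa using mul_self_eq_zero.mp h2

lemma tp_comm_identity (A K X : Matrix n n ℝ) (hA : Aᵀ = A) :
    tp (K * A - A * K) X = tp K (X * A - A * X) := by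
  rw [tp_eq_trace, tp_eq_trace]
  rw [Matrix.transpose_sub, Matrix.transpose_mul, Matrix.transpose_mul, hA]
  rw [Matrix.sub_mul, Matrix.mul_sub, Matrix.trace_sub, Matrix.trace_sub]
  congr 1
  · rw [Matrix.mul_assoc, Matrix.trace_mul_comm, Matrix.mul_assoc]
  · rw [Matrix.mul_assoc]



/-- symmetric matrices vanishing on the edges of `H` and on the diagonal -/
def WS (H : SimpleGraph n) : Submodule ℝ (Matrix n n ℝ) where
  carrier := {X | X.IsSymm ∧ (∀ i j, H.Adj i j → X i j = 0) ∧ ∀ i, X i i = 0}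
  add_mem' := by
    rintro X Y ⟨hX1, hX2, hX3⟩ ⟨hY1, hY2, hY3⟩
    refine ⟨?_, fun i j h => ?_, fun i => ?_⟩
    · simp [Matrix.IsSymm, Matrix.transpose_add, hX1.eq, hY1.eq]
    · simp [Matrix.add_apply, hX2 i j h, hY2 i j h]
    · simp [Matrix.add_apply, hX3 i, hY3 i]
  zero_mem' := by
    refine ⟨?_, fun i j _ => rfl, fun i => rfl⟩
    simp [Matrix.IsSymm]
  smul_mem' := by
    rintro c X ⟨hX1, hX2, hX3⟩
    refine ⟨?_, fun i j h => ?_, fun i => ?_⟩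
    · simp [Matrix.IsSymm, Matrix.transpose_smul, hX1.eq]
    · simp [Matrix.smul_apply, hX2 i j h]
    · simp [Matrix.smul_apply, hX3 i]

lemma mem_WS {H : SimpleGraph n} {X : Matrix n n ℝ} :
    X ∈ WS H ↔ X.IsSymm ∧ (∀ i j, H.Adj i j → X i j = 0) ∧ ∀ i, X i i = 0 := Iff.rfl

noncomputable def projFun (H : SimpleGraph n) (Y : Matrix n n ℝ) : Matrix n n ℝ :=
  Matrix.of fun i j => if H.Adj i j ∨ i = j then 0 else (Y i j + Y j i) / 2

lemma projFun_apply (H : SimpleGraph n) (Y : Matrix n n ℝ) (i j : n) :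
    projFun H Y i j = if H.Adj i j ∨ i = j then 0 else (Y i j + Y j i) / 2 := rfl

lemma projFun_mem (H : SimpleGraph n) (Y : Matrix n n ℝ) : projFun H Y ∈ WS H := by
  refine ⟨?_, fun i j h => ?_, fun i => ?_⟩
  · ext i j
    simp only [Matrix.transpose_apply, projFun_apply]
    by_cases h : H.Adj j i ∨ j = i
    · rw [if_pos h, if_pos]
      rcases h with h | h
      · exact Or.inl (H.adj_symm h)
      · exact Or.inr h.symm
    · rw [if_neg h, if_neg]
      · ring
      · rintro (h' | h')
        · exact h (Or.inl (H.adj_symm h'))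
        · exact h (Or.inr h'.symm)
  · simp [projFun_apply, h]
  · simp [projFun_apply]

noncomputable def projL (H : SimpleGraph n) : Matrix n n ℝ →ₗ[ℝ] WS H where
  toFun Y := ⟨projFun H Y, projFun_mem H Y⟩
  map_add' X Y := by
    apply Subtype.ext
    ext i j
    by_cases h : H.Adj i j ∨ i = j <;>
      simp [projFun_apply, h, Matrix.add_apply] <;> ring
  map_smul' c X := by
    apply Subtype.ext
    ext i j
    by_cases h : H.Adj i j ∨ i = j <;>
      simp [projFun_apply, h, Matrix.smul_apply] <;> ring

lemma coe_projL (H : SimpleGraph n) (Y : Matrix n n ℝ) :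
    ((projL H Y : WS H) : Matrix n n ℝ) = projFun H Y := rfl

lemma tp_projFun (H : SimpleGraph n) (Y X : Matrix n n ℝ) (hX : X ∈ WS H) :
    tp (projFun H Y) X = tp Y X := by
  obtain ⟨hX1, hX2, hX3⟩ := hX
  have key : ∀ i j, projFun H Y i j * X i j = (Y i j * X i j) / 2 + (Y j i * X i j) / 2 := by
    intro i j
    by_cases h : H.Adj i j ∨ i = j
    · have hX0 : X i j = 0 := by
        rcases h with h | h
        · exact hX2 i j h
        · subst h; exact hX3 i
      simp [projFun_apply, h, hX0]
    · rw [projFun_apply, if_neg h]; ring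
  unfold tp
  simp_rw [key, Finset.sum_add_distrib]
  have h2 : ∑ i, ∑ j, Y j i * X i j / 2 = ∑ i, ∑ j, Y i j * X i j / 2 := by
    rw [Finset.sum_comm]
    refine Finset.sum_congr rfl fun i _ => Finset.sum_congr rfl fun j _ => ?_
    rw [hX1.apply i j]
  rw [h2, ← Finset.sum_add_distrib]
  refine Finset.sum_congr rfl fun i _ => ?_
  rw [← Finset.sum_add_distrib]
  refine Finset.sum_congr rfl fun j _ => by ring


/-- the duality map given by the trace pairing on `WS H` -/
noncomputable def JW (H : SimpleGraph n) : WS H →ₗ[ℝ] Module.Dual ℝ (WS H) where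
  toFun X :=
    { toFun := fun w => tp (w : Matrix n n ℝ) (X : Matrix n n ℝ)
      map_add' := fun u v => by
        simp only [Submodule.coe_add, tp, Matrix.add_apply, add_mul, Finset.sum_add_distrib]
      map_smul' := fun c u => by
        simp only [Submodule.coe_smul, tp, Matrix.smul_apply, smul_eq_mul, RingHom.id_apply,
          Finset.mul_sum]
        exact Finset.sum_congr rfl fun i _ => Finset.sum_congr rfl fun j _ => by ring }
  map_add' X Y := by
    refine LinearMap.ext fun w => ?_
    simp only [LinearMap.coe_mk, AddHom.coe_mk, LinearMap.add_apply, Submodule.coe_add, tp,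
      Matrix.add_apply, mul_add, Finset.sum_add_distrib]
  map_smul' c X := by
    refine LinearMap.ext fun w => ?_
    simp only [LinearMap.coe_mk, AddHom.coe_mk, LinearMap.smul_apply, Submodule.coe_smul, tp,
      Matrix.smul_apply, smul_eq_mul, RingHom.id_apply, Finset.mul_sum]
    exact Finset.sum_congr rfl fun i _ => Finset.sum_congr rfl fun j _ => by ring

lemma JW_surjective (H : SimpleGraph n) : Function.Surjective (JW H) := by
  have hinj : Function.Injective (JW H) := by
    rw [← LinearMap.ker_eq_bot]
    refine LinearMap.ker_eq_bot'.2 fun X hX => ?_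
    have h0 : tp (X : Matrix n n ℝ) (X : Matrix n n ℝ) = 0 := by
      have := congrArg (fun φ : Module.Dual ℝ (WS H) => φ X) hX
      have h' : JW H X X = 0 := by simpa using this
      exact h'
    exact Subtype.ext (eq_zero_of_tp_self _ h0)
  exact (LinearMap.injective_iff_surjective_of_finrank_eq_finrank
    (Subspace.dual_finrank_eq (K := ℝ) (V := WS H)).symm).1 hinj

/-- the candidate derivative, as a plain linear map -/
def dcfL (A : Matrix n n ℝ) : Matrix n n ℝ →ₗ[ℝ] Matrix n n ℝ where
  toFun h := (h - hᵀ) * A - A * (h - hᵀ)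
  map_add' x y := by
    simp only [Matrix.transpose_add]
    noncomm_ring
  map_smul' c x := by
    simp only [Matrix.transpose_smul, RingHom.id_apply, ← smul_sub, Matrix.smul_mul,
      Matrix.mul_smul]

lemma Phi_surjective (H : SimpleGraph n) (A : Matrix n n ℝ) (hA : Aᵀ = A)
    (hssp : ∀ X : Matrix n n ℝ, X.IsSymm → (∀ i j, H.Adj i j → X i j = 0) →
      (∀ i, X i i = 0) → A * X = X * A → X = 0) :
    Function.Surjective ((projL H).comp (dcfL A)) := by
  by_contra hsurj
  have hrange : LinearMap.range ((projL H).comp (dcfL A)) ≠ ⊤ := by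
    rwa [Ne, LinearMap.range_eq_top]
  have hlt : LinearMap.range ((projL H).comp (dcfL A)) < ⊤ := lt_top_iff_ne_top.mpr hrange
  obtain ⟨x, -, hx⟩ := SetLike.exists_of_lt hlt
  set U := LinearMap.range ((projL H).comp (dcfL A)) with hU
  have hπx : U.mkQ x ≠ 0 := by
    simpa [Submodule.Quotient.mk_eq_zero] using hx
  obtain ⟨ψ, hψ⟩ : ∃ ψ : Module.Dual ℝ (WS H ⧸ U), ψ (U.mkQ x) ≠ 0 := by
    by_contra h
    push_neg at h
    exact hπx ((Module.forall_dual_apply_eq_zero_iff ℝ _).1 h)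
  set φ : Module.Dual ℝ (WS H) := ψ ∘ₗ U.mkQ with hφ
  have hφ0 : ∀ h : Matrix n n ℝ, φ ((projL H).comp (dcfL A) h) = 0 := by
    intro h
    have hmem : ((projL H).comp (dcfL A) h) ∈ U := LinearMap.mem_range_self _ h
    have hm : U.mkQ ((projL H ∘ₗ dcfL A) h) = 0 := (Submodule.Quotient.mk_eq_zero U).2 hmem
    show ψ (U.mkQ ((projL H ∘ₗ dcfL A) h)) = 0
    rw [hm, map_zero]
  have hφne : φ ≠ 0 := by
    intro h0
    apply hψ
    have := congrArg (fun f : Module.Dual ℝ (WS H) => f x) h0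
    simpa [hφ] using this
  obtain ⟨X, hX⟩ := JW_surjective H φ
  obtain ⟨hX1, hX2, hX3⟩ := X.2
  set S : Matrix n n ℝ := (X : Matrix n n ℝ) * A - A * (X : Matrix n n ℝ) with hS
  have hkey : ∀ h : Matrix n n ℝ, tp h S - tp hᵀ S = 0 := by
    intro h
    have e1 : φ ((projL H).comp (dcfL A) h) = tp (projFun H ((h - hᵀ) * A - A * (h - hᵀ)))
        (X : Matrix n n ℝ) := by
      rw [← hX]; rfl
    rw [hφ0 h] at e1
    rw [tp_projFun H _ _ X.2] at e1
    rw [tp_comm_identity A (h - hᵀ) (X : Matrix n n ℝ) hA] at e1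
    have e2 : tp (h - hᵀ) S = tp h S - tp hᵀ S := by
      unfold tp
      simp only [Matrix.sub_apply, sub_mul, Finset.sum_sub_distrib]
    rw [← hS] at e1
    rw [e2] at e1
    exact e1.symm
  have hSskew : Sᵀ = -S := by
    rw [hS]
    rw [Matrix.transpose_sub, Matrix.transpose_mul, Matrix.transpose_mul, hA, hX1.eq]
    abel
  have hS0 : S = 0 := by
    have h1 := hkey S
    have h2 : tp Sᵀ S = - tp S S := by
      rw [tp_transpose, hSskew]
      unfold tp
      rw [← Finset.sum_neg_distrib]
      refine Finset.sum_congr rfl fun i _ => ?_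
      rw [← Finset.sum_neg_distrib]
      refine Finset.sum_congr rfl fun j _ => ?_
      simp [Matrix.neg_apply]
    rw [h2, sub_neg_eq_add] at h1
    have : tp S S = 0 := by linarith
    exact eq_zero_of_tp_self S this
  have hcomm : A * (X : Matrix n n ℝ) = (X : Matrix n n ℝ) * A :=
    (sub_eq_zero.1 hS0).symm
  have hX0 : (X : Matrix n n ℝ) = 0 := hssp _ hX1 hX2 hX3 hcomm
  apply hφne
  rw [← hX]
  have : X = 0 := Subtype.ext hX0
  rw [this, map_zero]


/-- similarity invariance of the characteristic polynomial -/
lemma charpoly_conj (P A : Matrix n n ℝ) (hP : IsUnit P) :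
    (P * A * P⁻¹).charpoly = A.charpoly := by
  have hdet : IsUnit P.det := P.isUnit_iff_isUnit_det.mp hP
  have hPP : P * P⁻¹ = 1 := Matrix.mul_nonsing_inv P hdet
  have hc : Matrix.charmatrix (P * A * P⁻¹) =
      P.map Polynomial.C * Matrix.charmatrix A * P⁻¹.map Polynomial.C := by
    unfold Matrix.charmatrix
    simp only [RingHom.mapMatrix_apply]
    rw [Matrix.mul_sub, Matrix.sub_mul]
    congr 1
    · rw [← Matrix.scalar_commute (Polynomial.X) (fun r => Commute.all _ _) (P.map Polynomial.C)]
      rw [Matrix.mul_assoc, ← Matrix.map_mul, hPP, Matrix.map_one _ (map_zero _) (map_one _)]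
      rw [Matrix.mul_one]
    · rw [← Matrix.map_mul, ← Matrix.map_mul]
  unfold Matrix.charpoly
  rw [hc, Matrix.det_mul, Matrix.det_mul]
  have hdet1 : (P.map Polynomial.C).det * (P⁻¹.map Polynomial.C).det = 1 := by
    rw [← Matrix.det_mul, ← Matrix.map_mul, hPP, Matrix.map_one _ (map_zero _) (map_one _),
      Matrix.det_one]
  calc (P.map Polynomial.C).det * (Matrix.charmatrix A).det * (P⁻¹.map Polynomial.C).det
      = (Matrix.charmatrix A).det * ((P.map Polynomial.C).det * (P⁻¹.map Polynomial.C).det) := by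
        ring
    _ = (Matrix.charmatrix A).det := by rw [hdet1, mul_one]

section Normed

attribute [local instance] Matrix.linftyOpSemiNormedRing Matrix.linftyOpNormedRing
  Matrix.linftyOpNormedAlgebra

lemma entry_le_norm (X : Matrix n n ℝ) (i j : n) : |X i j| ≤ ‖X‖ := by
  rw [Matrix.linfty_opNorm_def]
  have h0 : ‖X i j‖₊ ≤ ∑ k, ‖X i k‖₊ :=
    Finset.single_le_sum (f := fun k => ‖X i k‖₊) (fun _ _ => zero_le) (Finset.mem_univ j)
  have h1 : (∑ k, ‖X i k‖₊) ≤ Finset.univ.sup fun a => ∑ k, ‖X a k‖₊ :=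
    Finset.le_sup (f := fun a => ∑ k, ‖X a k‖₊) (Finset.mem_univ i)
  calc |X i j| = (‖X i j‖₊ : ℝ) := by simp [Real.norm_eq_abs]
    _ ≤ _ := by exact_mod_cast h0.trans h1

/-- stability of the SSP under small perturbations -/
lemma sspStable (H' : SimpleGraph n) (A : Matrix n n ℝ)
    (hssp : ∀ X : Matrix n n ℝ, X.IsSymm → (∀ i j, H'.Adj i j → X i j = 0) →
      (∀ i, X i i = 0) → A * X = X * A → X = 0) :
    ∃ η > 0, ∀ B : Matrix n n ℝ, ‖B - A‖ < η →
      ∀ X : Matrix n n ℝ, X.IsSymm → (∀ i j, H'.Adj i j → X i j = 0) →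
        (∀ i, X i i = 0) → B * X = X * B → X = 0 := by
  classical
  set Ψ : WS H' →ₗ[ℝ] Matrix n n ℝ :=
    { toFun := fun X => A * (X : Matrix n n ℝ) - (X : Matrix n n ℝ) * A
      map_add' := fun X Y => by
        simp only [Submodule.coe_add, Matrix.mul_add, Matrix.add_mul]
        abel
      map_smul' := fun c X => by
        simp only [Submodule.coe_smul, Matrix.mul_smul, Matrix.smul_mul, RingHom.id_apply,
          smul_sub] } with hΨ
  have hker : LinearMap.ker Ψ = ⊥ := by
    refine LinearMap.ker_eq_bot'.2 fun X hX => ?_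
    obtain ⟨h1, h2, h3⟩ := X.2
    have hc : A * (X : Matrix n n ℝ) = (X : Matrix n n ℝ) * A := by
      have : A * (X : Matrix n n ℝ) - (X : Matrix n n ℝ) * A = 0 := hX
      exact sub_eq_zero.1 this
    exact Subtype.ext (hssp _ h1 h2 h3 hc)
  obtain ⟨K, hKpos, hK⟩ := Ψ.exists_antilipschitzWith hker
  refine ⟨(K : ℝ)⁻¹ / 2, by positivity, fun B hB X hsym hvan hdiag hcomm => ?_⟩
  by_contra hX0
  have hXmem : X ∈ WS H' := ⟨hsym, hvan, hdiag⟩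
  set x : WS H' := ⟨X, hXmem⟩ with hx
  have hnorm : ‖x‖ = ‖X‖ := rfl
  have hXpos : 0 < ‖X‖ := by
    rw [norm_pos_iff]
    exact hX0
  have h1 : ‖X‖ ≤ (K : ℝ) * ‖Ψ x‖ := by
    have := hK.le_mul_dist x 0
    simpa [dist_eq_norm, hnorm] using this
  have hval : Ψ x = (A - B) * X - X * (A - B) := by
    show A * X - X * A = _
    rw [Matrix.sub_mul, Matrix.mul_sub, hcomm]
    abel
  have h2 : ‖Ψ x‖ ≤ 2 * ‖B - A‖ * ‖X‖ := by
    rw [hval]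
    calc ‖(A - B) * X - X * (A - B)‖ ≤ ‖(A - B) * X‖ + ‖X * (A - B)‖ := norm_sub_le _ _
      _ ≤ ‖A - B‖ * ‖X‖ + ‖X‖ * ‖A - B‖ := add_le_add (norm_mul_le _ _) (norm_mul_le _ _)
      _ = 2 * ‖A - B‖ * ‖X‖ := by ring
      _ = 2 * ‖B - A‖ * ‖X‖ := by rw [norm_sub_rev]
  have h3 : ‖X‖ ≤ (K : ℝ) * (2 * ‖B - A‖ * ‖X‖) :=
    h1.trans (mul_le_mul_of_nonneg_left h2 (by positivity))
  have h4 : (K : ℝ) * (2 * ‖B - A‖ * ‖X‖) < ‖X‖ := by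
    have hKR : (0 : ℝ) < K := hKpos
    calc (K : ℝ) * (2 * ‖B - A‖ * ‖X‖) < (K : ℝ) * (2 * ((K : ℝ)⁻¹ / 2) * ‖X‖) := by
          gcongr
      _ = ‖X‖ := by field_simp
  linarith


open NormedSpace in
set_option maxHeartbeats 2000000 in
/-- The key perturbation lemma. -/
lemma key_perturb (G H H' : SimpleGraph n) (hGH : G ≤ H) (hHH' : H ≤ H')
    (A : Matrix n n ℝ) (hsym : A.IsSymm)
    (hpat : ∀ i j, i ≠ j → (A i j ≠ 0 ↔ G.Adj i j))
    (hssp : ∀ X : Matrix n n ℝ, X.IsSymm → (∀ i j, H.Adj i j → X i j = 0) →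
      (∀ i, X i i = 0) → A * X = X * A → X = 0)
    (δ : ℝ) (hδ : 0 < δ) :
    ∃ A' : Matrix n n ℝ, A'.IsSymm ∧ (∀ i j, i ≠ j → A' i j ≠ 0 → H'.Adj i j) ∧
      A'.charpoly = A.charpoly ∧ (∀ i j, |A i j - A' i j| ≤ δ) ∧
      (∀ X : Matrix n n ℝ, X.IsSymm → (∀ i j, H'.Adj i j → X i j = 0) →
        (∀ i, X i i = 0) → A' * X = X * A' → X = 0) ∧
      ∀ i j, H'.Adj i j → ¬ H.Adj i j → A' i j ≠ 0 := by
  classical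
  -- A has the SSP with respect to H' as well
  have hsspH' : ∀ X : Matrix n n ℝ, X.IsSymm → (∀ i j, H'.Adj i j → X i j = 0) →
      (∀ i, X i i = 0) → A * X = X * A → X = 0 :=
    fun X h1 h2 h3 h4 => hssp X h1 (fun i j h => h2 i j (hHH' h)) h3 h4
  obtain ⟨η, hη, hstab⟩ := sspStable H' A hsspH'
  -- the conjugation map
  set cfF : Matrix n n ℝ → Matrix n n ℝ :=
    fun M => (exp (M - Mᵀ) * A) * (exp (M - Mᵀ))ᵀ with hcfF
  -- continuous linear maps
  set tC : Matrix n n ℝ →L[ℝ] Matrix n n ℝ :=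
    LinearMap.toContinuousLinearMap ((Matrix.transposeLinearEquiv n n ℝ ℝ).toLinearMap) with htC
  have tC_apply : ∀ M : Matrix n n ℝ, tC M = Mᵀ := fun M => by
    simp [htC, Matrix.transposeLinearEquiv]
  set kC : Matrix n n ℝ →L[ℝ] Matrix n n ℝ := ContinuousLinearMap.id ℝ _ - tC with hkC
  have kC_apply : ∀ M : Matrix n n ℝ, kC M = M - Mᵀ := fun M => by
    simp [hkC, tC_apply]
  -- derivative of the exponential part
  have hk : HasStrictFDerivAt (fun M : Matrix n n ℝ => M - Mᵀ) kC 0 := by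
    have h := kC.hasStrictFDerivAt (x := (0 : Matrix n n ℝ))
    have he : ⇑kC = fun M : Matrix n n ℝ => M - Mᵀ := funext kC_apply
    rwa [he] at h
  have hexp0 : HasStrictFDerivAt (exp)
      (1 : Matrix n n ℝ →L[ℝ] Matrix n n ℝ) ((fun M : Matrix n n ℝ => M - Mᵀ) 0) := by
    have e0 : (fun M : Matrix n n ℝ => M - Mᵀ) 0 = 0 := by simp
    rw [e0]
    exact hasStrictFDerivAt_exp_zero
  have hg : HasStrictFDerivAt (fun M : Matrix n n ℝ => exp (M - Mᵀ))
      ((1 : Matrix n n ℝ →L[ℝ] Matrix n n ℝ).comp kC) 0 := hexp0.comp 0 hk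
  have hga : HasStrictFDerivAt (fun M : Matrix n n ℝ => exp (M - Mᵀ) * A)
      (((1 : Matrix n n ℝ →L[ℝ] Matrix n n ℝ).comp kC).smulRight A) 0 := hg.mul_const' A
  have hgt : HasStrictFDerivAt (fun M : Matrix n n ℝ => (exp (M - Mᵀ))ᵀ)
      (tC.comp ((1 : Matrix n n ℝ →L[ℝ] Matrix n n ℝ).comp kC)) 0 := by
    have h := tC.hasStrictFDerivAt.comp 0 hg
    have he : (fun M : Matrix n n ℝ => tC (exp (M - Mᵀ)))
        = fun M : Matrix n n ℝ => (exp (M - Mᵀ))ᵀ := funext fun M => tC_apply _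
    rwa [he] at h
  have hcf := hga.mul' hgt
  set Dm := ((fun M : Matrix n n ℝ => exp (M - Mᵀ) * A) 0) •
      (tC.comp ((1 : Matrix n n ℝ →L[ℝ] Matrix n n ℝ).comp kC)) +
      ((((1 : Matrix n n ℝ →L[ℝ] Matrix n n ℝ).comp kC).smulRight A).smulRight
        ((fun M : Matrix n n ℝ => (exp (M - Mᵀ))ᵀ) 0)) with hDm
  have hcf' : HasStrictFDerivAt cfF Dm 0 := hcf
  have Dm_apply : ∀ h : Matrix n n ℝ, Dm h = (h - hᵀ) * A - A * (h - hᵀ) := by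
    intro h
    rw [hDm]
    simp only [ContinuousLinearMap.add_apply, ContinuousLinearMap.smul_apply,
      ContinuousLinearMap.smulRight_apply, ContinuousLinearMap.comp_apply,
      ContinuousLinearMap.one_apply, kC_apply, tC_apply]
    simp only [Matrix.transpose_zero, sub_zero, exp_zero, Matrix.transpose_one, one_mul,
      Matrix.transpose_sub, Matrix.transpose_transpose, smul_eq_mul, mul_one]
    simp only [Matrix.mul_sub, Matrix.sub_mul]
    abel
  -- the full map into `WS H`
  set pC : Matrix n n ℝ →L[ℝ] WS H := LinearMap.toContinuousLinearMap (projL H) with hpC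
  have pC_apply : ∀ X : Matrix n n ℝ, pC X = projL H X := fun X => by simp [hpC]
  set F : Matrix n n ℝ → WS H := fun M => pC (cfF M) with hF
  have hFd : HasStrictFDerivAt F (pC.comp Dm) 0 := pC.hasStrictFDerivAt.comp 0 hcf'
  have hrange : LinearMap.range (pC.comp Dm : Matrix n n ℝ →ₗ[ℝ] WS H) = ⊤ := by
    rw [LinearMap.range_eq_top]
    intro Z
    obtain ⟨h, hh⟩ := Phi_surjective H A hsym hssp Z
    refine ⟨h, ?_⟩
    have : (pC.comp Dm : Matrix n n ℝ →ₗ[ℝ] WS H) h = pC (Dm h) := rfl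
    rw [this, Dm_apply h, pC_apply]
    exact hh
  have hmap := hFd.map_nhds_eq_of_surj hrange
  -- F 0 = 0
  have hcf0 : cfF 0 = A := by simp [hcfF, exp_zero]
  have hF0 : F 0 = 0 := by
    rw [hF]
    simp only [hcf0]
    rw [pC_apply]
    apply Subtype.ext
    rw [coe_projL]
    ext i j
    rw [projFun_apply]
    by_cases hb : H.Adj i j ∨ i = j
    · simp [hb]
    · push_neg at hb
      obtain ⟨hb1, hb2⟩ := hb
      have hA1 : A i j = 0 := by
        by_contra hne
        exact hb1 (hGH ((hpat i j hb2).1 hne))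
      have hA2 : A j i = 0 := by
        by_contra hne
        exact hb1 (H.adj_symm (hGH ((hpat j i (Ne.symm hb2)).1 hne)))
      simp [hb1, hb2, hA1, hA2]
  -- choose a small ball
  have hr : 0 < min δ η := lt_min hδ hη
  have hcont : ContinuousAt cfF 0 := hcf'.continuousAt
  have hU : cfF ⁻¹' Metric.ball A (min δ η) ∈ nhds (0 : Matrix n n ℝ) := by
    apply hcont.preimage_mem_nhds
    rw [hcf0]
    exact Metric.ball_mem_nhds A hr
  have himg : F '' (cfF ⁻¹' Metric.ball A (min δ η)) ∈ nhds (0 : WS H) := by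
    rw [← hF0]
    have := Filter.image_mem_map (m := F) hU
    exact hmap.ge this
  obtain ⟨ρ, hρ, hball⟩ := Metric.mem_nhds_iff.1 himg
  -- the target pattern matrix
  set c : ℝ := ρ / (2 * ((Fintype.card n : ℝ) + 1)) with hc
  have hcpos : 0 < c := by positivity
  set N : Matrix n n ℝ := Matrix.of fun i j => if H'.Adj i j ∧ ¬ H.Adj i j then c else 0 with hN
  have hN_apply : ∀ i j, N i j = if H'.Adj i j ∧ ¬ H.Adj i j then c else 0 := fun _ _ => rfl
  have hNmem : N ∈ WS H := by
    refine ⟨?_, fun i j h => ?_, fun i => ?_⟩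
    · ext i j
      simp only [Matrix.transpose_apply, hN_apply]
      by_cases h : H'.Adj i j ∧ ¬ H.Adj i j
      · rw [if_pos h, if_pos ⟨H'.adj_symm h.1, fun hc' => h.2 (H.adj_symm hc')⟩]
      · rw [if_neg h, if_neg]
        rintro ⟨h1, h2⟩
        exact h ⟨H'.adj_symm h1, fun hc' => h2 (H.adj_symm hc')⟩
    · rw [hN_apply, if_neg]
      rintro ⟨-, h2⟩
      exact h2 h
    · rw [hN_apply, if_neg]
      rintro ⟨h1, -⟩
      exact H'.irrefl h1
  have hNnorm : ‖N‖ < ρ := by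
    rw [Matrix.linfty_opNorm_def]
    have hsum : ∀ i : n, (∑ j, ‖N i j‖₊) ≤ (Fintype.card n) • ‖c‖₊ := by
      intro i
      calc (∑ j, ‖N i j‖₊) ≤ ∑ _j : n, ‖c‖₊ := by
            refine Finset.sum_le_sum fun j _ => ?_
            rw [hN_apply]
            by_cases h : H'.Adj i j ∧ ¬ H.Adj i j
            · rw [if_pos h]
            · rw [if_neg h]; simp
        _ = (Fintype.card n) • ‖c‖₊ := by
            rw [Finset.sum_const, Finset.card_univ]
    have hsup : (Finset.univ.sup fun i : n => ∑ j, ‖N i j‖₊) ≤ (Fintype.card n) • ‖c‖₊ :=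
      Finset.sup_le fun i _ => hsum i
    calc ((Finset.univ.sup fun i : n => ∑ j, ‖N i j‖₊ : NNReal) : ℝ)
        ≤ (((Fintype.card n) • ‖c‖₊ : NNReal) : ℝ) := by exact_mod_cast hsup
      _ = (Fintype.card n : ℝ) * c := by
          rw [NNReal.coe_nsmul, nsmul_eq_mul, coe_nnnorm, Real.norm_eq_abs, abs_of_pos hcpos]
      _ < ρ := by
          have h2 : (0:ℝ) < 2 * ((Fintype.card n : ℝ) + 1) := by positivity
          have h3 : c * (2 * ((Fintype.card n : ℝ) + 1)) = ρ := by
            rw [hc]; field_simp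
          nlinarith [h3, hcpos, mul_nonneg hcpos.le (Nat.cast_nonneg (α := ℝ) (Fintype.card n))]
  set w : WS H := ⟨N, hNmem⟩ with hw
  have hwball : w ∈ Metric.ball (0 : WS H) ρ := by
    rw [Metric.mem_ball, dist_zero_right]
    exact hNnorm
  obtain ⟨M, hMU, hMF⟩ := hball hwball
  set A' : Matrix n n ℝ := cfF M with hA'
  -- symmetry of A'
  have hA'def : A' = exp (M - Mᵀ) * A * (exp (M - Mᵀ))ᵀ := rfl
  have hA'sym : A'.IsSymm := by
    rw [hA'def]
    unfold Matrix.IsSymm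
    rw [Matrix.transpose_mul, Matrix.transpose_mul, Matrix.transpose_transpose, hsym.eq,
      ← Matrix.mul_assoc]
  -- characteristic polynomial
  have hchar : A'.charpoly = A.charpoly := by
    have hKT : (M - Mᵀ)ᵀ = -(M - Mᵀ) := by
      rw [Matrix.transpose_sub, Matrix.transpose_transpose]
      abel
    have hPT : (exp (M - Mᵀ))ᵀ = (exp (M - Mᵀ))⁻¹ := by
      rw [← Matrix.exp_transpose, hKT, Matrix.exp_neg]
    have hPunit : IsUnit (exp (M - Mᵀ)) := Matrix.isUnit_exp _
    rw [hA'def, hPT]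
    exact charpoly_conj _ A hPunit
  -- entries of A'
  have hproj : projFun H A' = N := by
    have h1 : F M = w := hMF
    have h2 : pC (cfF M) = w := h1
    rw [pC_apply] at h2
    have := congrArg (Subtype.val) h2
    rw [coe_projL] at this
    exact this
  have hentry : ∀ i j, i ≠ j → ¬ H.Adj i j → A' i j = N i j := by
    intro i j hij hadj
    have h1 := congrFun (congrFun hproj i) j
    rw [projFun_apply, if_neg (by tauto)] at h1
    have h2 : A' j i = A' i j := hA'sym.apply i j
    rw [h2] at h1
    rw [← h1]
    ring
  -- closeness
  have hclose : ‖A' - A‖ < min δ η := by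
    have := hMU
    rw [Set.mem_preimage, Metric.mem_ball, dist_eq_norm] at this
    exact this
  -- assemble
  refine ⟨A', hA'sym, ?_, hchar, ?_, ?_, ?_⟩
  · intro i j hij hne
    by_contra hH'
    have hH : ¬ H.Adj i j := fun h => hH' (hHH' h)
    have := hentry i j hij hH
    rw [hN_apply, if_neg (by tauto)] at this
    exact hne this
  · intro i j
    have h1 : |(A' - A) i j| ≤ ‖A' - A‖ := entry_le_norm _ i j
    rw [Matrix.sub_apply] at h1
    have h2 : |A i j - A' i j| = |A' i j - A i j| := abs_sub_comm _ _
    rw [h2]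
    exact h1.trans (le_of_lt (lt_of_lt_of_le hclose (min_le_left _ _)))
  · intro X h1 h2 h3 h4
    refine hstab A' ?_ X h1 h2 h3 h4
    rw [← norm_sub_rev] at hclose ⊢
    exact lt_of_lt_of_le hclose (min_le_right _ _)
  · intro i j hadj hnadj
    have hij : i ≠ j := H'.ne_of_adj hadj
    rw [hentry i j hij hnadj, hN_apply, if_pos ⟨hadj, hnadj⟩]
    exact ne_of_gt hcpos

end Normed

end Stmt10Aux




attribute [local instance] Matrix.normedAddCommGroup

/-- `S^cl(H)`: real symmetric matrices whose off-diagonal entries are nonzero only on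
edges of `H`. -/
def inScl {V : Type*} (H : SimpleGraph V) (A : Matrix V V ℝ) : Prop :=
  A.IsSymm ∧ ∀ i j : V, i ≠ j → A i j ≠ 0 → H.Adj i j

/-- The strong spectral property with respect to a supergraph `H`: the only symmetric `X`
with `X ∈ S^cl(Hᶜ)` (i.e. `X` vanishing on the edges of `H`), `I∘X = O` and
`AX - XA = O` is `X = O`. -/
def HasSSPwrt {V : Type*} [Fintype V] (H : SimpleGraph V) (A : Matrix V V ℝ) : Prop :=
  ∀ X : Matrix V V ℝ, X.IsSymm → (∀ i j, H.Adj i j → X i j = 0) →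
    (∀ i, X i i = 0) → A * X = X * A → X = 0

/-- Theorem thm:perturb: if `E(G) ⊆ E(H) ⊆ E(H')` and `A ∈ S(G)` has
the SSP with respect to `H`, then for each `ε > 0` there is `A' ∈ S^cl(H')` with the same
spectrum, `‖A - A'‖ < ε`, the SSP with respect to `H'`, and all entries on
`E(H') \ E(H)` nonzero. -/
theorem stmt10 {V : Type*} [Fintype V] [DecidableEq V]
    (G H H' : SimpleGraph V) (hGH : G ≤ H) (hHH' : H ≤ H')
    (A : Matrix V V ℝ) (hA : inS G A) (hssp : HasSSPwrt H A)
    (ε : ℝ) (hε : 0 < ε) :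
    ∃ A' : Matrix V V ℝ,
      inScl H' A' ∧ specM A' = specM A ∧ ‖A - A'‖ < ε ∧ HasSSPwrt H' A' ∧
      ∀ i j, H'.Adj i j → ¬ H.Adj i j → A' i j ≠ 0 := by
  classical
  obtain ⟨A', h1, h2, h3, h4, h5, h6⟩ :=
    Stmt10Aux.key_perturb G H H' hGH hHH' A hA.1 hA.2 hssp (ε / 2) (half_pos hε)
  refine ⟨A', ⟨h1, h2⟩, ?_, ?_, h5, h6⟩
  · unfold specM
    rw [h3]
  · have hle : ‖A - A'‖ ≤ ε / 2 := by
      rw [Matrix.norm_le_iff (le_of_lt (half_pos hε))]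
      intro i j
      rw [Matrix.sub_apply, Real.norm_eq_abs]
      exact h4 i j
    linarith
end

section
/- Let A and B be real symmetric matrices having the strong spectral property with respect to graphs H_A and H_B, respectively (where H_A, H_B are graphs on the vertex sets indexing A and B). If A and B have no common eigenvalue, then the direct sum A ⊕ B has the strong spectral property with respect to the disjoint union H_A ⊕ H_B. -/
/-- The disjoint union of two graphs. -/
def graphSum {V W : Type*} (G : SimpleGraph V) (H : SimpleGraph W) : SimpleGraph (V ⊕ W) :=
  SimpleGraph.map Function.Embedding.inl G ⊔ SimpleGraph.map Function.Embedding.inr H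

open Matrix Polynomial in
lemma eval_charpoly'_s11 {n : Type*} [Fintype n] [DecidableEq n] (A : Matrix n n ℝ) (μ : ℝ) :
    A.charpoly.eval μ = (Matrix.scalar n μ - A).det := by
  rw [Matrix.charpoly, _root_.eval_det, matPolyEquiv_charmatrix]
  simp

open Matrix in
lemma eig_mem_specM {n : Type*} [Fintype n] [DecidableEq n] {A : Matrix n n ℝ}
    (hA : A.IsHermitian) (i : n) : hA.eigenvalues i ∈ specM A := by
  rw [specM, Polynomial.mem_roots (A.charpoly_monic.ne_zero)]
  have hv := hA.mulVec_eigenvectorBasis i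
  have hv0 : (⇑(hA.eigenvectorBasis i) : n → ℝ) ≠ 0 :=
    (WithLp.ofLp_eq_zero 2).ne.2 <| hA.eigenvectorBasis.orthonormal.ne_zero i
  have : (Matrix.scalar n (hA.eigenvalues i) - A) *ᵥ ⇑(hA.eigenvectorBasis i) = 0 := by
    rw [Matrix.sub_mulVec, hv]
    ext k
    simp [Matrix.mulVec_diagonal, Algebra.algebraMap_eq_smul_one, Matrix.scalar,
      Matrix.diagonal_one, Matrix.smul_mulVec, Matrix.one_mulVec]
  have hdet : (Matrix.scalar n (hA.eigenvalues i) - A).det = 0 :=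
    (Matrix.exists_mulVec_eq_zero_iff).mp ⟨_, hv0, this⟩
  rw [Polynomial.IsRoot, eval_charpoly'_s11, hdet]

open Matrix in
/-- Sylvester: if real symmetric `A`, `B` share no eigenvalue and `A * X = X * B`
then `X = 0`. -/
lemma sylvester_zero {n m : Type*} [Fintype n] [DecidableEq n] [Fintype m] [DecidableEq m]
    {A : Matrix n n ℝ} {B : Matrix m m ℝ} (hA : A.IsSymm) (hB : B.IsSymm)
    (hdisj : ∀ μ : ℝ, μ ∈ specM A → μ ∉ specM B)
    {X : Matrix n m ℝ} (hX : A * X = X * B) : X = 0 := by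
  have hAh : A.IsHermitian := by rwa [Matrix.IsHermitian, Matrix.conjTranspose_eq_transpose_of_trivial]
  have hBh : B.IsHermitian := by rwa [Matrix.IsHermitian, Matrix.conjTranspose_eq_transpose_of_trivial]
  set U : Matrix n n ℝ := (hAh.eigenvectorUnitary : Matrix n n ℝ)
  set Vm : Matrix m m ℝ := (hBh.eigenvectorUnitary : Matrix m m ℝ)
  have hU1 : U * star U = 1 := Matrix.mem_unitaryGroup_iff.mp hAh.eigenvectorUnitary.2
  have hU2 : star U * U = 1 := Matrix.mem_unitaryGroup_iff'.mp hAh.eigenvectorUnitary.2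
  have hV1 : Vm * star Vm = 1 := Matrix.mem_unitaryGroup_iff.mp hBh.eigenvectorUnitary.2
  have hV2 : star Vm * Vm = 1 := Matrix.mem_unitaryGroup_iff'.mp hBh.eigenvectorUnitary.2
  have hDA : star U * A * U = Matrix.diagonal (RCLike.ofReal ∘ hAh.eigenvalues) :=
    by have h := hAh.conjStarAlgAut_star_eigenvectorUnitary
       simp only [Unitary.conjStarAlgAut_apply, Unitary.coe_star, star_star] at h; exact h
  have hDB : star Vm * B * Vm = Matrix.diagonal (RCLike.ofReal ∘ hBh.eigenvalues) :=
    by have h := hBh.conjStarAlgAut_star_eigenvectorUnitary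
       simp only [Unitary.conjStarAlgAut_apply, Unitary.coe_star, star_star] at h; exact h
  set Y : Matrix n m ℝ := star U * X * Vm with hY
  have key : Matrix.diagonal (RCLike.ofReal ∘ hAh.eigenvalues) * Y
      = Y * Matrix.diagonal (RCLike.ofReal ∘ hBh.eigenvalues) := by
    rw [← hDA, ← hDB, hY]
    calc star U * A * U * (star U * X * Vm)
        = star U * (A * ((U * star U) * X)) * Vm := by simp only [Matrix.mul_assoc]
      _ = star U * (A * X) * Vm := by rw [hU1, Matrix.one_mul]
      _ = star U * (X * B) * Vm := by rw [hX]
      _ = star U * (X * ((Vm * star Vm) * (B * Vm))) := by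
            rw [hV1, Matrix.one_mul]; simp only [Matrix.mul_assoc]
      _ = star U * X * Vm * (star Vm * B * Vm) := by simp only [Matrix.mul_assoc]
  have hY0 : Y = 0 := by
    refine Matrix.ext fun i j => ?_
    have := congrArg (fun M : Matrix n m ℝ => M i j) key
    erw [Matrix.diagonal_mul, Matrix.mul_diagonal, Function.comp_apply, Function.comp_apply] at this
    have hne : hAh.eigenvalues i ≠ hBh.eigenvalues j := by
      intro h
      exact hdisj _ (eig_mem_specM hAh i) (h ▸ eig_mem_specM hBh j)
    have : (hAh.eigenvalues i - hBh.eigenvalues j) * Y i j = 0 := by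
      simp only [RCLike.ofReal_real_eq_id, id] at this
      ring_nf
      ring_nf at this
      linarith [this]
    rcases mul_eq_zero.mp this with h | h
    · exact absurd (by linarith [sub_eq_zero.mp h]) hne
    · simpa using h
  have : X = U * Y * star Vm := by
    rw [hY]
    calc X = (U * star U) * X * (Vm * star Vm) := by
            rw [hU1, hV1, Matrix.one_mul, Matrix.mul_one]
      _ = U * (star U * X * Vm) * star Vm := by simp only [Matrix.mul_assoc]
  rw [this, hY0]
  simp

/-- Proposition prop:dunion: if symmetric matrices `A` and `B` have the
SSP with respect to `H_A` and `H_B` respectively and have no common eigenvalue, then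
`A ⊕ B` has the SSP with respect to `H_A ⊕ H_B`. -/
theorem stmt11 {V W : Type*} [Fintype V] [DecidableEq V] [Fintype W] [DecidableEq W]
    (A : Matrix V V ℝ) (B : Matrix W W ℝ) (hA : A.IsSymm) (hB : B.IsSymm)
    (HA : SimpleGraph V) (HB : SimpleGraph W)
    (hsspA : HasSSPwrt HA A) (hsspB : HasSSPwrt HB B)
    (hdisj : ∀ μ : ℝ, μ ∈ specM A → μ ∉ specM B) :
    HasSSPwrt (graphSum HA HB) (Matrix.fromBlocks A 0 0 B) := by
  intro X hXsymm hXadj hXdiag hXcomm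
  have hXsym' : ∀ i j, X j i = X i j := fun i j => congrFun (congrFun hXsymm i) j
  set X11 := X.toBlocks₁₁
  set X12 := X.toBlocks₁₂
  set X21 := X.toBlocks₂₁
  set X22 := X.toBlocks₂₂
  have hXb : X = Matrix.fromBlocks X11 X12 X21 X22 := (Matrix.fromBlocks_toBlocks X).symm
  rw [hXb, Matrix.fromBlocks_multiply, Matrix.fromBlocks_multiply] at hXcomm
  have h11 : A * X11 = X11 * A := by
    have := congrArg Matrix.toBlocks₁₁ hXcomm
    simpa using this
  have h12 : A * X12 = X12 * B := by
    have := congrArg Matrix.toBlocks₁₂ hXcomm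
    simpa using this
  have h21 : B * X21 = X21 * A := by
    have := congrArg Matrix.toBlocks₂₁ hXcomm
    simpa using this
  have h22 : B * X22 = X22 * B := by
    have := congrArg Matrix.toBlocks₂₂ hXcomm
    simpa using this
  have hadj11 : ∀ i j : V, HA.Adj i j → X (Sum.inl i) (Sum.inl j) = 0 := by
    intro i j h
    exact hXadj _ _ ((SimpleGraph.sup_adj _ _ _ _).mpr
      (Or.inl ((SimpleGraph.map_adj _ _ _ _).mpr ⟨i, j, h, rfl, rfl⟩)))
  have hadj22 : ∀ i j : W, HB.Adj i j → X (Sum.inr i) (Sum.inr j) = 0 := by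
    intro i j h
    exact hXadj _ _ ((SimpleGraph.sup_adj _ _ _ _).mpr
      (Or.inr ((SimpleGraph.map_adj _ _ _ _).mpr ⟨i, j, h, rfl, rfl⟩)))
  have hX11 : X11 = 0 := by
    apply hsspA X11
    · ext i j
      exact hXsym' (Sum.inl i) (Sum.inl j)
    · exact fun i j h => hadj11 i j h
    · exact fun i => hXdiag (Sum.inl i)
    · exact h11
  have hX22 : X22 = 0 := by
    apply hsspB X22
    · ext i j
      exact hXsym' (Sum.inr i) (Sum.inr j)
    · exact fun i j h => hadj22 i j h
    · exact fun i => hXdiag (Sum.inr i)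
    · exact h22
  have hdisj' : ∀ μ : ℝ, μ ∈ specM B → μ ∉ specM A := fun μ hμ hμ' => hdisj μ hμ' hμ
  have hX12 : X12 = 0 := sylvester_zero hA hB hdisj h12
  have hX21 : X21 = 0 := sylvester_zero hB hA hdisj' h21
  rw [hXb, hX11, hX12, hX21, hX22]
  simp [Matrix.fromBlocks_zero]
end

section
/- Let x ∈ ℝⁿ, y ∈ ℝᵐ, and α₁, α₂, β₁, β₂, γ ∈ ℝ. The (n+m) × (n+m) symmetric matrix C = [[α₁ x xᵀ + β₁ I_n, γ x yᵀ], [γ y xᵀ, α₂ y yᵀ + β₂ I_m]] has multiset of eigenvalues {μ₁, μ₂, β₁ with multiplicity n−1, β₂ with multiplicity m−1}, where μ₁ and μ₂ are the eigenvalues of the 2 × 2 matrix C' = [[α₁‖x‖² + β₁, γ‖x‖‖y‖], [γ‖x‖‖y‖, α₂‖y‖² + β₂]]. -/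
section Aux
open Matrix Polynomial

lemma eval_charpoly_aux {k : Type*} [Fintype k] [DecidableEq k]
    (M : Matrix k k ℝ) (t : ℝ) : M.charpoly.eval t = (t • (1 : Matrix k k ℝ) - M).det := by
  rw [Matrix.charpoly, ← Polynomial.coe_evalRingHom, RingHom.map_det]
  congr 1
  ext i j
  by_cases h : i = j <;>
    simp [h, Matrix.charmatrix_apply, Matrix.diagonal_apply, Matrix.one_apply]

lemma vmv_mul_vmv {a b c : Type*} [Fintype b] (u : a → ℝ) (v w : b → ℝ) (z : c → ℝ) :
    Matrix.vecMulVec u v * Matrix.vecMulVec w z = (v ⬝ᵥ w) • Matrix.vecMulVec u z := by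
  ext i j
  simp only [Matrix.mul_apply, Matrix.vecMulVec_apply, Matrix.smul_apply, dotProduct,
    smul_eq_mul, Finset.sum_mul]
  exact Finset.sum_congr rfl fun k _ => by ring

lemma smul_vmv {a b : Type*} (s : ℝ) (u : a → ℝ) (v : b → ℝ) :
    s • Matrix.vecMulVec u v = Matrix.vecMulVec (s • u) v := by
  ext i j
  simp [Matrix.vecMulVec_apply, mul_assoc]

lemma det_smul_one_sub_vmv {k : ℕ} (v : Fin k → ℝ) (a c : ℝ) (hc : c ≠ 0) :
    (c • (1 : Matrix (Fin k) (Fin k) ℝ) - a • Matrix.vecMulVec v v).det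
      = c ^ k * (1 - a * (v ⬝ᵥ v) / c) := by
  have key : c • (1 : Matrix (Fin k) (Fin k) ℝ) - a • Matrix.vecMulVec v v
      = c • ((1 : Matrix (Fin k) (Fin k) ℝ) + Matrix.vecMulVec ((-(a / c)) • v) v) := by
    rw [smul_add, ← smul_vmv, smul_smul]
    have : c * -(a / c) = -a := by field_simp
    rw [this, neg_smul, ← sub_eq_add_neg]
  rw [key, Matrix.det_smul, Matrix.vecMulVec_eq (Fin 1), Matrix.det_one_add_replicateCol_mul_replicateRow]
  have : v ⬝ᵥ (-(a / c)) • v = -(a / c) * (v ⬝ᵥ v) := by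
    simp [dotProduct, Finset.mul_sum]; exact Finset.sum_congr rfl fun i _ => by ring
  rw [this, Fintype.card_fin]
  ring

lemma det_block (n m : ℕ) (hn : 1 ≤ n) (hm : 1 ≤ m)
    (x : Fin n → ℝ) (y : Fin m → ℝ) (α₁ α₂ γ c d : ℝ)
    (hc : c ≠ 0) (hd : d ≠ 0) (he : d - α₂ * (y ⬝ᵥ y) ≠ 0) :
    (Matrix.fromBlocks
        (c • (1 : Matrix (Fin n) (Fin n) ℝ) - α₁ • Matrix.vecMulVec x x)
        (-(γ • Matrix.vecMulVec x y))
        (-(γ • Matrix.vecMulVec y x))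
        (d • (1 : Matrix (Fin m) (Fin m) ℝ) - α₂ • Matrix.vecMulVec y y)).det
      = c ^ (n - 1) * d ^ (m - 1) *
        ((c - α₁ * (x ⬝ᵥ x)) * (d - α₂ * (y ⬝ᵥ y)) - γ ^ 2 * (x ⬝ᵥ x) * (y ⬝ᵥ y)) := by
  set Y : ℝ := y ⬝ᵥ y with hY
  set Xs : ℝ := x ⬝ᵥ x with hXs
  set e : ℝ := d - α₂ * Y with heq
  set s : ℝ := α₂ / (d * e) with hs
  set V : Matrix (Fin m) (Fin m) ℝ := Matrix.vecMulVec y y with hV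
  set D : Matrix (Fin m) (Fin m) ℝ := d • 1 - α₂ • V with hD
  set E : Matrix (Fin m) (Fin m) ℝ := d⁻¹ • 1 + s • V with hE
  have hVV : V * V = Y • V := vmv_mul_vmv y y y y
  have hDE : D * E = 1 := by
    have expand : D * E = (d * d⁻¹) • (1 : Matrix (Fin m) (Fin m) ℝ)
        + (d * s - α₂ * d⁻¹ - α₂ * s * Y) • V := by
      simp only [hD, hE, sub_mul, mul_add, smul_mul_assoc, mul_smul_comm, one_mul,
        Matrix.mul_one, hVV, smul_smul]
      module
    rw [expand]
    have h1 : d * d⁻¹ = 1 := mul_inv_cancel₀ hd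
    have h2 : d * s - α₂ * d⁻¹ - α₂ * s * Y = 0 := by
      have he' : d - α₂ * Y ≠ 0 := he
      rw [hs, heq]; field_simp; ring
    rw [h1, h2, one_smul, zero_smul, add_zero]
  haveI : Invertible D := invertibleOfRightInverse D E hDE
  have hinv : ⅟D = E := invOf_eq_right_inv hDE
  rw [Matrix.det_fromBlocks₂₂, hinv]
  -- compute the middle product
  have hmid : -(γ • Matrix.vecMulVec x y) * E * -(γ • Matrix.vecMulVec y x)
      = (γ ^ 2 * Y * (d⁻¹ + s * Y)) • Matrix.vecMulVec x x := by
    have h1 : Matrix.vecMulVec x y * E = (d⁻¹ + s * Y) • Matrix.vecMulVec x y := by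
      rw [hE, Matrix.mul_add, Matrix.mul_smul, Matrix.mul_one, Matrix.mul_smul, vmv_mul_vmv,
        smul_smul, ← hY, ← add_smul]
    calc -(γ • Matrix.vecMulVec x y) * E * -(γ • Matrix.vecMulVec y x)
        = (γ * γ) • (Matrix.vecMulVec x y * E * Matrix.vecMulVec y x) := by
          simp only [Matrix.neg_mul, Matrix.mul_neg, neg_neg, Matrix.smul_mul,
            Matrix.mul_smul, smul_smul, smul_neg]
      _ = (γ ^ 2 * Y * (d⁻¹ + s * Y)) • Matrix.vecMulVec x x := by
          rw [h1, Matrix.smul_mul, vmv_mul_vmv, ← hY, smul_smul, smul_smul]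
          congr 1; ring
  rw [hmid]
  have hschur : c • (1 : Matrix (Fin n) (Fin n) ℝ) - α₁ • Matrix.vecMulVec x x
      - (γ ^ 2 * Y * (d⁻¹ + s * Y)) • Matrix.vecMulVec x x
      = c • (1 : Matrix (Fin n) (Fin n) ℝ)
        - (α₁ + γ ^ 2 * Y * (d⁻¹ + s * Y)) • Matrix.vecMulVec x x := by
    rw [add_smul]; abel
  rw [hschur, hD, det_smul_one_sub_vmv y α₂ d hd, det_smul_one_sub_vmv x _ c hc, ← hY, ← hXs]
  have hcn : c ^ n = c ^ (n - 1) * c := by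
    rw [← pow_succ, Nat.sub_add_cancel hn]
  have hdm : d ^ m = d ^ (m - 1) * d := by
    rw [← pow_succ, Nat.sub_add_cancel hm]
  rw [hcn, hdm, hs, heq]
  have hde : d * (d - α₂ * Y) ≠ 0 := mul_ne_zero hd he
  have he' : d - α₂ * Y ≠ 0 := he
  field_simp
  ring

open Polynomial in
lemma charpoly_factor (n m : ℕ) (hn : 1 ≤ n) (hm : 1 ≤ m)
    (x : Fin n → ℝ) (y : Fin m → ℝ) (α₁ α₂ β₁ β₂ γ : ℝ) :
    (Matrix.fromBlocks
        (α₁ • Matrix.vecMulVec x x + β₁ • (1 : Matrix (Fin n) (Fin n) ℝ))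
        (γ • Matrix.vecMulVec x y)
        (γ • Matrix.vecMulVec y x)
        (α₂ • Matrix.vecMulVec y y + β₂ • (1 : Matrix (Fin m) (Fin m) ℝ))).charpoly
      = (!![α₁ * (∑ i, x i ^ 2) + β₁,
            γ * Real.sqrt (∑ i, x i ^ 2) * Real.sqrt (∑ i, y i ^ 2);
            γ * Real.sqrt (∑ i, x i ^ 2) * Real.sqrt (∑ i, y i ^ 2),
            α₂ * (∑ i, y i ^ 2) + β₂]).charpoly
        * (X - C β₁) ^ (n - 1) * (X - C β₂) ^ (m - 1) := by
  have hxx : x ⬝ᵥ x = ∑ i, x i ^ 2 := by simp [dotProduct, sq]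
  have hyy : y ⬝ᵥ y = ∑ i, y i ^ 2 := by simp [dotProduct, sq]
  have hx0 : (0:ℝ) ≤ ∑ i, x i ^ 2 := Finset.sum_nonneg fun i _ => sq_nonneg _
  have hy0 : (0:ℝ) ≤ ∑ i, y i ^ 2 := Finset.sum_nonneg fun i _ => sq_nonneg _
  apply Polynomial.eq_of_infinite_eval_eq
  have hfin : ({β₁, β₂, β₂ + α₂ * (y ⬝ᵥ y)} : Set ℝ).Finite :=
    (Set.finite_singleton _).insert _ |>.insert _
  refine hfin.infinite_compl.mono fun t ht => ?_
  simp only [Set.mem_compl_iff, Set.mem_insert_iff, Set.mem_singleton_iff, not_or] at ht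
  obtain ⟨ht1, ht2, ht3⟩ := ht
  have hc : t - β₁ ≠ 0 := sub_ne_zero.mpr ht1
  have hd : t - β₂ ≠ 0 := sub_ne_zero.mpr ht2
  have he : (t - β₂) - α₂ * (y ⬝ᵥ y) ≠ 0 := by
    intro h; apply ht3; linarith [h]
  -- LHS
  have hblock : t • (1 : Matrix (Fin n ⊕ Fin m) (Fin n ⊕ Fin m) ℝ)
      - Matrix.fromBlocks
        (α₁ • Matrix.vecMulVec x x + β₁ • (1 : Matrix (Fin n) (Fin n) ℝ))
        (γ • Matrix.vecMulVec x y)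
        (γ • Matrix.vecMulVec y x)
        (α₂ • Matrix.vecMulVec y y + β₂ • (1 : Matrix (Fin m) (Fin m) ℝ))
      = Matrix.fromBlocks
        ((t - β₁) • (1 : Matrix (Fin n) (Fin n) ℝ) - α₁ • Matrix.vecMulVec x x)
        (-(γ • Matrix.vecMulVec x y))
        (-(γ • Matrix.vecMulVec y x))
        ((t - β₂) • (1 : Matrix (Fin m) (Fin m) ℝ) - α₂ • Matrix.vecMulVec y y) := by
    ext i j
    rcases i with i | i <;> rcases j with j | j <;>
      simp [Matrix.one_apply, Matrix.vecMulVec_apply, Sum.inl.injEq, Sum.inr.injEq] <;>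
      split_ifs <;> ring
  simp only [Set.mem_setOf_eq]
  rw [eval_charpoly_aux, hblock,
    det_block n m hn hm x y α₁ α₂ γ (t - β₁) (t - β₂) hc hd he]
  -- RHS
  rw [eval_mul, eval_mul, eval_pow, eval_pow, eval_sub, eval_sub, eval_X, eval_C, eval_C,
    eval_charpoly_aux]
  rw [Matrix.det_fin_two]
  have hq : (γ * Real.sqrt (∑ i, x i ^ 2) * Real.sqrt (∑ i, y i ^ 2))
      * (γ * Real.sqrt (∑ i, x i ^ 2) * Real.sqrt (∑ i, y i ^ 2))
      = γ ^ 2 * (∑ i, x i ^ 2) * (∑ i, y i ^ 2) := by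
    have h1 := Real.mul_self_sqrt hx0
    have h2 := Real.mul_self_sqrt hy0
    calc _ = γ ^ 2 * (Real.sqrt (∑ i, x i ^ 2) * Real.sqrt (∑ i, x i ^ 2))
        * (Real.sqrt (∑ i, y i ^ 2) * Real.sqrt (∑ i, y i ^ 2)) := by ring
    _ = _ := by rw [h1, h2]
  simp only [Matrix.sub_apply, Matrix.smul_apply, Matrix.one_apply_eq, Matrix.one_apply_ne,
    Matrix.cons_val', Matrix.cons_val_zero, Matrix.cons_val_one, Matrix.head_cons,
    Matrix.head_fin_const, Matrix.empty_val', Matrix.cons_val_fin_one, smul_eq_mul,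
    Matrix.of_apply]
  rw [hxx, hyy]
  have h01 : ((1 : Matrix (Fin 2) (Fin 2) ℝ) 0 1) = 0 := by norm_num [Matrix.one_apply]
  have h10 : ((1 : Matrix (Fin 2) (Fin 2) ℝ) 1 0) = 0 := by norm_num [Matrix.one_apply]
  rw [h01, h10]
  linear_combination ((t - β₁) ^ (n - 1) * (t - β₂) ^ (m - 1)) * hq

end Aux

/-- Lemma lemma:eig complete: the eigenvalues of
`C = [[α₁xxᵀ + β₁Iₙ, γxyᵀ], [γyxᵀ, α₂yyᵀ + β₂Iₘ]]` are `μ₁, μ₂, β₁^{(n-1)}, β₂^{(m-1)}`,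
where `μ₁, μ₂` are the eigenvalues of
`C' = [[α₁‖x‖² + β₁, γ‖x‖‖y‖], [γ‖x‖‖y‖, α₂‖y‖² + β₂]]`. -/
theorem stmt14 (n m : ℕ) (hn : 1 ≤ n) (hm : 1 ≤ m)
    (x : Fin n → ℝ) (y : Fin m → ℝ) (α₁ α₂ β₁ β₂ γ : ℝ) :
    specM (Matrix.fromBlocks
        (α₁ • Matrix.vecMulVec x x + β₁ • (1 : Matrix (Fin n) (Fin n) ℝ))
        (γ • Matrix.vecMulVec x y)
        (γ • Matrix.vecMulVec y x)
        (α₂ • Matrix.vecMulVec y y + β₂ • (1 : Matrix (Fin m) (Fin m) ℝ))) =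
      specM !![α₁ * (∑ i, x i ^ 2) + β₁,
               γ * Real.sqrt (∑ i, x i ^ 2) * Real.sqrt (∑ i, y i ^ 2);
               γ * Real.sqrt (∑ i, x i ^ 2) * Real.sqrt (∑ i, y i ^ 2),
               α₂ * (∑ i, y i ^ 2) + β₂] +
        Multiset.replicate (n - 1) β₁ + Multiset.replicate (m - 1) β₂ := by
  unfold specM
  rw [charpoly_factor n m hn hm x y α₁ α₂ β₁ β₂ γ]
  have h2 : (!![α₁ * (∑ i, x i ^ 2) + β₁,
      γ * Real.sqrt (∑ i, x i ^ 2) * Real.sqrt (∑ i, y i ^ 2);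
      γ * Real.sqrt (∑ i, x i ^ 2) * Real.sqrt (∑ i, y i ^ 2),
      α₂ * (∑ i, y i ^ 2) + β₂]).charpoly ≠ 0 :=
    (Matrix.charpoly_monic _).ne_zero
  have hb1 : ((Polynomial.X - Polynomial.C β₁) ^ (n - 1) : Polynomial ℝ) ≠ 0 :=
    pow_ne_zero _ (Polynomial.X_sub_C_ne_zero β₁)
  have hb2 : ((Polynomial.X - Polynomial.C β₂) ^ (m - 1) : Polynomial ℝ) ≠ 0 :=
    pow_ne_zero _ (Polynomial.X_sub_C_ne_zero β₂)
  rw [Polynomial.roots_mul (mul_ne_zero (mul_ne_zero h2 hb1) hb2),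
    Polynomial.roots_mul (mul_ne_zero h2 hb1),
    Polynomial.roots_pow, Polynomial.roots_pow,
    Polynomial.roots_X_sub_C, Polynomial.roots_X_sub_C,
    Multiset.nsmul_singleton, Multiset.nsmul_singleton]
end

section
/- Let λ₁ ≠ λ₂ be real numbers, n₁ and n₂ positive integers with n = n₁ + n₂, and let F and G be finite sets of real numbers with {λ₁, λ₂} ∩ F = ∅. Then there exists a matrix A ∈ S(K_n) whose multiset of eigenvalues is {λ₁ with multiplicity n₁, λ₂ with multiplicity n₂}, such that for every vertex v the principal submatrix A(v) has no eigenvalue in F, and no diagonal entry of A belongs to G. -/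
/-- The principal submatrix `A(w)` obtained by deleting row and column `w`. -/
def deleteRC {V : Type*} (A : Matrix V V ℝ) (w : V) :
    Matrix {i : V // i ≠ w} {i : V // i ≠ w} ℝ :=
  A.submatrix (fun i => i.1) (fun i => i.1)

open Polynomial Matrix

lemma my_eval_charpoly {m : Type*} [Fintype m] [DecidableEq m] (M : Matrix m m ℝ) (x : ℝ) :
    M.charpoly.eval x = (x • (1 : Matrix m m ℝ) - M).det := by
  rw [Matrix.charpoly, ← coe_evalRingHom, RingHom.map_det]
  congr 1
  ext i j
  by_cases h : i = j
  · subst h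
    simp [Matrix.one_apply]
  · simp [Matrix.charmatrix_apply_ne _ _ _ h, Matrix.one_apply_ne h]

lemma my_vecMulVec_mul {m : Type*} [Fintype m] (a b c d : m → ℝ) :
    (vecMulVec a b) * (vecMulVec c d) = (b ⬝ᵥ c) • vecMulVec a d := by
  ext i j
  simp only [Matrix.mul_apply, vecMulVec_apply, Matrix.smul_apply, dotProduct, smul_eq_mul,
    Finset.sum_mul]
  rw [show ∑ k, a i * b k * (c k * d j) = ∑ k, b k * c k * (a i * d j) from
    Finset.sum_congr rfl fun k _ => by ring]

lemma my_charpoly_conj {m : Type*} [Fintype m] [DecidableEq m] (Q D : Matrix m m ℝ)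
    (hQ : Q * Q = 1) : (Q * D * Q).charpoly = D.charpoly := by
  have hm : (C : ℝ →+* ℝ[X]).mapMatrix Q * (C : ℝ →+* ℝ[X]).mapMatrix Q = 1 := by
    rw [← _root_.map_mul, hQ, _root_.map_one]
  have key : charmatrix (Q * D * Q) =
      (C : ℝ →+* ℝ[X]).mapMatrix Q * charmatrix D * (C : ℝ →+* ℝ[X]).mapMatrix Q := by
    unfold charmatrix
    rw [Matrix.mul_sub, Matrix.sub_mul]
    congr 1
    · have := (Matrix.scalar_commute (X : ℝ[X]) (fun r' => Commute.all _ _)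
        ((C : ℝ →+* ℝ[X]).mapMatrix Q)).symm.eq
      rw [this, Matrix.mul_assoc, hm, Matrix.mul_one]
    · rw [← _root_.map_mul, ← _root_.map_mul]
  rw [Matrix.charpoly, Matrix.charpoly, key, Matrix.det_mul, Matrix.det_mul]
  have : ((C : ℝ →+* ℝ[X]).mapMatrix Q).det * ((C : ℝ →+* ℝ[X]).mapMatrix Q).det = 1 := by
    rw [← Matrix.det_mul, hm, Matrix.det_one]
  calc ((C : ℝ →+* ℝ[X]).mapMatrix Q).det * (charmatrix D).det * ((C : ℝ →+* ℝ[X]).mapMatrix Q).det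
      = (charmatrix D).det * (((C : ℝ →+* ℝ[X]).mapMatrix Q).det * ((C : ℝ →+* ℝ[X]).mapMatrix Q).det) := by ring
    _ = (charmatrix D).det := by rw [this, mul_one]

lemma my_det_deleteRC {V : Type*} [Fintype V] [DecidableEq V] (M : Matrix V V ℝ) (v : V) :
    (deleteRC M v).det = M.adjugate v v := by
  rw [Matrix.adjugate_apply]
  let e : {i : V // i ≠ v} ⊕ Unit ≃ V :=
    { toFun := Sum.elim (fun i => i.1) (fun _ => v)
      invFun := fun i => if h : i = v then Sum.inr () else Sum.inl ⟨i, h⟩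
      left_inv := by
        rintro (⟨i, hi⟩ | ⟨⟩)
        · simp [hi]
        · simp
      right_inv := by
        intro i
        by_cases h : i = v <;> simp [h] }
  rw [← Matrix.det_submatrix_equiv_self e]
  have hsub : (M.updateRow v (Pi.single v 1)).submatrix e e =
      Matrix.fromBlocks (deleteRC M v) (Matrix.of fun i _ => M i.1 v) 0 1 := by
    ext i j
    rcases i with i | i <;> rcases j with j | j
    · simp only [Matrix.submatrix_apply, Matrix.fromBlocks_apply₁₁]
      show (M.updateRow v (Pi.single v 1)) i.1 j.1 = deleteRC M v i j
      rw [Matrix.updateRow_ne i.2]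
      rfl
    · simp only [Matrix.submatrix_apply, Matrix.fromBlocks_apply₁₂]
      show (M.updateRow v (Pi.single v 1)) i.1 v = M i.1 v
      rw [Matrix.updateRow_ne i.2]
    · simp only [Matrix.submatrix_apply, Matrix.fromBlocks_apply₂₁]
      show (M.updateRow v (Pi.single v 1)) v j.1 = 0
      rw [Matrix.updateRow_self, Pi.single_eq_of_ne j.2]
    · simp only [Matrix.submatrix_apply, Matrix.fromBlocks_apply₂₂]
      show (M.updateRow v (Pi.single v 1)) v v = 1
      rw [Matrix.updateRow_self, Pi.single_eq_same]
  rw [hsub, Matrix.det_fromBlocks_zero₂₁, Matrix.det_one, mul_one]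

noncomputable def pp1 (n₁ : ℕ) : ℝ[X] := ∑ k ∈ Finset.range n₁, X ^ (2*k)
noncomputable def pp0 (n₁ n₂ : ℕ) : ℝ[X] := ∑ k ∈ Finset.Ico n₁ (n₁+n₂), X ^ (2*k)
noncomputable def gg (n₁ n₂ : ℕ) (e : ℝ) (i : ℕ) (s : ℝ) : ℝ[X] :=
  C (e - s) * (pp1 n₁ + pp0 n₁ n₂)^2 + C 4 * X^(2*i) * (pp1 n₁ - C e * (pp1 n₁ + pp0 n₁ n₂))

lemma pp1_eval_zero {n₁ : ℕ} (h1 : 0 < n₁) : (pp1 n₁).eval 0 = 1 := by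
  simp only [pp1, eval_finset_sum, eval_pow, eval_X]
  rw [Finset.sum_eq_single_of_mem 0 (Finset.mem_range.mpr h1)]
  · norm_num
  · intro b _ hb; exact zero_pow (by omega)

lemma pp0_eval_zero {n₁ n₂ : ℕ} (h1 : 0 < n₁) : (pp0 n₁ n₂).eval 0 = 0 := by
  simp only [pp0, eval_finset_sum, eval_pow, eval_X]
  refine Finset.sum_eq_zero fun b hb => ?_
  have := (Finset.mem_Ico.mp hb).1
  exact zero_pow (by omega)

lemma pp1_ne {n₁ : ℕ} (h1 : 0 < n₁) : pp1 n₁ ≠ 0 := by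
  intro h
  have := pp1_eval_zero h1
  rw [h] at this; simp at this

lemma pp0_ne {n₁ n₂ : ℕ} (h2 : 0 < n₂) : pp0 n₁ n₂ ≠ 0 := by
  intro h
  have hc : (pp0 n₁ n₂).coeff (2*n₁) = 1 := by
    simp only [pp0, finset_sum_coeff, coeff_X_pow]
    rw [Finset.sum_eq_single_of_mem n₁ (Finset.mem_Ico.mpr ⟨le_refl _, by omega⟩)]
    · simp
    · intro b _ hb; rw [if_neg (by omega)]
  rw [h] at hc; simp at hc

lemma ppsub_ne {n₁ n₂ : ℕ} (h1 : 0 < n₁) (h2 : 0 < n₂) : pp1 n₁ - pp0 n₁ n₂ ≠ 0 := by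
  intro h
  have hc : (pp1 n₁ - pp0 n₁ n₂).coeff (2*(n₁+n₂-1)) = -1 := by
    rw [coeff_sub]
    have hA : (pp1 n₁).coeff (2*(n₁+n₂-1)) = 0 := by
      simp only [pp1, finset_sum_coeff, coeff_X_pow]
      refine Finset.sum_eq_zero fun b hb => ?_
      have := Finset.mem_range.mp hb
      rw [if_neg (by omega)]
    have hB : (pp0 n₁ n₂).coeff (2*(n₁+n₂-1)) = 1 := by
      simp only [pp0, finset_sum_coeff, coeff_X_pow]
      rw [Finset.sum_eq_single_of_mem (n₁+n₂-1) (Finset.mem_Ico.mpr ⟨by omega, by omega⟩)]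
      · simp
      · intro b _ hb; rw [if_neg (by omega)]
    rw [hA, hB]; ring
  rw [h] at hc; simp at hc

lemma gg_ne {n₁ n₂ : ℕ} (h1 : 0 < n₁) (h2 : 0 < n₂) (i : ℕ) (s : ℝ) :
    gg n₁ n₂ (if i < n₁ then (1:ℝ) else 0) i s ≠ 0 := by
  by_cases hi : i < n₁
  · rw [if_pos hi]
    by_cases hs : s = 1
    · subst hs
      have he : gg n₁ n₂ 1 i 1 = -(C 4 * X^(2*i) * pp0 n₁ n₂) := by
        unfold gg
        rw [sub_self, map_zero, zero_mul, zero_add, Polynomial.C_1, one_mul]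
        ring
      rw [he, neg_ne_zero]
      exact mul_ne_zero (mul_ne_zero (by simp) (pow_ne_zero _ X_ne_zero)) (pp0_ne h2)
    · intro h
      have := congrArg (eval 0) h
      rw [eval_zero] at this
      unfold gg at this
      simp only [eval_add, eval_mul, eval_pow, eval_C, eval_X, eval_sub,
        pp1_eval_zero h1, pp0_eval_zero h1] at this
      simp at this
      exact hs (by linarith [this])
  · rw [if_neg hi]
    by_cases hs : s = 0
    · subst hs
      have he : gg n₁ n₂ 0 i 0 = C 4 * X^(2*i) * pp1 n₁ := by
        unfold gg
        rw [sub_self, map_zero, zero_mul, zero_add, zero_mul, sub_zero]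
        
      rw [he]
      exact mul_ne_zero (mul_ne_zero (by simp) (pow_ne_zero _ X_ne_zero)) (pp1_ne h1)
    · intro h
      have := congrArg (eval 0) h
      rw [eval_zero] at this
      unfold gg at this
      simp only [eval_add, eval_mul, eval_pow, eval_C, eval_X, eval_sub,
        pp1_eval_zero h1, pp0_eval_zero h1] at this
      have hz : (0:ℝ)^(2*i) = 0 := zero_pow (by omega)
      rw [hz] at this
      simp at this
      exact hs (by linarith [this])

lemma exists_good_B (n₁ n₂ : ℕ) (h1 : 0 < n₁) (h2 : 0 < n₂) (S : Finset ℝ) :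
    ∃ Q B : Matrix (Fin (n₁ + n₂)) (Fin (n₁ + n₂)) ℝ,
      Q.IsSymm ∧ Q * Q = 1 ∧
      B = Q * Matrix.diagonal (fun i : Fin (n₁ + n₂) => if (i : ℕ) < n₁ then (1:ℝ) else 0) * Q ∧
      (∀ i j, i ≠ j → B i j ≠ 0) ∧ (∀ i, B i i ∉ S) := by
  classical
  -- the finite set of polynomials to avoid
  set ps : Finset ℝ[X] :=
    insert X (insert (pp1 n₁) (insert (pp0 n₁ n₂) (insert (pp1 n₁ - pp0 n₁ n₂)
      ((Finset.univ ×ˢ S).image fun q : Fin (n₁+n₂) × ℝ =>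
        gg n₁ n₂ (if (q.1 : ℕ) < n₁ then (1:ℝ) else 0) (q.1 : ℕ) q.2)))) with hps
  have hps_ne : ∀ p ∈ ps, p ≠ 0 := by
    intro p hp
    simp only [hps, Finset.mem_insert, Finset.mem_image] at hp
    rcases hp with rfl | rfl | rfl | rfl | ⟨q, _, rfl⟩
    · exact X_ne_zero
    · exact pp1_ne h1
    · exact pp0_ne h2
    · exact ppsub_ne h1 h2
    · exact gg_ne h1 h2 _ _
  have hfin : (⋃ p ∈ (ps : Set ℝ[X]), {x : ℝ | p.eval x = 0}).Finite :=
    Set.Finite.biUnion ps.finite_toSet fun p hp =>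
      Polynomial.finite_setOf_isRoot (hps_ne p hp)
  obtain ⟨t, ht⟩ := hfin.infinite_compl.nonempty
  have hroot : ∀ p ∈ ps, p.eval t ≠ 0 := by
    intro p hp hz
    exact ht (Set.mem_biUnion hp hz)
  have ht0 : t ≠ 0 := by
    have := hroot X (by simp [hps])
    simpa using this
  set P1 : ℝ := (pp1 n₁).eval t with hP1def
  set P0 : ℝ := (pp0 n₁ n₂).eval t with hP0def
  have hP1 : P1 ≠ 0 := hroot _ (by simp [hps])
  have hP0 : P0 ≠ 0 := hroot _ (by simp [hps])
  have hq2 : P1 ≠ P0 := by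
    have := hroot (pp1 n₁ - pp0 n₁ n₂) (by simp [hps])
    rw [eval_sub] at this
    exact sub_ne_zero.mp this
  have hgs : ∀ i : Fin (n₁+n₂), ∀ s ∈ S,
      (gg n₁ n₂ (if (i : ℕ) < n₁ then (1:ℝ) else 0) (i : ℕ) s).eval t ≠ 0 := by
    intro i s hs
    refine hroot _ ?_
    simp only [hps, Finset.mem_insert, Finset.mem_image]
    exact Or.inr (Or.inr (Or.inr (Or.inr ⟨(i, s), by simp [hs], rfl⟩)))
  -- real quantities
  have hP1sum : P1 = ∑ k ∈ Finset.range n₁, t ^ (2*k) := by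
    simp [hP1def, pp1, eval_finset_sum]
  have hP0sum : P0 = ∑ k ∈ Finset.Ico n₁ (n₁+n₂), t ^ (2*k) := by
    simp [hP0def, pp0, eval_finset_sum]
  have ht2 : (0:ℝ) < t^2 := lt_of_le_of_ne (sq_nonneg t) (Ne.symm (pow_ne_zero 2 ht0))
  have htk : ∀ k : ℕ, (0:ℝ) < t ^ (2*k) := by
    intro k; rw [pow_mul]; exact pow_pos ht2 k
  have hP1pos : 0 < P1 := by
    rw [hP1sum]
    exact Finset.sum_pos (fun k _ => htk k) ⟨0, Finset.mem_range.mpr h1⟩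
  have hP0pos : 0 < P0 := by
    rw [hP0sum]
    exact Finset.sum_pos (fun k _ => htk k)
      ⟨n₁, Finset.mem_Ico.mpr ⟨le_refl _, by omega⟩⟩
  set W2 : ℝ := P1 + P0 with hW2def
  have hW2pos : 0 < W2 := by positivity
  have hW2ne : W2 ≠ 0 := ne_of_gt hW2pos
  set τ : ℝ := 2 / W2 with hτdef
  have hτ : τ ≠ 0 := div_ne_zero two_ne_zero hW2ne
  -- vectors and matrices
  set dE : Fin (n₁+n₂) → ℝ := fun i => if (i : ℕ) < n₁ then 1 else 0 with hdE
  set w : Fin (n₁+n₂) → ℝ := fun i => t ^ (i : ℕ) with hw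
  set u : Fin (n₁+n₂) → ℝ := fun i => dE i * w i with hu
  have hsplitsum : ∀ f : ℕ → ℝ, (∑ k ∈ Finset.range (n₁+n₂), f k)
      = (∑ k ∈ Finset.range n₁, f k) + ∑ k ∈ Finset.Ico n₁ (n₁+n₂), f k := by
    intro f
    rw [Finset.range_eq_Ico, Finset.range_eq_Ico]
    exact (Finset.sum_Ico_consecutive f (Nat.zero_le n₁) (Nat.le_add_right n₁ n₂)).symm
  have hww : w ⬝ᵥ w = W2 := by
    rw [dotProduct, hw]
    simp only []
    rw [Fin.sum_univ_eq_sum_range (fun k => t^k * t^k) (n₁+n₂)]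
    rw [hW2def, hP1sum, hP0sum, hsplitsum (fun k => t^k * t^k)]
    congr 1 <;> exact Finset.sum_congr rfl fun k _ => by rw [two_mul, pow_add]
  have huw : u ⬝ᵥ w = P1 := by
    rw [dotProduct, hu, hw, hdE]
    simp only []
    rw [Fin.sum_univ_eq_sum_range (fun k => (if k < n₁ then (1:ℝ) else 0) * t^k * t^k) (n₁+n₂)]
    rw [hP1sum]
    rw [show (∑ k ∈ Finset.range (n₁+n₂), (if k < n₁ then (1:ℝ) else 0) * t^k * t^k)
        = ∑ k ∈ Finset.range (n₁+n₂), (if k < n₁ then t^(2*k) else 0) from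
      Finset.sum_congr rfl fun k _ => by split <;> simp [two_mul, pow_add]]
    rw [← Finset.sum_subset (Finset.range_subset_range.mpr (Nat.le_add_right n₁ n₂))
      (fun x _ hx => if_neg (fun hc => hx (Finset.mem_range.mpr hc)))]
    exact Finset.sum_congr rfl fun k hk => if_pos (Finset.mem_range.mp hk)
  have hwu : w ⬝ᵥ u = P1 := by
    rw [← huw, dotProduct, dotProduct]
    exact Finset.sum_congr rfl fun k _ => mul_comm _ _
  set W : Matrix (Fin (n₁+n₂)) (Fin (n₁+n₂)) ℝ := vecMulVec w w with hWdef
  set E : Matrix (Fin (n₁+n₂)) (Fin (n₁+n₂)) ℝ := Matrix.diagonal dE with hEdef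
  set Q : Matrix (Fin (n₁+n₂)) (Fin (n₁+n₂)) ℝ := 1 - τ • W with hQdef
  set B : Matrix (Fin (n₁+n₂)) (Fin (n₁+n₂)) ℝ := Q * E * Q with hBdef
  have hWW : W * W = W2 • W := by rw [hWdef, my_vecMulVec_mul, hww]
  have hτW2 : τ * W2 = 2 := by rw [hτdef]; field_simp
  have hQQ : Q * Q = 1 := by
    rw [hQdef, Matrix.sub_mul, Matrix.one_mul, Matrix.mul_sub, Matrix.mul_one,
      Matrix.smul_mul, Matrix.mul_smul, hWW, smul_smul, smul_smul]
    rw [show τ * τ * W2 = τ + τ by rw [mul_assoc, hτW2]; ring, add_smul]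
    abel
  have hWE : W * E = vecMulVec w u := by
    ext i j
    rw [hWdef, hEdef, Matrix.mul_diagonal]
    simp only [vecMulVec_apply, hu]
    ring
  have hEW : E * W = vecMulVec u w := by
    ext i j
    rw [hWdef, hEdef, Matrix.diagonal_mul]
    simp only [vecMulVec_apply, hu]
    ring
  have hWEW : W * (E * W) = P1 • W := by
    rw [hEW, hWdef, my_vecMulVec_mul, hwu]
  have hB4 : B = E - τ • (E * W) - τ • (W * E) + (τ * (τ * P1)) • W := by
    rw [hBdef, hQdef]
    rw [Matrix.sub_mul, Matrix.one_mul, Matrix.smul_mul, Matrix.mul_sub, Matrix.mul_one,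
      Matrix.sub_mul, Matrix.mul_smul, Matrix.smul_mul, Matrix.mul_smul,
      Matrix.mul_assoc, hWEW, smul_smul, smul_smul]
    module
  -- entry formulas
  have hEWapp : ∀ i j, (E * W) i j = dE i * (w i * w j) := by
    intro i j
    rw [hEdef, hWdef, Matrix.diagonal_mul, vecMulVec_apply]
  have hWEapp : ∀ i j, (W * E) i j = (w i * w j) * dE j := by
    intro i j
    rw [hEdef, hWdef, Matrix.mul_diagonal, vecMulVec_apply]
  have hBapp : ∀ i j, B i j = (if i = j then dE i else 0)
      - τ * (dE i * (w i * w j)) - τ * ((w i * w j) * dE j)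
      + (τ * (τ * P1)) * (w i * w j) := by
    intro i j
    rw [hB4]
    simp only [Matrix.add_apply, Matrix.sub_apply, Matrix.smul_apply, smul_eq_mul,
      hEWapp, hWEapp, hEdef, Matrix.diagonal_apply, hWdef, vecMulVec_apply,
      Matrix.diagonal_mul, Matrix.mul_diagonal]
  have hwne : ∀ i : Fin (n₁+n₂), w i ≠ 0 := fun i => pow_ne_zero _ ht0
  -- off-diagonal entries
  have hBoff : ∀ i j, i ≠ j → B i j ≠ 0 := by
    intro i j hij
    have hfac : B i j = (τ * (w i * w j)) * (τ * P1 - (dE i + dE j)) := by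
      rw [hBapp i j, if_neg hij]
      ring
    rw [hfac]
    refine mul_ne_zero (mul_ne_zero hτ (mul_ne_zero (hwne i) (hwne j))) ?_
    intro hzero
    have h2P : 2 * P1 = (dE i + dE j) * W2 := by
      have : τ * P1 = dE i + dE j := by linarith
      calc 2 * P1 = (τ * W2) * P1 := by rw [hτW2]
        _ = (τ * P1) * W2 := by ring
        _ = (dE i + dE j) * W2 := by rw [this]
    rw [hdE] at h2P
    simp only [] at h2P
    by_cases hi : (i : ℕ) < n₁
    · by_cases hj : (j : ℕ) < n₁
      · rw [if_pos hi, if_pos hj, hW2def] at h2P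
        exact hP0 (by linarith)
      · rw [if_pos hi, if_neg hj, hW2def] at h2P
        exact hq2 (by linarith)
    · by_cases hj : (j : ℕ) < n₁
      · rw [if_neg hi, if_pos hj, hW2def] at h2P
        exact hq2 (by linarith)
      · rw [if_neg hi, if_neg hj, hW2def] at h2P
        exact hP1 (by linarith)
  -- diagonal entries avoid S
  have hBdiag : ∀ i, B i i ∉ S := by
    intro i hmem
    refine hgs i (B i i) hmem ?_
    have hwii : w i * w i = t ^ (2 * (i : ℕ)) := by
      rw [hw]; simp only []
      rw [two_mul, pow_add]
    have hBii : B i i = dE i - τ * (dE i * t ^ (2*(i:ℕ))) - τ * (t ^ (2*(i:ℕ)) * dE i)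
        + (τ * (τ * P1)) * t ^ (2*(i:ℕ)) := by
      rw [hBapp i i, if_pos rfl, hwii]
    unfold gg
    simp only [eval_add, eval_mul, eval_pow, eval_C, eval_X, eval_sub, ← hP1def, ← hP0def,
      ← hW2def]
    rw [show (if (i:ℕ) < n₁ then (1:ℝ) else 0) = dE i by rw [hdE]]
    rw [hBii, hτdef]
    field_simp
    ring
  -- symmetry of Q
  have hQsym : Q.IsSymm := by
    have key : ∀ a b, Q a b = Q b a := by
      intro a b
      rw [hQdef]
      simp only [Matrix.sub_apply, Matrix.one_apply, Matrix.smul_apply, hWdef, vecMulVec_apply,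
        smul_eq_mul]
      rw [mul_comm (w a) (w b)]
      congr 1
      by_cases h : a = b
      · subst h; rfl
      · rw [if_neg h, if_neg (Ne.symm h)]
    rw [Matrix.IsSymm]
    ext i j
    rw [Matrix.transpose_apply]
    exact key j i
  exact ⟨Q, B, hQsym, hQQ, hBdef, hBoff, hBdiag⟩

/-- Corollary cor:two distinct: for reals `λ₁ ≠ λ₂`, positive integers
`n₁, n₂` with `n = n₁ + n₂`, and finite sets `F, G` of reals with `λ₁, λ₂ ∉ F`, there is
`A ∈ S(Kₙ)` with spectrum `{λ₁^{(n₁)}, λ₂^{(n₂)}}` such that no `A(v)` has an eigenvalue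
in `F` and no diagonal entry of `A` lies in `G`. -/
theorem stmt15 (lam₁ lam₂ : ℝ) (hne : lam₁ ≠ lam₂)
    (n₁ n₂ : ℕ) (h1 : 0 < n₁) (h2 : 0 < n₂)
    (F Gs : Finset ℝ) (hF1 : lam₁ ∉ F) (hF2 : lam₂ ∉ F) :
    ∃ A : Matrix (Fin (n₁ + n₂)) (Fin (n₁ + n₂)) ℝ,
      inS (⊤ : SimpleGraph (Fin (n₁ + n₂))) A ∧
      specM A = Multiset.replicate n₁ lam₁ + Multiset.replicate n₂ lam₂ ∧
      (∀ v : Fin (n₁ + n₂), ∀ μ ∈ F, μ ∉ specM (deleteRC A v)) ∧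
      ∀ i, A i i ∉ Gs := by
  classical
  set c : ℝ := lam₁ - lam₂ with hcdef
  have hc : c ≠ 0 := sub_ne_zero.mpr hne
  set S : Finset ℝ := (F.image fun μ => (lam₁ - μ)/c) ∪ (Gs.image fun g => (g - lam₂)/c)
    with hSdef
  obtain ⟨Q, B, hQsym, hQQ, hBdef, hBoff, hBdiag⟩ := exists_good_B n₁ n₂ h1 h2 S
  set dE : Fin (n₁+n₂) → ℝ := fun i => if (i : ℕ) < n₁ then 1 else 0 with hdE
  set E : Matrix (Fin (n₁+n₂)) (Fin (n₁+n₂)) ℝ := Matrix.diagonal dE with hEdef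
  set dA : Fin (n₁+n₂) → ℝ := fun i => if (i : ℕ) < n₁ then lam₁ else lam₂ with hdA
  set D : Matrix (Fin (n₁+n₂)) (Fin (n₁+n₂)) ℝ := Matrix.diagonal dA with hDdef
  have hD : D = lam₂ • (1 : Matrix (Fin (n₁+n₂)) (Fin (n₁+n₂)) ℝ) + c • E := by
    rw [hDdef, hEdef]
    ext i j
    by_cases h : i = j
    · subst h
      simp only [Matrix.diagonal_apply_eq, Matrix.add_apply, Matrix.smul_apply,
        Matrix.one_apply_eq, smul_eq_mul, hdA, hdE, hcdef]
      split <;> ring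
    · simp [Matrix.diagonal_apply_ne _ h, Matrix.one_apply_ne h]
  set A : Matrix (Fin (n₁+n₂)) (Fin (n₁+n₂)) ℝ := Q * D * Q with hAdef
  have hA2 : A = lam₂ • (1 : Matrix (Fin (n₁+n₂)) (Fin (n₁+n₂)) ℝ) + c • B := by
    rw [hAdef, hD, Matrix.mul_add, Matrix.add_mul, Matrix.mul_smul, Matrix.mul_one,
      Matrix.smul_mul, hQQ, Matrix.mul_smul, Matrix.smul_mul, ← hBdef]
  -- characteristic polynomial of A
  have hcharD : D.charpoly = (X - C lam₁)^n₁ * (X - C lam₂)^n₂ := by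
    have hcm : charmatrix D = Matrix.diagonal (fun i => (X : ℝ[X]) - C (dA i)) := by
      ext i j
      by_cases h : i = j
      · subst h; simp [hDdef]
      · simp [Matrix.charmatrix_apply_ne _ _ _ h, Matrix.diagonal_apply_ne _ h, hDdef]
    rw [Matrix.charpoly, hcm, Matrix.det_diagonal]
    rw [Fin.prod_univ_add (fun i : Fin (n₁+n₂) => (X : ℝ[X]) - C (dA i))]
    have e1 : ∀ i : Fin n₁, dA (Fin.castAdd n₂ i) = lam₁ := by
      intro i
      rw [hdA]
      simp only [Fin.coe_castAdd]
      exact if_pos i.isLt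
    have e2 : ∀ i : Fin n₂, dA (Fin.natAdd n₁ i) = lam₂ := by
      intro i
      rw [hdA]
      simp only [Fin.coe_natAdd]
      exact if_neg (by omega)
    have e1' : (∏ i : Fin n₁, ((X:ℝ[X]) - C (dA (Fin.castAdd n₂ i)))) = (X - C lam₁)^n₁ := by
      rw [Finset.prod_congr rfl fun i _ => by rw [e1 i], Finset.prod_const, Finset.card_univ,
        Fintype.card_fin]
    have e2' : (∏ i : Fin n₂, ((X:ℝ[X]) - C (dA (Fin.natAdd n₁ i)))) = (X - C lam₂)^n₂ := by
      rw [Finset.prod_congr rfl fun i _ => by rw [e2 i], Finset.prod_const, Finset.card_univ,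
        Fintype.card_fin]
    rw [e1', e2']
  have hcharA : A.charpoly = (X - C lam₁)^n₁ * (X - C lam₂)^n₂ := by
    rw [hAdef, my_charpoly_conj _ _ hQQ, hcharD]
  have hspecA : specM A = Multiset.replicate n₁ lam₁ + Multiset.replicate n₂ lam₂ := by
    rw [specM, hcharA, Polynomial.roots_mul
      (mul_ne_zero (pow_ne_zero _ (X_sub_C_ne_zero lam₁)) (pow_ne_zero _ (X_sub_C_ne_zero lam₂))),
      Polynomial.roots_pow, Polynomial.roots_pow, roots_X_sub_C, roots_X_sub_C,
      Multiset.nsmul_singleton, Multiset.nsmul_singleton]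
  -- B is a projection
  have hEE : E * E = E := by
    have hfun : (fun i : Fin (n₁+n₂) => dE i * dE i) = dE := by
      funext i
      simp only [hdE]
      split <;> norm_num
    rw [hEdef, Matrix.diagonal_mul_diagonal, hfun]
  have hBB : B * B = B := by
    rw [hBdef]
    calc Q*E*Q*(Q*E*Q) = Q*(E*((Q*Q)*(E*Q))) := by simp only [Matrix.mul_assoc]
      _ = Q*(E*(E*Q)) := by rw [hQQ, Matrix.one_mul]
      _ = Q*((E*E)*Q) := by rw [Matrix.mul_assoc]
      _ = Q*(E*Q) := by rw [hEE]
      _ = Q*E*Q := by rw [Matrix.mul_assoc]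
  -- charpoly of the deleted matrix
  have hkey : ∀ v : Fin (n₁+n₂), (deleteRC A v).charpoly
      = (X - C lam₁)^(n₁-1) * (X - C lam₂)^(n₂-1) * (X - C (lam₁ - c * B v v)) := by
    intro v
    apply Polynomial.eq_of_infinite_eval_eq
    have hinf : ({lam₁, lam₂} : Set ℝ)ᶜ.Infinite :=
      Set.Finite.infinite_compl ((Set.finite_singleton lam₂).insert lam₁)
    refine hinf.mono ?_
    intro x hx
    simp only [Set.mem_compl_iff, Set.mem_insert_iff, Set.mem_singleton_iff, not_or] at hx
    obtain ⟨hx1, hx2⟩ := hx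
    have hx1' : x - lam₁ ≠ 0 := sub_ne_zero.mpr hx1
    have hx2' : x - lam₂ ≠ 0 := sub_ne_zero.mpr hx2
    simp only [Set.mem_setOf_eq]
    set α : ℝ := (x - lam₂)⁻¹ with hαdef
    set β : ℝ := c * ((x - lam₂)*(x - lam₁))⁻¹ with hβdef
    set Mx : Matrix (Fin (n₁+n₂)) (Fin (n₁+n₂)) ℝ := x • 1 - A with hMxdef
    set N : Matrix (Fin (n₁+n₂)) (Fin (n₁+n₂)) ℝ := α • 1 + β • B with hNdef
    have hMx2 : Mx = (x - lam₂) • (1 : Matrix (Fin (n₁+n₂)) (Fin (n₁+n₂)) ℝ) - c • B := by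
      rw [hMxdef, hA2, sub_smul]
      module
    have hscal1 : (x - lam₂) * α = 1 := by rw [hαdef]; exact mul_inv_cancel₀ hx2'
    have hscal2 : (x - lam₂) * β = c * α + c * β := by
      rw [hαdef, hβdef, hcdef]
      field_simp
      ring
    have hMN : Mx * N = 1 := by
      rw [hMx2, hNdef]
      simp only [Matrix.sub_mul, Matrix.mul_add, Matrix.smul_mul, Matrix.mul_smul,
        Matrix.one_mul, Matrix.mul_one, smul_add, smul_sub, smul_smul, hBB]
      match_scalars
      · rw [hαdef]; field_simp
      · rw [hαdef, hβdef, hcdef]; field_simp; ring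
    have hNM : N * Mx = 1 := by
      rw [hMx2, hNdef]
      simp only [Matrix.add_mul, Matrix.mul_sub, Matrix.smul_mul, Matrix.mul_smul,
        Matrix.one_mul, Matrix.mul_one, smul_add, smul_sub, smul_smul, hBB]
      match_scalars
      · rw [hαdef]; field_simp
      · rw [hαdef, hβdef, hcdef]; field_simp; ring
    have hadj : Mx.adjugate = Mx.det • N := by
      calc Mx.adjugate = Mx.adjugate * (Mx * N) := by rw [hMN, Matrix.mul_one]
        _ = (Mx.adjugate * Mx) * N := by rw [Matrix.mul_assoc]
        _ = (Mx.det • 1) * N := by rw [Matrix.adjugate_mul]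
        _ = Mx.det • N := by rw [Matrix.smul_mul, Matrix.one_mul]
    have hdel : deleteRC Mx v = x • (1 : Matrix {i : Fin (n₁+n₂) // i ≠ v}
        {i : Fin (n₁+n₂) // i ≠ v} ℝ) - deleteRC A v := by
      ext i j
      simp only [deleteRC, Matrix.submatrix_apply, hMxdef, Matrix.sub_apply, Matrix.smul_apply,
        Matrix.one_apply, smul_eq_mul, Subtype.ext_iff]
    have hdetMx : Mx.det = (x - lam₁)^n₁ * (x - lam₂)^n₂ := by
      have := my_eval_charpoly A x
      rw [hcharA] at this
      simp only [eval_mul, eval_pow, eval_sub, eval_X, eval_C] at this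
      rw [← hMxdef] at this
      exact this.symm
    have hp1 : (x - lam₁)^n₁ = (x - lam₁)^(n₁-1) * (x - lam₁) := by
      conv_lhs => rw [show n₁ = (n₁-1)+1 by omega]
      rw [pow_succ]
    have hp2 : (x - lam₂)^n₂ = (x - lam₂)^(n₂-1) * (x - lam₂) := by
      conv_lhs => rw [show n₂ = (n₂-1)+1 by omega]
      rw [pow_succ]
    calc eval x ((deleteRC A v).charpoly)
        = (x • 1 - deleteRC A v).det := my_eval_charpoly _ x
      _ = (deleteRC Mx v).det := by rw [hdel]
      _ = Mx.adjugate v v := my_det_deleteRC Mx v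
      _ = Mx.det * (α + β * B v v) := by
          rw [hadj]
          simp only [Matrix.smul_apply, hNdef, Matrix.add_apply, Matrix.one_apply_eq,
            smul_eq_mul]
          ring
      _ = eval x ((X - C lam₁)^(n₁-1) * (X - C lam₂)^(n₂-1) * (X - C (lam₁ - c * B v v))) := by
          simp only [eval_mul, eval_pow, eval_sub, eval_X, eval_C]
          rw [hdetMx, hαdef, hβdef, hp1, hp2]
          field_simp
          ring
  have hspecDel : ∀ v : Fin (n₁+n₂), specM (deleteRC A v)
      = Multiset.replicate (n₁-1) lam₁ + Multiset.replicate (n₂-1) lam₂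
        + {lam₁ - c * B v v} := by
    intro v
    have m1 : ((X:ℝ[X]) - C lam₁)^(n₁-1) ≠ 0 := pow_ne_zero _ (X_sub_C_ne_zero _)
    have m2 : ((X:ℝ[X]) - C lam₂)^(n₂-1) ≠ 0 := pow_ne_zero _ (X_sub_C_ne_zero _)
    have m3 : ((X:ℝ[X]) - C (lam₁ - c * B v v)) ≠ 0 := X_sub_C_ne_zero _
    rw [specM, hkey v, Polynomial.roots_mul (mul_ne_zero (mul_ne_zero m1 m2) m3),
      Polynomial.roots_mul (mul_ne_zero m1 m2), Polynomial.roots_pow, Polynomial.roots_pow,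
      roots_X_sub_C, roots_X_sub_C, roots_X_sub_C, Multiset.nsmul_singleton,
      Multiset.nsmul_singleton]
  -- assemble
  refine ⟨A, ⟨?_, ?_⟩, hspecA, ?_, ?_⟩
  · -- symmetry
    rw [Matrix.IsSymm, hAdef, Matrix.transpose_mul, Matrix.transpose_mul, hQsym.eq,
      hDdef, Matrix.diagonal_transpose, Matrix.mul_assoc]
  · -- adjacency
    intro i j hij
    rw [SimpleGraph.top_adj]
    refine ⟨fun _ => hij, fun _ => ?_⟩
    have hAij : A i j = c * B i j := by
      rw [hA2]
      simp [Matrix.add_apply, Matrix.smul_apply, Matrix.one_apply_ne hij]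
    rw [hAij]
    exact mul_ne_zero hc (hBoff i j hij)
  · -- F avoidance
    intro v μ hμ hmem
    rw [hspecDel v] at hmem
    simp only [Multiset.mem_add, Multiset.mem_replicate, Multiset.mem_singleton] at hmem
    rcases hmem with (⟨-, rfl⟩ | ⟨-, rfl⟩) | rfl
    · exact hF1 hμ
    · exact hF2 hμ
    · apply hBdiag v
      rw [hSdef]
      apply Finset.mem_union_left
      refine Finset.mem_image.mpr ⟨_, hμ, ?_⟩
      field_simp
      ring
  · -- diagonal avoidance
    intro i hGsmem
    have hAii : A i i = lam₂ + c * B i i := by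
      rw [hA2]
      simp [Matrix.add_apply, Matrix.smul_apply, Matrix.one_apply_eq]
    apply hBdiag i
    rw [hSdef]
    apply Finset.mem_union_right
    refine Finset.mem_image.mpr ⟨A i i, hGsmem, ?_⟩
    rw [hAii]
    field_simp
    ring
end

section
/- For n ≥ 4, the (n+1) × (n+1) symmetric matrix A = [[0, 1ᵀ], [1, O_{n,n}]] ∈ S(K_{1,n}) (whose graph is the star with center the first vertex) does not have the strong spectral property, but A has the strong spectral property with respect to the graph H obtained from the complete graph K_{n+1} on its vertex set by deleting the path of edges {2,3}, {3,4}, …, {n, n+1}. -/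
/-- The star `K_{1,n}` on `n + 1` vertices, with center the vertex `0`. -/
def starGraph (n : ℕ) : SimpleGraph (Fin (n + 1)) :=
  SimpleGraph.fromRel (fun i j => i = 0 ∨ j = 0)

/-- The matrix `A = [[0, 1ᵀ], [1, O]]` whose graph is `K_{1,n}`. -/
def starA (n : ℕ) : Matrix (Fin (n + 1)) (Fin (n + 1)) ℝ :=
  Matrix.of fun i j => if (i = 0 ∧ j ≠ 0) ∨ (i ≠ 0 ∧ j = 0) then 1 else 0

/-- The graph obtained from the complete graph `K_{n+1}` by deleting the path of edges
`{1,2}, {2,3}, …, {n-1,n}` among the leaves (in 0-indexed labels; these are the edges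
`{2,3}, …, {n,n+1}` in the paper's 1-indexed labels). -/
def Hgraph (n : ℕ) : SimpleGraph (Fin (n + 1)) :=
  SimpleGraph.fromRel (fun i j =>
    ¬ ((1 ≤ i.val ∧ i.val + 1 = j.val) ∨ (1 ≤ j.val ∧ j.val + 1 = i.val)))

/-- Restricting a sum to a set outside which the function vanishes. -/
lemma sum_restrict {α : Type*} [Fintype α] [DecidableEq α] (f : α → ℝ) (s : Finset α)
    (h : ∀ m, m ∉ s → f m = 0) : ∑ m, f m = ∑ m ∈ s, f m :=
  (Finset.sum_subset s.subset_univ (fun x _ hx => h x hx)).symm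

/-- The witness matrix showing `starA n` fails the SSP. -/
def Xmat (n : ℕ) : Matrix (Fin (n + 1)) (Fin (n + 1)) ℝ :=
  Matrix.of fun i j =>
    if (i.val = 1 ∧ j.val = 2) ∨ (i.val = 2 ∧ j.val = 1) ∨
       (i.val = 3 ∧ j.val = 4) ∨ (i.val = 4 ∧ j.val = 3) then 1
    else if (i.val = 1 ∧ j.val = 3) ∨ (i.val = 3 ∧ j.val = 1) ∨
       (i.val = 2 ∧ j.val = 4) ∨ (i.val = 4 ∧ j.val = 2) then -1 else 0

set_option maxHeartbeats 2000000 in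
lemma Xmat_symm (n : ℕ) : (Xmat n).IsSymm := by
  ext i j
  simp only [Matrix.transpose_apply, Xmat, Matrix.of_apply]
  split_ifs
  all_goals try rfl
  all_goals exfalso
  all_goals omega

lemma Xmat_zero_row (n : ℕ) (k : Fin (n + 1)) : Xmat n 0 k = 0 := by
  have h0 : ((0 : Fin (n + 1)) : ℕ) = 0 := rfl
  simp only [Xmat, Matrix.of_apply]
  split_ifs with g1 g2
  · exfalso; omega
  · exfalso; omega
  · rfl

lemma Xmat_zero_col (n : ℕ) (k : Fin (n + 1)) : Xmat n k 0 = 0 := by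
  have h0 : ((0 : Fin (n + 1)) : ℕ) = 0 := rfl
  simp only [Xmat, Matrix.of_apply]
  split_ifs with g1 g2
  · exfalso; omega
  · exfalso; omega
  · rfl

set_option maxHeartbeats 1000000 in
lemma Xmat_colsum (n : ℕ) (hn : 4 ≤ n) (j : Fin (n + 1)) : ∑ k, Xmat n k j = 0 := by
  have h1 : (1 : ℕ) < n + 1 := by omega
  have h2 : (2 : ℕ) < n + 1 := by omega
  have h3 : (3 : ℕ) < n + 1 := by omega
  have h4 : (4 : ℕ) < n + 1 := by omega
  have hr : ∑ k, Xmat n k j =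
      ∑ k ∈ ({⟨1, h1⟩, ⟨2, h2⟩, ⟨3, h3⟩, ⟨4, h4⟩} : Finset (Fin (n + 1))), Xmat n k j := by
    apply sum_restrict
    intro m hm
    simp only [Finset.mem_insert, Finset.mem_singleton, Fin.ext_iff] at hm
    push_neg at hm
    obtain ⟨hm1, hm2, hm3, hm4⟩ := hm
    simp only [Xmat, Matrix.of_apply]
    split_ifs with g1 g2
    · exfalso; omega
    · exfalso; omega
    · rfl
  rw [hr]
  rw [Finset.sum_insert
        (by simp only [Finset.mem_insert, Finset.mem_singleton, Fin.mk.injEq]; omega),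
      Finset.sum_insert
        (by simp only [Finset.mem_insert, Finset.mem_singleton, Fin.mk.injEq]; omega),
      Finset.sum_insert (by simp only [Finset.mem_singleton, Fin.mk.injEq]; omega),
      Finset.sum_singleton]
  simp only [Xmat, Matrix.of_apply]
  by_cases e1 : (j : ℕ) = 1 <;> by_cases e2 : (j : ℕ) = 2 <;>
    by_cases e3 : (j : ℕ) = 3 <;> by_cases e4 : (j : ℕ) = 4 <;>
    simp [e1, e2, e3, e4]

/-- for `n ≥ 4`, the matrix `A = [[0, 1ᵀ], [1, O]] ∈ S(K_{1,n})` does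
not have the SSP, but it has the SSP with respect to the graph `H` obtained from
`K_{n+1}` by deleting the path on the non-central vertices. -/
theorem stmt19 (n : ℕ) (hn : 4 ≤ n) :
    inS (starGraph n) (starA n) ∧
    ¬ HasSSP (starA n) ∧
    HasSSPwrt (Hgraph n) (starA n) := by
  refine ⟨⟨?_, ?_⟩, ?_, ?_⟩
  · -- symmetry of starA
    ext i j
    simp only [Matrix.transpose_apply, starA, Matrix.of_apply]
    have : ((j = 0 ∧ i ≠ 0) ∨ (j ≠ 0 ∧ i = 0)) ↔ ((i = 0 ∧ j ≠ 0) ∨ (i ≠ 0 ∧ j = 0)) := by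
      tauto
    rw [if_congr this rfl rfl]
  · -- pattern of starA
    intro i j hij
    simp only [starA, Matrix.of_apply, starGraph, SimpleGraph.fromRel_adj]
    split_ifs with h
    · simp only [ne_eq, one_ne_zero, not_false_eq_true, true_iff]
      exact ⟨hij, by tauto⟩
    · simp only [ne_eq, not_true_eq_false, false_iff]
      push_neg at h
      rintro ⟨hne, hor⟩
      rcases eq_or_ne i 0 with hi | hi
      · have hj := h.1 hi
        exact hne (hi.trans hj.symm)
      · have hj := h.2 hi
        rcases hor with (h0 | h0) | (h0 | h0)
        · exact hi h0
        · exact hj h0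
        · exact hj h0
        · exact hi h0
  · -- ¬ HasSSP
    intro hssp
    have hrow : ∀ i, ∑ k, Xmat n i k = 0 := by
      intro i
      have hc := Xmat_colsum n hn i
      rw [← hc]
      exact Finset.sum_congr rfl (fun k _ => (Xmat_symm n).apply k i)
    have hL : starA n * Xmat n = 0 := by
      ext i j
      rw [Matrix.mul_apply, Matrix.zero_apply]
      rcases eq_or_ne i 0 with rfl | hi
      · have e : ∀ k : Fin (n + 1), starA n 0 k * Xmat n k j = Xmat n k j := by
          intro k
          rcases eq_or_ne k 0 with rfl | hk
          · rw [Xmat_zero_row]; ring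
          · simp [starA, hk]
        rw [Finset.sum_congr rfl (fun k _ => e k)]
        exact Xmat_colsum n hn j
      · have e : ∀ k : Fin (n + 1), starA n i k * Xmat n k j =
            if k = 0 then Xmat n k j else 0 := by
          intro k
          rcases eq_or_ne k 0 with rfl | hk
          · simp [starA, hi]
          · simp [starA, hi, hk]
        rw [Finset.sum_congr rfl (fun k _ => e k)]
        rw [Finset.sum_ite_eq' Finset.univ (0 : Fin (n + 1)) (fun k => Xmat n k j)]
        simp [Xmat_zero_row]
    have hR : Xmat n * starA n = 0 := by
      ext i j
      rw [Matrix.mul_apply, Matrix.zero_apply]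
      rcases eq_or_ne j 0 with rfl | hj
      · have e : ∀ k : Fin (n + 1), Xmat n i k * starA n k 0 = Xmat n i k := by
          intro k
          rcases eq_or_ne k 0 with rfl | hk
          · rw [Xmat_zero_col]; ring
          · simp [starA, hk]
        rw [Finset.sum_congr rfl (fun k _ => e k)]
        exact hrow i
      · have e : ∀ k : Fin (n + 1), Xmat n i k * starA n k j =
            if k = 0 then Xmat n i k else 0 := by
          intro k
          rcases eq_or_ne k 0 with rfl | hk
          · simp [starA, hj]
          · simp [starA, hj, hk]
        rw [Finset.sum_congr rfl (fun k _ => e k)]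
        rw [Finset.sum_ite_eq' Finset.univ (0 : Fin (n + 1)) (fun k => Xmat n i k)]
        simp [Xmat_zero_col]
    have hAX : starA n * Xmat n = Xmat n * starA n := by rw [hL, hR]
    have hHad : ∀ i j, starA n i j * Xmat n i j = 0 := by
      intro i j
      simp only [starA, Xmat, Matrix.of_apply, Fin.ext_iff, Fin.val_zero, ne_eq]
      split_ifs
      all_goals try norm_num
      all_goals exfalso
      all_goals omega
    have hDiag : ∀ i, Xmat n i i = 0 := by
      intro i
      simp only [Xmat, Matrix.of_apply]
      split_ifs with g1 g2
      · exfalso; omega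
      · exfalso; omega
      · rfl
    have h0 := hssp (Xmat n) (Xmat_symm n) hHad hDiag hAX
    have h12 : Xmat n ⟨1, by omega⟩ ⟨2, by omega⟩ = 1 := by
      norm_num [Xmat]
    rw [h0] at h12
    simp at h12
  · -- HasSSPwrt
    intro X hsym hH hdiag hcom
    have hz : ∀ i j : Fin (n + 1),
        ¬ ((1 ≤ i.val ∧ i.val + 1 = j.val) ∨ (1 ≤ j.val ∧ j.val + 1 = i.val)) → X i j = 0 := by
      intro i j h
      rcases eq_or_ne i j with rfl | hij
      · exact hdiag i
      · apply hH
        rw [Hgraph, SimpleGraph.fromRel_adj]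
        exact ⟨hij, Or.inl h⟩
    have hX0 : ∀ k : Fin (n + 1), X 0 k = 0 := by
      intro k
      apply hz
      have h0 : ((0 : Fin (n + 1)) : ℕ) = 0 := rfl
      omega
    have hcol : ∀ j : Fin (n + 1), ∑ k, X k j = 0 := by
      intro j
      have h0 := congrFun (congrFun hcom 0) j
      rw [Matrix.mul_apply, Matrix.mul_apply] at h0
      have e1 : ∀ k : Fin (n + 1), starA n 0 k * X k j = X k j := by
        intro k
        rcases eq_or_ne k 0 with rfl | hk
        · rw [hX0]; ring
        · simp [starA, hk]
      have e2 : ∀ k : Fin (n + 1), X 0 k * starA n k j = 0 := by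
        intro k; rw [hX0]; ring
      rw [Finset.sum_congr rfl (fun k _ => e1 k), Finset.sum_congr rfl (fun k _ => e2 k)] at h0
      simpa using h0
    have key : ∀ k : ℕ, ∀ _ : k + 1 ≤ n, X ⟨k, by omega⟩ ⟨k + 1, by omega⟩ = 0 := by
      intro k
      induction k with
      | zero =>
        intro hk
        apply hz
        show ¬((1 ≤ 0 ∧ 0 + 1 = 0 + 1) ∨ (1 ≤ 0 + 1 ∧ 0 + 1 + 1 = 0))
        omega
      | succ k ih =>
        intro hk
        have ihv := ih (by omega)
        have hk0 : k < n + 1 := by omega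
        have hk1 : k + 1 < n + 1 := by omega
        have hk2 : k + 2 < n + 1 := by omega
        have hsum := hcol ⟨k + 1, hk1⟩
        have hr : ∑ m, X m ⟨k + 1, hk1⟩ =
            ∑ m ∈ ({⟨k, hk0⟩, ⟨k + 2, hk2⟩} : Finset (Fin (n + 1))),
              X m ⟨k + 1, hk1⟩ := by
          apply sum_restrict
          intro m hm
          simp only [Finset.mem_insert, Finset.mem_singleton, Fin.ext_iff] at hm
          push_neg at hm
          obtain ⟨hm1, hm2⟩ := hm
          have e1 : ((⟨k, hk0⟩ : Fin (n + 1)) : ℕ) = k := rfl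
          have e2 : ((⟨k + 2, hk2⟩ : Fin (n + 1)) : ℕ) = k + 2 := rfl
          have e3 : ((⟨k + 1, hk1⟩ : Fin (n + 1)) : ℕ) = k + 1 := rfl
          apply hz
          omega
        rw [hr, Finset.sum_pair (by simp only [ne_eq, Fin.mk.injEq]; omega)] at hsum
        have hb0 : X ⟨k + 2, hk2⟩ ⟨k + 1, hk1⟩ = 0 := by
          have ha0 : X ⟨k, hk0⟩ ⟨k + 1, hk1⟩ = 0 := ihv
          linarith [hsum]
        show X ⟨k + 1, hk1⟩ ⟨k + 2, hk2⟩ = 0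
        calc X ⟨k + 1, hk1⟩ ⟨k + 2, hk2⟩
            = X ⟨k + 2, hk2⟩ ⟨k + 1, hk1⟩ := (hsym.apply _ _).symm
          _ = 0 := hb0
    ext i j
    rw [Matrix.zero_apply]
    obtain ⟨iv, hiv⟩ := i
    obtain ⟨jv, hjv⟩ := j
    by_cases hc : (1 ≤ iv ∧ iv + 1 = jv) ∨ (1 ≤ jv ∧ jv + 1 = iv)
    · rcases hc with ⟨hc1, hc2⟩ | ⟨hc1, hc2⟩
      · subst hc2
        exact key iv (by omega)
      · subst hc2
        calc X ⟨jv + 1, hiv⟩ ⟨jv, hjv⟩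
            = X ⟨jv, hjv⟩ ⟨jv + 1, hiv⟩ := (hsym.apply _ _).symm
          _ = 0 := key jv (by omega)
    · exact hz ⟨iv, hiv⟩ ⟨jv, hjv⟩ hc
end
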